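/- arXiv:2112.05431 — 5 statements merged into one kernel-verified Lean document; each statement's English description precedes it below -/
import Mathlib

section
/- There is an absolute constant C > 0 such that for every α ∈ (0,1), every integer n ≥ 1, every integer d ≥ 1 and every r ∈ ℤ: |Σ_{0 ≤ l ≤ n, l ≡ r (mod d)} C(n,l)·α^l·(1−α)^{n−l} − 1/d| ≤ C/(√(α(1−α))·√n). -/
open Finset
open Real

lemma geom_tail_le {x : ℝ} (hx : 0 < x) (N : ℕ) :
    ∑ m ∈ Ico 1 N, Real.exp (-x) ^ m ≤ 1 / x := by
  set r := Real.exp (-x) with hr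
  have hr0 : 0 < r := Real.exp_pos _
  have hr1 : r < 1 := by
    rw [hr, Real.exp_lt_one_iff]; linarith
  have hgeom : ∀ K : ℕ, ∑ k ∈ range K, r ^ k ≤ 1 / (1 - r) := by
    intro K
    rw [geom_sum_eq hr1.ne K]
    have heq : (r ^ K - 1) / (r - 1) = (1 - r ^ K) / (1 - r) := by
      rw [← neg_div_neg_eq]; ring_nf
    rw [heq, div_le_div_iff₀ (by linarith) (by linarith)]
    have : 0 ≤ r ^ K := by positivity
    nlinarith
  have h1 : ∑ m ∈ Ico 1 N, r ^ m = r * ∑ k ∈ range (N - 1), r ^ k := by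
    rw [Finset.sum_Ico_eq_sum_range, Finset.mul_sum]
    exact Finset.sum_congr rfl fun k _ => by rw [pow_add, pow_one]
  have h2 : ∑ m ∈ Ico 1 N, r ^ m ≤ r / (1 - r) := by
    rw [h1]
    calc r * ∑ k ∈ range (N - 1), r ^ k ≤ r * (1 / (1 - r)) := by
          exact mul_le_mul_of_nonneg_left (hgeom _) hr0.le
      _ = r / (1 - r) := by ring
  refine h2.trans ?_
  rw [div_le_div_iff₀ (by linarith) hx]
  have hexp := Real.add_one_le_exp x
  have hre : r * Real.exp x = 1 := by rw [hr, ← Real.exp_add]; simp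
  nlinarith [mul_le_mul_of_nonneg_left hexp hr0.le]

lemma gauss_sum_le {a : ℝ} (ha : 0 < a) (N : ℕ) :
    ∑ m ∈ Ico 1 N, Real.exp (-(a * (m : ℝ) ^ 2)) ≤ 4 / Real.sqrt a := by
  have hs0 : 0 < Real.sqrt a := Real.sqrt_pos.2 ha
  rcases le_or_gt 1 a with h1 | h1
  · have step : ∑ m ∈ Ico 1 N, Real.exp (-(a * (m : ℝ) ^ 2)) ≤ ∑ m ∈ Ico 1 N, Real.exp (-a) ^ m := by
      refine Finset.sum_le_sum fun m hm => ?_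
      have hm1 : 1 ≤ m := (Finset.mem_Ico.1 hm).1
      rw [← Real.exp_nat_mul]
      apply Real.exp_le_exp.2
      have h1m : (1 : ℝ) ≤ (m : ℝ) := by exact_mod_cast hm1
      nlinarith [mul_nonneg (mul_nonneg ha.le (by linarith : (0:ℝ) ≤ (m:ℝ)))
        (sub_nonneg.2 h1m)]
    refine step.trans ((geom_tail_le ha N).trans ?_)
    rw [div_le_div_iff₀ ha hs0]
    have hs1 : 1 ≤ Real.sqrt a := by
      calc (1:ℝ) = Real.sqrt 1 := by simp
        _ ≤ Real.sqrt a := Real.sqrt_le_sqrt h1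
    nlinarith [Real.sq_sqrt ha.le]
  · set s := Real.sqrt a with hsdef
    have hs1 : s < 1 := by
      rw [hsdef]
      nlinarith [Real.sq_sqrt ha.le, Real.sqrt_nonneg a]
    have hsa : s * s = a := Real.mul_self_sqrt ha.le
    set M : ℕ := ⌈1 / s⌉₊ with hM
    have hM1 : 1 ≤ M := by
      apply Nat.one_le_ceil_iff.2
      positivity
    have hMge : 1 / s ≤ (M : ℝ) := by rw [hM]; exact Nat.le_ceil _
    have h1s : 1 ≤ 1 / s := by
      rw [le_div_iff₀ hs0]; linarith
    have hMle : (M : ℝ) ≤ 2 / s := by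
      have h2 := Nat.ceil_lt_add_one (a := 1 / s) (by positivity)
      rw [← hM] at h2
      have h2s : 2 / s = 1 / s + 1 / s := by ring
      linarith
    have hnn : ∀ m : ℕ, 0 ≤ Real.exp (-(a * (m : ℝ) ^ 2)) := fun m => (Real.exp_pos _).le
    have split : ∑ m ∈ Ico 1 N, Real.exp (-(a * (m : ℝ) ^ 2)) ≤
        (∑ m ∈ Ico 1 (M + 1), Real.exp (-(a * (m : ℝ) ^ 2))) +
        ∑ m ∈ Ico (M + 1) N, Real.exp (-(a * (m : ℝ) ^ 2)) := by
      rcases le_or_gt N (M + 1) with h | h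
      · have hA : ∑ m ∈ Ico 1 N, Real.exp (-(a * (m : ℝ) ^ 2)) ≤
            ∑ m ∈ Ico 1 (M + 1), Real.exp (-(a * (m : ℝ) ^ 2)) :=
          Finset.sum_le_sum_of_subset_of_nonneg
            (Finset.Ico_subset_Ico le_rfl h) (fun i _ _ => hnn i)
        have hB : 0 ≤ ∑ m ∈ Ico (M + 1) N, Real.exp (-(a * (m : ℝ) ^ 2)) :=
          Finset.sum_nonneg fun i _ => hnn i
        linarith
      · rw [Finset.sum_Ico_consecutive _ (by omega) h.le]
    have first : ∑ m ∈ Ico 1 (M + 1), Real.exp (-(a * (m : ℝ) ^ 2)) ≤ 2 / s := by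
      calc ∑ m ∈ Ico 1 (M + 1), Real.exp (-(a * (m : ℝ) ^ 2))
          ≤ ∑ m ∈ Ico 1 (M + 1), (1 : ℝ) := by
            refine Finset.sum_le_sum fun m _ => ?_
            rw [Real.exp_le_one_iff]
            have : 0 ≤ a * (m : ℝ) ^ 2 := by positivity
            linarith
        _ = (M : ℝ) := by simp [Nat.card_Ico]
        _ ≤ 2 / s := hMle
    have hx : 0 < a * M := by positivity
    have second : ∑ m ∈ Ico (M + 1) N, Real.exp (-(a * (m : ℝ) ^ 2)) ≤ 1 / s := by
      have stepB : ∑ m ∈ Ico (M + 1) N, Real.exp (-(a * (m : ℝ) ^ 2)) ≤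
          ∑ m ∈ Ico (M + 1) N, Real.exp (-(a * M)) ^ m := by
        refine Finset.sum_le_sum fun m hm => ?_
        have hmM : M + 1 ≤ m := (Finset.mem_Ico.1 hm).1
        rw [← Real.exp_nat_mul]
        apply Real.exp_le_exp.2
        have hMm : (M : ℝ) ≤ (m : ℝ) := by exact_mod_cast (by omega : M ≤ m)
        have hm0 : (0 : ℝ) ≤ (m : ℝ) := by positivity
        nlinarith [mul_nonneg (mul_nonneg ha.le hm0) (sub_nonneg.2 hMm)]
      have sub : ∑ m ∈ Ico (M + 1) N, Real.exp (-(a * M)) ^ m ≤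
          ∑ m ∈ Ico 1 N, Real.exp (-(a * M)) ^ m :=
        Finset.sum_le_sum_of_subset_of_nonneg
          (Finset.Ico_subset_Ico (by omega) le_rfl) (fun i _ _ => by positivity)
      have tail := geom_tail_le hx N
      have haM : s ≤ a * M := by
        have hstep : a * (1 / s) ≤ a * M := mul_le_mul_of_nonneg_left hMge ha.le
        have heq : a * (1 / s) = s := by
          field_simp
          linarith [hsa]
        linarith
      have hfin : 1 / (a * M) ≤ 1 / s := one_div_le_one_div_of_le hs0 haM
      linarith
    calc ∑ m ∈ Ico 1 N, Real.exp (-(a * (m : ℝ) ^ 2)) ≤ 2 / s + 1 / s := by linarith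
      _ ≤ 4 / s := by rw [← add_div, div_le_div_iff₀ hs0 hs0]; nlinarith

lemma abs_binom_char_le {α : ℝ} (h0 : 0 < α) (h1 : α < 1) (θ : ℝ) :
    ‖(α : ℂ) * Complex.exp ((θ : ℂ) * Complex.I) + (1 - (α : ℂ))‖
      ≤ Real.exp (-(α * (1 - α) * (1 - Real.cos θ))) := by
  set z := (α : ℂ) * Complex.exp ((θ : ℂ) * Complex.I) + (1 - (α : ℂ)) with hz
  set u := 2 * (α * (1 - α)) * (1 - Real.cos θ) with hu
  have hre : z.re = α * Real.cos θ + (1 - α) := by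
    simp [hz, Complex.add_re, Complex.mul_re, Complex.exp_ofReal_mul_I_re,
      Complex.exp_ofReal_mul_I_im]
  have him : z.im = α * Real.sin θ := by
    simp [hz, Complex.add_im, Complex.mul_im, Complex.exp_ofReal_mul_I_re,
      Complex.exp_ofReal_mul_I_im]
  have hsq : ‖z‖ ^ 2 = 1 - u := by
    rw [Complex.sq_norm, Complex.normSq_apply, hre, him, hu]
    linear_combination (α ^ 2) * (Real.sin_sq_add_cos_sq θ)
  have hcos1 : Real.cos θ ≤ 1 := Real.cos_le_one θ
  have hcos2 : -1 ≤ Real.cos θ := Real.neg_one_le_cos θ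
  have hc0 : (0:ℝ) ≤ 1 - Real.cos θ := by linarith
  have ha0 : (0:ℝ) ≤ α * (1 - α) := by nlinarith
  have h14 : α * (1 - α) ≤ 1 / 4 := by nlinarith [sq_nonneg (1 - 2 * α)]
  have hu0 : 0 ≤ u := by rw [hu]; nlinarith [mul_nonneg ha0 hc0]
  have hu1 : u ≤ 1 := by
    rw [hu]
    nlinarith [mul_nonneg (by linarith : (0:ℝ) ≤ 1 / 4 - α * (1 - α)) hc0]
  have hexp : 1 - u ≤ Real.exp (-u) := by
    have := Real.add_one_le_exp (-u); linarith
  have habs : ‖z‖ ≤ Real.exp (-(u / 2)) := by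
    have h2 : Real.exp (-(u / 2)) ^ 2 = Real.exp (-u) := by
      rw [← Real.exp_nat_mul]; congr 1; push_cast; ring
    nlinarith [norm_nonneg z, Real.exp_pos (-(u / 2)), hsq]
  calc ‖z‖ ≤ Real.exp (-(u / 2)) := habs
    _ = Real.exp (-(α * (1 - α) * (1 - Real.cos θ))) := by rw [hu]; ring_nf

lemma one_sub_cos_ge {d j : ℕ} (hd : 0 < d) (hj1 : 1 ≤ j) (hjd : j < d) :
    8 * (min (j : ℝ) ((d : ℝ) - j)) ^ 2 / (d : ℝ) ^ 2 ≤ 1 - Real.cos (2 * π * j / d) := by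
  have hd0 : (0 : ℝ) < d := by exact_mod_cast hd
  have hj0 : (0 : ℝ) < j := by exact_mod_cast hj1
  have hjr : (j : ℝ) ≤ d := by exact_mod_cast hjd.le
  set x := π * j / d with hx
  have hcos : 1 - Real.cos (2 * π * j / d) = 2 * Real.sin x ^ 2 := by
    have := Real.sin_sq_eq_half_sub x
    have harg : 2 * x = 2 * π * j / d := by rw [hx]; ring
    rw [← harg]; linarith
  have hπ := Real.pi_pos
  set m := min (j : ℝ) ((d : ℝ) - j) with hm
  have hm0 : 0 ≤ m := le_min hj0.le (by linarith)
  have key : 2 * m / d ≤ Real.sin x := by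
    rcases le_total (j : ℝ) ((d : ℝ) - j) with hle | hle
    · have hmin : m = (j : ℝ) := min_eq_left hle
      have hx2 : x ≤ π / 2 := by
        rw [hx, div_le_div_iff₀ hd0 (by norm_num : (0:ℝ) < 2)]
        nlinarith
      have hx0 : 0 ≤ x := by positivity
      have := Real.mul_le_sin hx0 hx2
      rw [hmin]
      calc 2 * (j : ℝ) / d = 2 / π * x := by rw [hx]; field_simp
        _ ≤ Real.sin x := this
    · have hmin : m = (d : ℝ) - j := min_eq_right hle
      have hsin : Real.sin x = Real.sin (π - x) := (Real.sin_pi_sub x).symm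
      have hx2 : π - x ≤ π / 2 := by
        have hhalf : π / 2 ≤ x := by
          rw [hx, le_div_iff₀ hd0]
          nlinarith
        linarith
      have hx0 : 0 ≤ π - x := by
        have : x ≤ π := by
          rw [hx, div_le_iff₀ hd0]
          nlinarith
        linarith
      have := Real.mul_le_sin hx0 hx2
      rw [hmin, hsin]
      calc 2 * ((d : ℝ) - j) / d = 2 / π * (π - x) := by rw [hx]; field_simp
        _ ≤ Real.sin (π - x) := this
  rw [hcos]
  have hsq : (2 * m / d) ^ 2 ≤ Real.sin x ^ 2 := by
    have h20 : 0 ≤ 2 * m / d := by positivity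
    nlinarith
  calc 8 * m ^ 2 / (d : ℝ) ^ 2 = 2 * (2 * m / d) ^ 2 := by field_simp; ring
    _ ≤ 2 * Real.sin x ^ 2 := by linarith

lemma char_sum_eq {d : ℕ} (hd : d ≠ 0) (m : ℕ) :
    (∑ j ∈ range d, (Complex.exp (2 * (Real.pi : ℂ) * Complex.I / d) ^ m) ^ j)
      = if d ∣ m then (d : ℂ) else 0 := by
  have hprim := Complex.isPrimitiveRoot_exp d hd
  by_cases h : d ∣ m
  · rw [if_pos h]
    have h1 : Complex.exp (2 * (Real.pi : ℂ) * Complex.I / d) ^ m = 1 :=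
      (hprim.pow_eq_one_iff_dvd m).2 h
    simp [h1]
  · rw [if_neg h]
    have hζ : Complex.exp (2 * (Real.pi : ℂ) * Complex.I / d) ^ m ≠ 1 :=
      fun he => h ((hprim.pow_eq_one_iff_dvd m).1 he)
    rw [geom_sum_eq hζ]
    have hpow : (Complex.exp (2 * (Real.pi : ℂ) * Complex.I / d) ^ m) ^ d = 1 := by
      rw [pow_right_comm, hprim.pow_eq_one, one_pow]
    rw [hpow]
    simp

lemma key_identity (α : ℝ) (n d s : ℕ) (hd : d ≠ 0) :
    ((∑ l ∈ range (n + 1),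
        if d ∣ (l + s) then (n.choose l : ℝ) * α ^ l * (1 - α) ^ (n - l) else 0 : ℝ) : ℂ)
      = (1 / d) * ∑ j ∈ range d,
          (Complex.exp (2 * (Real.pi : ℂ) * Complex.I / d) ^ j) ^ s *
            ((α : ℂ) * Complex.exp (2 * (Real.pi : ℂ) * Complex.I / d) ^ j + (1 - (α : ℂ))) ^ n := by
  set ω := Complex.exp (2 * (Real.pi : ℂ) * Complex.I / d) with hω
  have hdc : ((d : ℂ)) ≠ 0 := by exact_mod_cast hd
  have rhs_eq : ∀ j : ℕ, (ω ^ j) ^ s * ((α : ℂ) * ω ^ j + (1 - (α : ℂ))) ^ n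
      = ∑ l ∈ range (n + 1),
          ((n.choose l : ℂ) * (α : ℂ) ^ l * (1 - (α : ℂ)) ^ (n - l)) * (ω ^ (l + s)) ^ j := by
    intro j
    rw [add_pow, Finset.mul_sum]
    refine Finset.sum_congr rfl fun l _ => ?_
    rw [mul_pow, show (ω ^ (l + s)) ^ j = (ω ^ j) ^ (l + s) from pow_right_comm ω (l + s) j,
      pow_add]
    ring
  calc ((∑ l ∈ range (n + 1),
        if d ∣ (l + s) then (n.choose l : ℝ) * α ^ l * (1 - α) ^ (n - l) else 0 : ℝ) : ℂ)
      = ∑ l ∈ range (n + 1),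
          if d ∣ (l + s) then (n.choose l : ℂ) * (α : ℂ) ^ l * (1 - (α : ℂ)) ^ (n - l) else 0 := by
        push_cast
        refine Finset.sum_congr rfl fun l _ => ?_
        split <;> push_cast <;> ring
    _ = ∑ l ∈ range (n + 1),
          ((n.choose l : ℂ) * (α : ℂ) ^ l * (1 - (α : ℂ)) ^ (n - l)) *
            ((1 / d) * ∑ j ∈ range d, (ω ^ (l + s)) ^ j) := by
        refine Finset.sum_congr rfl fun l _ => ?_
        rw [char_sum_eq hd (l + s)]
        split
        · rw [one_div, inv_mul_cancel₀ hdc, mul_one]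
        · simp
    _ = (1 / d) * ∑ j ∈ range d,
          (ω ^ j) ^ s * ((α : ℂ) * ω ^ j + (1 - (α : ℂ))) ^ n := by
        have step : (1 / (d : ℂ)) * ∑ j ∈ range d,
            (ω ^ j) ^ s * ((α : ℂ) * ω ^ j + (1 - (α : ℂ))) ^ n
            = ∑ l ∈ range (n + 1),
                ((n.choose l : ℂ) * (α : ℂ) ^ l * (1 - (α : ℂ)) ^ (n - l)) *
                  ((1 / d) * ∑ j ∈ range d, (ω ^ (l + s)) ^ j) := by
          calc (1 / (d : ℂ)) * ∑ j ∈ range d,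
              (ω ^ j) ^ s * ((α : ℂ) * ω ^ j + (1 - (α : ℂ))) ^ n
              = (1 / (d : ℂ)) * ∑ j ∈ range d, ∑ l ∈ range (n + 1),
                  ((n.choose l : ℂ) * (α : ℂ) ^ l * (1 - (α : ℂ)) ^ (n - l)) *
                    (ω ^ (l + s)) ^ j := by
                rw [Finset.sum_congr rfl fun j _ => rhs_eq j]
            _ = (1 / (d : ℂ)) * ∑ l ∈ range (n + 1), ∑ j ∈ range d,
                  ((n.choose l : ℂ) * (α : ℂ) ^ l * (1 - (α : ℂ)) ^ (n - l)) *
                    (ω ^ (l + s)) ^ j := by rw [Finset.sum_comm]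
            _ = ∑ l ∈ range (n + 1),
                ((n.choose l : ℂ) * (α : ℂ) ^ l * (1 - (α : ℂ)) ^ (n - l)) *
                  ((1 / d) * ∑ j ∈ range d, (ω ^ (l + s)) ^ j) := by
                rw [Finset.mul_sum]
                refine Finset.sum_congr rfl fun l _ => ?_
                rw [← Finset.mul_sum]
                ring
        rw [step]

/-- **Binomial probabilities along a residue class.**  There is an absolute constant
`C > 0` such that for every `α ∈ (0,1)`, integers `n, d ≥ 1` and `r ∈ ℤ`, the sum of
the binomial probabilities `C(n,l)α^l(1−α)^{n−l}` over `0 ≤ l ≤ n` with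
`l ≡ r (mod d)` differs from `1/d` by at most `C/(√(α(1−α))·√n)`. -/
theorem binomial_probabilities_residue_class :
    ∃ C : ℝ, 0 < C ∧
      ∀ (α : ℝ), 0 < α → α < 1 →
      ∀ (n d : ℕ), 1 ≤ n → 1 ≤ d →
      ∀ (r : ℤ),
        |(∑ l ∈ (Finset.range (n + 1)).filter
              (fun l : ℕ => Int.ModEq (d : ℤ) (l : ℤ) r),
            (n.choose l : ℝ) * α ^ l * (1 - α) ^ (n - l)) - 1 / (d : ℝ)|
          ≤ C / (Real.sqrt (α * (1 - α)) * Real.sqrt n) := by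
  refine ⟨3, by norm_num, ?_⟩
  intro α h0 h1 n d hn hd r
  have hd0 : 0 < d := hd
  have hdne : d ≠ 0 := by omega
  have hdR : (0 : ℝ) < d := by exact_mod_cast hd0
  have hrd : (0 : ℤ) < (d : ℤ) := by exact_mod_cast hd0
  -- residue setup
  set r' : ℕ := (r % d).toNat with hr'
  set s : ℕ := d - r' with hs
  have hr'cast : ((r' : ℕ) : ℤ) = r % d :=
    Int.toNat_of_nonneg (Int.emod_nonneg r (by exact_mod_cast hdne))
  have hr'le : r' ≤ d := by
    have h2 : (r' : ℤ) < d := by rw [hr'cast]; exact Int.emod_lt_of_pos r hrd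
    exact_mod_cast h2.le
  have hscast : ((s : ℕ) : ℤ) = (d : ℤ) - (r % d) := by
    rw [hs, Nat.cast_sub hr'le, hr'cast]
  have hdvd_rs : (d : ℤ) ∣ (r + s) := by
    refine ⟨1 + r / d, ?_⟩
    have hemod : r % d = r - d * (r / d) := Int.emod_def r d
    rw [hscast, hemod]; ring
  have hcond : ∀ l : ℕ, Int.ModEq (d : ℤ) (l : ℤ) r ↔ d ∣ (l + s) := by
    intro l
    rw [Int.modEq_iff_dvd]
    constructor
    · intro h
      have h2 : (d : ℤ) ∣ ((r + s) - (r - l)) := dvd_sub hdvd_rs h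
      have h3 : ((r + (s : ℤ)) - (r - l)) = ((l + s : ℕ) : ℤ) := by push_cast; ring
      rw [h3] at h2
      exact_mod_cast h2
    · intro h
      have h2 : (d : ℤ) ∣ ((l + s : ℕ) : ℤ) := by exact_mod_cast h
      have h3 : ((r + (s : ℤ)) - ((l + s : ℕ) : ℤ)) = r - l := by push_cast; ring
      calc (d : ℤ) ∣ ((r + s) - ((l + s : ℕ) : ℤ)) := dvd_sub hdvd_rs h2
        _ = r - l := h3
  -- rewrite the filtered sum
  have hsum_eq : (∑ l ∈ (Finset.range (n + 1)).filter
        (fun l : ℕ => Int.ModEq (d : ℤ) (l : ℤ) r),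
        (n.choose l : ℝ) * α ^ l * (1 - α) ^ (n - l))
      = ∑ l ∈ range (n + 1),
          if d ∣ (l + s) then (n.choose l : ℝ) * α ^ l * (1 - α) ^ (n - l) else 0 := by
    rw [← Finset.sum_filter]
    apply Finset.sum_congr
    · apply Finset.filter_congr
      intro x _
      simp only [hcond x]
    · intros; rfl
  rw [hsum_eq]
  -- complex setup
  set ω : ℂ := Complex.exp (2 * (Real.pi : ℂ) * Complex.I / d) with hωdef
  set t : ℝ := (n : ℝ) * (α * (1 - α)) with ht
  have ht0 : 0 < t := by
    have : (0 : ℝ) < n := by exact_mod_cast hn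
    have := mul_pos h0 (by linarith : (0 : ℝ) < 1 - α)
    positivity
  set a : ℝ := 8 * t / (d : ℝ) ^ 2 with ha
  have ha0 : 0 < a := by positivity
  have hωj : ∀ j : ℕ, ω ^ j = Complex.exp (((2 * π * j / d : ℝ) : ℂ) * Complex.I) := by
    intro j
    rw [hωdef, ← Complex.exp_nat_mul]
    congr 1
    push_cast
    have : (d : ℂ) ≠ 0 := by exact_mod_cast hdne
    field_simp
  have habsωj : ∀ j : ℕ, ‖ω ^ j‖ = 1 := by
    intro j
    rw [hωj j, Complex.norm_exp]
    simp
  set g : ℕ → ℂ := fun j => (ω ^ j) ^ s * ((α : ℂ) * ω ^ j + (1 - (α : ℂ))) ^ n with hg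
  have key := key_identity α n d s hdne
  have hg0 : g 0 = 1 := by
    have h01 : (α : ℂ) * ω ^ 0 + (1 - (α : ℂ)) = 1 := by
      rw [pow_zero]; ring
    rw [hg]; simp only [pow_zero, one_pow, h01]; simp
  have hsplit : ∑ j ∈ range d, g j = g 0 + ∑ j ∈ Ico 1 d, g j := by
    rw [Finset.range_eq_Ico, Finset.sum_eq_sum_Ico_succ_bot hd0]
  have hdC : ((d : ℂ)) ≠ 0 := by exact_mod_cast hdne
  have key' : ((∑ l ∈ range (n + 1),
        if d ∣ (l + s) then (n.choose l : ℝ) * α ^ l * (1 - α) ^ (n - l) else 0 : ℝ) : ℂ)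
      = (1 / d) * ∑ j ∈ range d, g j := key
  have hdiff : (((∑ l ∈ range (n + 1),
        if d ∣ (l + s) then (n.choose l : ℝ) * α ^ l * (1 - α) ^ (n - l) else 0) - 1 / d : ℝ) : ℂ)
      = (1 / d) * ∑ j ∈ Ico 1 d, g j := by
    rw [Complex.ofReal_sub, key', hsplit, hg0]
    push_cast
    ring
  -- the per-term bound
  have hterm : ∀ j ∈ Ico 1 d, ‖g j‖
      ≤ Real.exp (-(a * (j : ℝ) ^ 2)) + Real.exp (-(a * ((d : ℝ) - j) ^ 2)) := by
    intro j hj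
    obtain ⟨hj1, hjd⟩ := Finset.mem_Ico.1 hj
    have habs : ‖g j‖ = ‖(α : ℂ) * ω ^ j + (1 - (α : ℂ))‖ ^ n := by
      rw [hg]
      simp only [norm_mul, norm_pow, habsωj j, one_pow, one_mul]
    have hb1 : ‖(α : ℂ) * ω ^ j + (1 - (α : ℂ))‖
        ≤ Real.exp (-(α * (1 - α) * (1 - Real.cos (2 * π * j / d)))) := by
      rw [hωj j]
      exact abs_binom_char_le h0 h1 (2 * π * j / d)
    have hb2 : ‖g j‖ ≤ Real.exp (-(t * (1 - Real.cos (2 * π * j / d)))) := by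
      rw [habs]
      calc ‖(α : ℂ) * ω ^ j + (1 - (α : ℂ))‖ ^ n
          ≤ Real.exp (-(α * (1 - α) * (1 - Real.cos (2 * π * j / d)))) ^ n :=
            pow_le_pow_left₀ (norm_nonneg _) hb1 n
        _ = Real.exp (-(t * (1 - Real.cos (2 * π * j / d)))) := by
            rw [← Real.exp_nat_mul, ht]; congr 1; ring
    set m : ℝ := min (j : ℝ) ((d : ℝ) - j) with hm
    have hcosb := one_sub_cos_ge hd0 hj1 hjd
    have hb3 : Real.exp (-(t * (1 - Real.cos (2 * π * j / d)))) ≤ Real.exp (-(a * m ^ 2)) := by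
      apply Real.exp_le_exp.2
      have hmul := mul_le_mul_of_nonneg_left hcosb ht0.le
      have heq : a * m ^ 2 = t * (8 * m ^ 2 / (d : ℝ) ^ 2) := by
        rw [ha]; field_simp
      rw [heq]
      linarith
    have hb4 : Real.exp (-(a * m ^ 2))
        ≤ Real.exp (-(a * (j : ℝ) ^ 2)) + Real.exp (-(a * ((d : ℝ) - j) ^ 2)) := by
      rcases le_total (j : ℝ) ((d : ℝ) - j) with hle | hle
      · rw [hm, min_eq_left hle]
        have := (Real.exp_pos (-(a * ((d : ℝ) - j) ^ 2))).le
        linarith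
      · rw [hm, min_eq_right hle]
        have := (Real.exp_pos (-(a * (j : ℝ) ^ 2))).le
        linarith
    linarith
  -- reflection identity
  have hreflect : ∑ j ∈ Ico 1 d, Real.exp (-(a * ((d : ℝ) - j) ^ 2))
      = ∑ j ∈ Ico 1 d, Real.exp (-(a * (j : ℝ) ^ 2)) := by
    refine Finset.sum_nbij' (fun j => d - j) (fun j => d - j) ?_ ?_ ?_ ?_ ?_ <;>
      intro j hj <;>
      simp only [Finset.mem_Ico] at hj ⊢
    · omega
    · omega
    · omega
    · omega
    · 
      have hcast : ((d - j : ℕ) : ℝ) = (d : ℝ) - j := by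
        rw [Nat.cast_sub (by omega : j ≤ d)]
      rw [hcast]
  -- assemble
  have hmain : |(∑ l ∈ range (n + 1),
        if d ∣ (l + s) then (n.choose l : ℝ) * α ^ l * (1 - α) ^ (n - l) else 0) - 1 / d|
      ≤ (1 / d) * (2 * (4 / Real.sqrt a)) := by
    have h1' : |(∑ l ∈ range (n + 1),
        if d ∣ (l + s) then (n.choose l : ℝ) * α ^ l * (1 - α) ^ (n - l) else 0) - 1 / d|
        = ‖(1 / d) * ∑ j ∈ Ico 1 d, g j‖ := by
      rw [← hdiff, Complex.norm_real, Real.norm_eq_abs]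
    rw [h1']
    have habs1d : ‖(1 : ℂ) / d‖ = 1 / (d : ℝ) := by
      rw [norm_div, norm_one, Complex.norm_natCast]
    calc ‖(1 / d) * ∑ j ∈ Ico 1 d, g j‖
        = (1 / (d : ℝ)) * ‖∑ j ∈ Ico 1 d, g j‖ := by
          rw [norm_mul, habs1d]
      _ ≤ (1 / (d : ℝ)) * ∑ j ∈ Ico 1 d, ‖g j‖ := by
          apply mul_le_mul_of_nonneg_left (norm_sum_le _ _) (by positivity)
      _ ≤ (1 / (d : ℝ)) * ∑ j ∈ Ico 1 d,
            (Real.exp (-(a * (j : ℝ) ^ 2)) + Real.exp (-(a * ((d : ℝ) - j) ^ 2))) := by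
          apply mul_le_mul_of_nonneg_left (Finset.sum_le_sum hterm) (by positivity)
      _ = (1 / (d : ℝ)) * (2 * ∑ j ∈ Ico 1 d, Real.exp (-(a * (j : ℝ) ^ 2))) := by
          rw [Finset.sum_add_distrib, hreflect]; ring
      _ ≤ (1 / d) * (2 * (4 / Real.sqrt a)) := by
          apply mul_le_mul_of_nonneg_left _ (by positivity)
          apply mul_le_mul_of_nonneg_left (gauss_sum_le ha0 d) (by norm_num)
  refine hmain.trans ?_
  -- numeric finish
  have hsa : 0 < Real.sqrt a := Real.sqrt_pos.2 ha0
  have hst : 0 < Real.sqrt t := Real.sqrt_pos.2 ht0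
  have hda : (d : ℝ) * Real.sqrt a = Real.sqrt (8 * t) := by
    rw [show (8 * t : ℝ) = (d : ℝ) ^ 2 * a by rw [ha]; field_simp,
      Real.sqrt_mul (by positivity), Real.sqrt_sq hdR.le]
  have h8t : Real.sqrt (8 * t) = Real.sqrt 8 * Real.sqrt t :=
    Real.sqrt_mul (by norm_num) t
  have hs8 : (8 : ℝ) / 3 ≤ Real.sqrt 8 :=
    (Real.le_sqrt (by norm_num) (by norm_num)).2 (by norm_num)
  have hstep1 : (1 / (d : ℝ)) * (2 * (4 / Real.sqrt a)) = 8 / Real.sqrt (8 * t) := by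
    rw [← hda]
    field_simp
    ring
  rw [hstep1]
  have hstep2 : 8 / Real.sqrt (8 * t) ≤ 3 / Real.sqrt t := by
    rw [h8t, div_le_div_iff₀ (by positivity) hst]
    nlinarith
  refine hstep2.trans ?_
  have hsqt : Real.sqrt t = Real.sqrt (α * (1 - α)) * Real.sqrt n := by
    rw [ht, mul_comm ((n : ℝ)) _, Real.sqrt_mul (by nlinarith : (0 : ℝ) ≤ α * (1 - α))]
  rw [hsqt]
end

section
/- There is an absolute constant C > 0 such that for every α ∈ (0,1), all integers s,t ≥ 0 and every integer M ≥ 1: |Σ_{0 ≤ l ≤ M, gcd(l+s, M+t) = 1} C(M,l)·α^l·(1−α)^{M−l} − Σ_{d | M+t} μ(d)/d| ≤ C·τ(M+t)/(√(α(1−α))·√M), where the divisor sum runs over all positive divisors d of M+t. -/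
open Finset


namespace BPCS
open Real Nat
theorem stirling_bounds (n : ℕ) (hn : 1 ≤ n) :
    Real.sqrt Real.pi * (Real.sqrt (2*n:ℝ) * ((n:ℝ)/Real.exp 1)^n) ≤ (n ! : ℝ) ∧
    (n ! : ℝ) ≤ (Real.exp 1 / Real.sqrt 2) * (Real.sqrt (2*n:ℝ) * ((n:ℝ)/Real.exp 1)^n) := by
  have hn0 : (0:ℝ) < (n:ℝ) := by exact_mod_cast hn
  have hpos : (0:ℝ) < Real.sqrt (2*n :ℝ) * ((n:ℝ) / Real.exp 1)^n := by positivity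
  have hdef : Stirling.stirlingSeq n = (n ! : ℝ) / (Real.sqrt (2*n:ℝ) * ((n:ℝ)/Real.exp 1)^n) := rfl
  have hsub : Filter.Tendsto (Stirling.stirlingSeq ∘ Nat.succ) Filter.atTop (nhds (Real.sqrt Real.pi)) :=
    Stirling.tendsto_stirlingSeq_sqrt_pi.comp (Filter.tendsto_add_atTop_nat 1)
  constructor
  · have hge : Real.sqrt Real.pi ≤ Stirling.stirlingSeq n := by
      have := Stirling.stirlingSeq'_antitone.le_of_tendsto hsub (n-1)
      simpa [Function.comp, Nat.succ_eq_add_one, Nat.sub_add_cancel hn] using this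
    rw [hdef, le_div_iff₀ hpos] at hge
    linarith
  · have hle : Stirling.stirlingSeq n ≤ Real.exp 1 / Real.sqrt 2 := by
      have h := Stirling.stirlingSeq'_antitone (Nat.zero_le (n-1))
      simpa [Function.comp, Nat.succ_eq_add_one, Nat.sub_add_cancel hn,
        Stirling.stirlingSeq_one] using h
    rw [hdef, div_le_iff₀ hpos] at hle
    linarith

noncomputable def pb (M : ℕ) (α : ℝ) (l : ℕ) : ℝ := (M.choose l : ℝ) * α ^ l * (1 - α) ^ (M - l)

theorem pb_nonneg {α : ℝ} (h0 : 0 ≤ α) (h1 : α ≤ 1) (M l : ℕ) : 0 ≤ pb M α l := by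
  unfold pb
  have : (0:ℝ) ≤ 1 - α := by linarith
  positivity

theorem pb_vanish {α : ℝ} (M l : ℕ) (h : M < l) : pb M α l = 0 := by
  unfold pb
  rw [Nat.choose_eq_zero_of_lt h]
  simp

theorem pb_sum (M : ℕ) (α : ℝ) : ∑ l ∈ range (M+1), pb M α l = 1 := by
  have h := add_pow α (1 - α) M
  simp only [add_sub_cancel, one_pow] at h
  rw [show (1:ℝ) = (α + (1-α))^M by rw [add_sub_cancel]; exact (one_pow M).symm, add_pow]
  exact Finset.sum_congr rfl fun l hl => by unfold pb; ring

theorem pb_step {α : ℝ} (M l : ℕ) (h : l < M) :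
    pb M α (l+1) * (((l:ℝ)+1) * (1-α)) = pb M α l * (((M:ℝ) - l) * α) := by
  unfold pb
  have hc : (M.choose (l+1) : ℝ) * ((l:ℝ)+1) = (M.choose l : ℝ) * ((M:ℝ) - l) := by
    have := Nat.choose_succ_right_eq M l
    have hcast : ((M.choose (l+1) * (l+1) : ℕ) : ℝ) = ((M.choose l * (M - l) : ℕ) : ℝ) := by
      exact_mod_cast congrArg (fun x : ℕ => (x : ℝ)) this
    push_cast [Nat.cast_sub h.le] at hcast
    push_cast
    linarith
  have hsub : M - (l+1) + 1 = M - l := by omega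
  calc (M.choose (l+1) : ℝ) * α^(l+1) * (1-α)^(M-(l+1)) * (((l:ℝ)+1) * (1-α))
      = ((M.choose (l+1) : ℝ) * ((l:ℝ)+1)) * α^(l+1) * ((1-α)^(M-(l+1)) * (1-α)) := by ring
    _ = ((M.choose l : ℝ) * ((M:ℝ) - l)) * α^(l+1) * (1-α)^(M-l) := by
        rw [hc, ← pow_succ, hsub]
    _ = (M.choose l : ℝ) * α^l * (1-α)^(M-l) * (((M:ℝ) - l) * α) := by rw [pow_succ]; ring
end BPCS

namespace BPCS
open Real Nat
-- mode
theorem pb_mono_up {α : ℝ} (hα : 0 < α) (hα1 : α < 1) (M l : ℕ) (hl : l < M)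
    (h : ((l:ℝ)+1) ≤ ((M:ℝ)+1) * α) : pb M α l ≤ pb M α (l+1) := by
  have hstep := pb_step (α := α) M l hl
  have hMl : (l:ℝ) < (M:ℝ) := by exact_mod_cast hl
  have hpos : (0:ℝ) < ((l:ℝ)+1) * (1-α) := by
    have : (0:ℝ) ≤ (l:ℝ) := Nat.cast_nonneg l
    nlinarith
  have hge : ((l:ℝ)+1) * (1-α) ≤ ((M:ℝ) - l) * α := by nlinarith
  have hnn := pb_nonneg hα.le hα1.le M l
  nlinarith [pb_nonneg hα.le hα1.le M (l+1)]

theorem pb_mono_down {α : ℝ} (hα : 0 < α) (hα1 : α < 1) (M l : ℕ)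
    (h : ((M:ℝ)+1) * α ≤ (l:ℝ)+1) : pb M α (l+1) ≤ pb M α l := by
  rcases lt_or_ge l M with hl | hl
  · have hstep := pb_step (α := α) M l hl
    have hMl : (l:ℝ) < (M:ℝ) := by exact_mod_cast hl
    have hpos : (0:ℝ) < ((l:ℝ)+1) * (1-α) := by
      have : (0:ℝ) ≤ (l:ℝ) := Nat.cast_nonneg l
      nlinarith
    have hge : ((M:ℝ) - l) * α ≤ ((l:ℝ)+1) * (1-α) := by nlinarith
    nlinarith [pb_nonneg hα.le hα1.le M l, pb_nonneg hα.le hα1.le M (l+1)]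
  · rw [pb_vanish M (l+1) (by omega)]
    exact pb_nonneg hα.le hα1.le M l

-- variation bound
theorem pb_var {α : ℝ} (hα : 0 < α) (hα1 : α < 1) (M N : ℕ)
    (hN : min M (Nat.floor (((M:ℝ)+1)*α)) ≤ N) :
    ∑ j ∈ range N, |pb M α (j+1) - pb M α j| ≤ 2 * pb M α (min M (Nat.floor (((M:ℝ)+1)*α))) := by
  set m := min M (Nat.floor (((M:ℝ)+1)*α)) with hm
  have hup : ∀ j < m, pb M α j ≤ pb M α (j+1) := by
    intro j hj
    apply pb_mono_up hα hα1 M j (by omega)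
    have h1 : j + 1 ≤ Nat.floor (((M:ℝ)+1)*α) := by omega
    have h2 : (Nat.floor (((M:ℝ)+1)*α) : ℝ) ≤ ((M:ℝ)+1)*α := Nat.floor_le (by positivity)
    calc ((j:ℝ)+1) = ((j+1 : ℕ):ℝ) := by push_cast; ring
      _ ≤ (Nat.floor (((M:ℝ)+1)*α) : ℝ) := by exact_mod_cast h1
      _ ≤ _ := h2
  have hdown : ∀ j, m ≤ j → pb M α (j+1) ≤ pb M α j := by
    intro j hj
    rcases lt_or_ge j M with hjM | hjM
    · have hmf : m = Nat.floor (((M:ℝ)+1)*α) := by omega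
      have h1 : Nat.floor (((M:ℝ)+1)*α) ≤ j := by omega
      apply pb_mono_down hα hα1 M j
      have h2 : ((M:ℝ)+1)*α < (Nat.floor (((M:ℝ)+1)*α) : ℝ) + 1 := Nat.lt_floor_add_one _
      have h3 : ((Nat.floor (((M:ℝ)+1)*α)) : ℝ) ≤ (j:ℝ) := by exact_mod_cast h1
      linarith
    · rw [pb_vanish M (j+1) (by omega)]
      exact pb_nonneg hα.le hα1.le M j
  rw [← Finset.sum_range_add_sum_Ico _ hN]
  have e1 : ∑ j ∈ range m, |pb M α (j+1) - pb M α j| = pb M α m - pb M α 0 := by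
    rw [Finset.sum_congr rfl (fun j hj => abs_of_nonneg (by
      have := hup j (mem_range.mp hj); linarith))]
    exact Finset.sum_range_sub (fun j => pb M α j) m
  have e2 : ∑ j ∈ Ico m N, |pb M α (j+1) - pb M α j| = pb M α m - pb M α N := by
    rw [Finset.sum_congr rfl (fun j hj => abs_of_nonpos (by
      have := hdown j (mem_Ico.mp hj).1; linarith))]
    have : ∀ j ∈ Ico m N, -(pb M α (j+1) - pb M α j) = pb M α j - pb M α (j+1) := fun j _ => by ring
    rw [Finset.sum_congr rfl this, Finset.sum_Ico_eq_sub _ hN,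
      Finset.sum_range_sub' (fun j => pb M α j) N, Finset.sum_range_sub' (fun j => pb M α j) m]
    ring
  rw [e1, e2]
  have := pb_nonneg hα.le hα1.le M 0
  have := pb_nonneg hα.le hα1.le M N
  linarith
end BPCS

namespace BPCS
open Real Nat
theorem telescope_abs (f : ℕ → ℝ) {x y : ℕ} (h : x ≤ y) :
    |f y - f x| ≤ ∑ j ∈ Ico x y, |f (j+1) - f j| := by
  have : f y - f x = ∑ j ∈ Ico x y, (f (j+1) - f j) := by
    rw [Finset.sum_Ico_eq_sub _ h, Finset.sum_range_sub (fun j => f j) y,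
      Finset.sum_range_sub (fun j => f j) x]
    ring
  rw [this]
  exact Finset.abs_sum_le_sum_abs _ _

theorem blocks (g : ℕ → ℝ) (d : ℕ) : ∀ K : ℕ,
    ∑ k ∈ range K, ∑ j ∈ Ico (k*d) ((k+1)*d), g j = ∑ j ∈ range (K*d), g j := by
  intro K
  induction K with
  | zero => simp
  | succ K ih =>
    rw [Finset.sum_range_succ, ih, Finset.range_eq_Ico]
    rw [Finset.range_eq_Ico]
    exact Finset.sum_Ico_consecutive g (Nat.zero_le _) (Nat.mul_le_mul_right d (Nat.le_succ K))

theorem fiber_reindex (f : ℕ → ℝ) {d : ℕ} (hd : 0 < d) {ρ : ℕ} (hρ : ρ < d) (K : ℕ) :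
    ∑ l ∈ (range (K*d)).filter (fun l => l % d = ρ), f l = ∑ k ∈ range K, f (ρ + k*d) := by
  apply Finset.sum_nbij' (fun l => l / d) (fun k => ρ + k*d)
  · intro l hl
    simp only [mem_filter, mem_range] at hl ⊢
    exact (Nat.div_lt_iff_lt_mul hd).mpr hl.1
  · intro k hk
    simp only [mem_filter, mem_range] at hk ⊢
    constructor
    · calc ρ + k*d < d + k*d := by omega
        _ = (k+1)*d := by ring
        _ ≤ K*d := Nat.mul_le_mul_right d (by omega)
    · rw [Nat.add_mul_mod_self_right, Nat.mod_eq_of_lt hρ]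
  · intro l hl
    simp only [mem_filter, mem_range] at hl
    have := Nat.mod_add_div' l d
    omega
  · intro k hk
    rw [Nat.add_mul_div_right _ _ hd, Nat.div_eq_of_lt hρ, zero_add]
  · intro l hl
    simp only [mem_filter, mem_range] at hl
    have := Nat.mod_add_div' l d
    congr 1
    omega

theorem mod_cond {d : ℕ} (hd : 0 < d) (s l : ℕ) :
    d ∣ (l + s) ↔ l % d = (d - s % d) % d := by
  have hsd : s % d < d := Nat.mod_lt _ hd
  have hld : l % d < d := Nat.mod_lt _ hd
  have hρ : (d - s % d) % d < d := Nat.mod_lt _ hd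
  have hρdvd : d ∣ ((d - s % d) % d + s % d) := by
    rcases Nat.eq_zero_or_pos (s % d) with h | h
    · simp [h]
    · rw [Nat.mod_eq_of_lt (by omega)]
      have : d - s % d + s % d = d := by omega
      rw [this]
  have hmain : d ∣ (l + s) ↔ d ∣ (l % d + s % d) := by
    rw [Nat.dvd_iff_mod_eq_zero, Nat.dvd_iff_mod_eq_zero, Nat.add_mod l s d]
  rw [hmain]
  obtain ⟨u, hu⟩ := hρdvd
  have hu' : u ≤ 1 := by
    by_contra hc
    have h2 : d * u ≥ d * 2 := Nat.mul_le_mul_left d (by omega)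
    omega
  constructor
  · intro h
    obtain ⟨v, hv⟩ := h
    have hv' : v ≤ 1 := by
      by_contra hc
      have h2 : d * v ≥ d * 2 := Nat.mul_le_mul_left d (by omega)
      omega
    interval_cases u <;> interval_cases v <;> omega
  · intro h
    rw [h]
    exact ⟨u, hu⟩
end BPCS

namespace BPCS
open Real Nat
open Real

theorem exp_pow_bound {x : ℝ} (hx : 0 ≤ x) (n : ℕ) : x^n ≤ Real.exp ((n:ℝ)*x - n) := by
  calc x^n ≤ (Real.exp (x-1))^n :=
        pow_le_pow_left₀ hx (by linarith [Real.add_one_le_exp (x-1)]) n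
    _ = Real.exp ((n:ℝ)*(x-1)) := (Real.exp_nat_mul _ n).symm
    _ = Real.exp ((n:ℝ)*x - n) := by ring_nf

set_option maxHeartbeats 1000000 in
theorem mode_sq (M m k : ℕ) (hm : 1 ≤ m) (hk : 1 ≤ k) (hM : M = m + k)
    {α : ℝ} (hα : 0 < α) (hα1 : α < 1)
    (hmα : (M:ℝ)*α ≤ 2*m) (hkβ : (M:ℝ)*(1-α) ≤ 2*k) :
    ((M.choose m : ℝ) * α^m * (1-α)^k)^2 * ((M:ℝ)*α*(1-α)) ≤ 4 := by
  have hβ : (0:ℝ) < 1 - α := by linarith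
  have he : (0:ℝ) < Real.exp 1 := Real.exp_pos 1
  have hm0 : (0:ℝ) < (m:ℝ) := by exact_mod_cast hm
  have hk0 : (0:ℝ) < (k:ℝ) := by exact_mod_cast hk
  have hM1 : 1 ≤ M := by omega
  have hN0 : (0:ℝ) < (M:ℝ) := by exact_mod_cast hM1
  have hN : (M:ℝ) = (m:ℝ) + (k:ℝ) := by exact_mod_cast congrArg (Nat.cast (R := ℝ)) hM
  set e := Real.exp 1 with hedef
  set N := (M:ℝ) with hNdef
  set A := ((m:ℝ)/e)^m with hA
  set B := ((k:ℝ)/e)^k with hB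
  have hA0 : 0 < A := by positivity
  have hB0 : 0 < B := by positivity
  have hsq2 : (Real.sqrt 2)^2 = 2 := Real.sq_sqrt (by norm_num)
  have hsqN : (Real.sqrt (2*N))^2 = 2*N := Real.sq_sqrt (by positivity)
  have hsqm : (Real.sqrt (2*(m:ℝ)))^2 = 2*m := Real.sq_sqrt (by positivity)
  have hsqk : (Real.sqrt (2*(k:ℝ)))^2 = 2*k := Real.sq_sqrt (by positivity)
  have hsqπ : (Real.sqrt π)^2 = π := Real.sq_sqrt Real.pi_pos.le
  obtain ⟨hMlo, hMup⟩ := stirling_bounds M hM1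
  obtain ⟨hmlo, _⟩ := stirling_bounds m hm
  obtain ⟨hklo, _⟩ := stirling_bounds k hk
  have hup2 : ((M ! : ℕ) : ℝ)^2 ≤ e^2 * N * ((N/e)^M)^2 := by
    calc ((M ! : ℕ) : ℝ)^2 ≤ ((e/Real.sqrt 2) * (Real.sqrt (2*N) * (N/e)^M))^2 :=
          pow_le_pow_left₀ (by positivity) hMup 2
      _ = e^2/(Real.sqrt 2)^2 * ((Real.sqrt (2*N))^2 * ((N/e)^M)^2) := by ring
      _ = e^2 * N * ((N/e)^M)^2 := by rw [hsq2, hsqN]; ring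
  have hlom2 : π * (2*(m:ℝ)) * A^2 ≤ ((m ! : ℕ) : ℝ)^2 := by
    calc π * (2*(m:ℝ)) * A^2 = ((Real.sqrt π) * (Real.sqrt (2*(m:ℝ)) * A))^2 := by
          rw [mul_pow, mul_pow, hsqπ, hsqm]; ring
      _ ≤ ((m ! : ℕ) : ℝ)^2 := pow_le_pow_left₀ (by positivity) hmlo 2
  have hlok2 : π * (2*(k:ℝ)) * B^2 ≤ ((k ! : ℕ) : ℝ)^2 := by
    calc π * (2*(k:ℝ)) * B^2 = ((Real.sqrt π) * (Real.sqrt (2*(k:ℝ)) * B))^2 := by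
          rw [mul_pow, mul_pow, hsqπ, hsqk]; ring
      _ ≤ ((k ! : ℕ) : ℝ)^2 := pow_le_pow_left₀ (by positivity) hklo 2
  have hsub : M - m = k := by omega
  have hfact : (M.choose m : ℝ) * ((m ! : ℕ) : ℝ) * ((k ! : ℕ) : ℝ) = ((M ! : ℕ) : ℝ) := by
    have h := Nat.choose_mul_factorial_mul_factorial (show m ≤ M by omega)
    rw [hsub] at h
    exact_mod_cast congrArg (Nat.cast (R := ℝ)) h
  set c := (M.choose m : ℝ) with hc
  have hc0 : 0 ≤ c := Nat.cast_nonneg _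
  have key1 : c^2 * ((π * (2*(m:ℝ)) * A^2) * (π * (2*(k:ℝ)) * B^2)) ≤ e^2 * N * ((N/e)^M)^2 := by
    calc c^2 * ((π * (2*(m:ℝ)) * A^2) * (π * (2*(k:ℝ)) * B^2))
        ≤ c^2 * (((m ! : ℕ):ℝ)^2 * ((k ! : ℕ):ℝ)^2) := by
          apply mul_le_mul_of_nonneg_left _ (by positivity)
          exact mul_le_mul hlom2 hlok2 (by positivity) (by positivity)
      _ = ((M ! : ℕ):ℝ)^2 := by rw [← hfact]; ring
      _ ≤ _ := hup2
  -- AM-GM part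
  have hG : (N*α/m)^m * (N*(1-α)/k)^k ≤ 1 := by
    have h1 := exp_pow_bound (show (0:ℝ) ≤ N*α/m by positivity) m
    have h2 := exp_pow_bound (show (0:ℝ) ≤ N*(1-α)/k by positivity) k
    have e1 : (m:ℝ)*(N*α/m) = N*α := by field_simp
    have e2 : (k:ℝ)*(N*(1-α)/k) = N*(1-α) := by field_simp
    calc (N*α/m)^m * (N*(1-α)/k)^k
        ≤ Real.exp ((m:ℝ)*(N*α/m) - m) * Real.exp ((k:ℝ)*(N*(1-α)/k) - k) :=
          mul_le_mul h1 h2 (by positivity) (Real.exp_nonneg _)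
      _ = Real.exp ((N*α - m) + (N*(1-α) - k)) := by rw [← Real.exp_add, e1, e2]
      _ = 1 := by rw [show (N*α - m) + (N*(1-α) - k) = 0 by rw [hN]; ring, Real.exp_zero]
  have em : N*α/e = (N*α/(m:ℝ))*((m:ℝ)/e) := by field_simp
  have ek : N*(1-α)/e = (N*(1-α)/(k:ℝ))*((k:ℝ)/e) := by field_simp
  have hAB : (N*α/e)^m * (N*(1-α)/e)^k ≤ A * B := by
    rw [em, ek, mul_pow, mul_pow, ← hA, ← hB]
    calc (N*α/(m:ℝ))^m * A * ((N*(1-α)/(k:ℝ))^k * B)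
        = ((N*α/(m:ℝ))^m * (N*(1-α)/(k:ℝ))^k) * (A*B) := by ring
      _ ≤ 1 * (A*B) := mul_le_mul_of_nonneg_right hG (by positivity)
      _ = A*B := one_mul _
  set P := (π * (2*(m:ℝ)) * A^2) * (π * (2*(k:ℝ)) * B^2) with hPdef
  have hP : 0 < P := by positivity
  apply le_of_mul_le_mul_right _ hP
  calc (c * α^m * (1-α)^k)^2 * (N*α*(1-α)) * P
      = (c^2 * P) * ((α^m)^2 * ((1-α)^k)^2 * (N*α*(1-α))) := by ring
    _ ≤ (e^2 * N * ((N/e)^M)^2) * ((α^m)^2 * ((1-α)^k)^2 * (N*α*(1-α))) := by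
        apply mul_le_mul_of_nonneg_right _ (by positivity)
        exact key1
    _ = (e^2 * (N*α) * (N*(1-α))) * ((N*α/e)^m * (N*(1-α)/e)^k)^2 := by
        have split : ((N*α/e)^m * (N*(1-α)/e)^k)^2
            = ((N/e)^m)^2 * (α^m)^2 * (((N/e)^k)^2 * ((1-α)^k)^2) := by
          rw [show N*α/e = (N/e)*α by ring, show N*(1-α)/e = (N/e)*(1-α) by ring,
            ]
          simp only [mul_pow]
        rw [split, hM, pow_add]
        ring
    _ ≤ (e^2 * (2*(m:ℝ)) * (2*(k:ℝ))) * ((N*α/e)^m * (N*(1-α)/e)^k)^2 := by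
        apply mul_le_mul_of_nonneg_right _ (by positivity)
        have h1 : (N*α)*(N*(1-α)) ≤ (2*(m:ℝ))*(2*(k:ℝ)) :=
          mul_le_mul hmα hkβ (by positivity) (by positivity)
        calc e^2 * (N*α) * (N*(1-α)) = e^2 * ((N*α)*(N*(1-α))) := by ring
          _ ≤ e^2 * ((2*(m:ℝ))*(2*(k:ℝ))) := by
              exact mul_le_mul_of_nonneg_left h1 (by positivity)
          _ = e^2 * (2*(m:ℝ)) * (2*(k:ℝ)) := by ring
    _ ≤ (e^2 * (2*(m:ℝ)) * (2*(k:ℝ))) * (A*B)^2 := by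
        apply mul_le_mul_of_nonneg_left (pow_le_pow_left₀ (by positivity) hAB 2) (by positivity)
    _ ≤ (16*π^2*((m:ℝ)*(k:ℝ))) * (A*B)^2 := by
        apply mul_le_mul_of_nonneg_right _ (by positivity)
        have he2 : e ≤ 3 := by
          rw [hedef]
          have := Real.exp_one_lt_d9
          linarith
        have hπ : 3 < π := Real.pi_gt_three
        have hee : e^2 ≤ 4*π^2 := by
          have h1 : e^2 ≤ 3^2 := pow_le_pow_left₀ he.le he2 2
          have h2 : (3:ℝ)^2 ≤ π^2 := pow_le_pow_left₀ (by norm_num) hπ.le 2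
          linarith
        calc e^2 * (2*(m:ℝ)) * (2*(k:ℝ)) = (4*((m:ℝ)*(k:ℝ))) * e^2 := by ring
          _ ≤ (4*((m:ℝ)*(k:ℝ))) * (4*π^2) := by
              exact mul_le_mul_of_nonneg_left hee (by positivity)
          _ = 16*π^2*((m:ℝ)*(k:ℝ)) := by ring
    _ = 4 * P := by rw [hPdef]; ring
end BPCS

namespace BPCS
open Real Nat
theorem mode_bound (M : ℕ) (hM : 1 ≤ M) {α : ℝ} (hα : 0 < α) (hα1 : α < 1) :
    pb M α (min M (Nat.floor (((M:ℝ)+1)*α))) ≤ 2 / Real.sqrt ((M:ℝ)*α*(1-α)) := by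
  have hβ : (0:ℝ) < 1 - α := by linarith
  have hM0 : (0:ℝ) < (M:ℝ) := by exact_mod_cast hM
  set m := min M (Nat.floor (((M:ℝ)+1)*α)) with hm
  have hmM : m ≤ M := min_le_left _ _
  have hMαβ : 0 < (M:ℝ)*α*(1-α) := by positivity
  have hx0 : 0 ≤ pb M α m := pb_nonneg hα.le hα1.le M m
  have hpb1 : pb M α m ≤ 1 := by
    have hsum := pb_sum M α
    calc pb M α m ≤ ∑ l ∈ range (M+1), pb M α l :=
          Finset.single_le_sum (fun l _ => pb_nonneg hα.le hα1.le M l)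
            (mem_range.mpr (by omega))
      _ = 1 := hsum
  have key : (pb M α m)^2 * ((M:ℝ)*α*(1-α)) ≤ 4 := by
    have hsmall : (M:ℝ)*α*(1-α) ≤ 1 → (pb M α m)^2 * ((M:ℝ)*α*(1-α)) ≤ 4 := by
      intro h1
      have hpb2 : (pb M α m)^2 ≤ 1 := by nlinarith
      have := mul_le_mul hpb2 h1 hMαβ.le zero_le_one
      linarith
    rcases Nat.eq_zero_or_pos m with hm0 | hm1
    · apply hsmall
      have hf : Nat.floor (((M:ℝ)+1)*α) = 0 := by omega
      have hlt : ((M:ℝ)+1)*α < 1 := by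
        have := Nat.floor_eq_zero.mp hf
        linarith
      have hMα : (M:ℝ)*α < 1 := by nlinarith
      nlinarith
    · rcases Nat.lt_or_ge m M with hmlt | hmge
      · have hfl : m = Nat.floor (((M:ℝ)+1)*α) := by omega
        set k := M - m with hk
        have hk1 : 1 ≤ k := by omega
        have hMmk : M = m + k := by omega
        have hfloor_le : (m:ℝ) ≤ ((M:ℝ)+1)*α := by
          rw [hfl]; exact Nat.floor_le (by positivity)
        have hlt1 : ((M:ℝ)+1)*α < (m:ℝ)+1 := by rw [hfl]; exact Nat.lt_floor_add_one _
        have hm1' : (1:ℝ) ≤ (m:ℝ) := by exact_mod_cast hm1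
        have hk1' : (1:ℝ) ≤ (k:ℝ) := by exact_mod_cast hk1
        have hkR : (k:ℝ) = (M:ℝ) - (m:ℝ) := by
          rw [hk, Nat.cast_sub hmM]
        have hmα : (M:ℝ)*α ≤ 2*(m:ℝ) := by nlinarith
        have hkβ : (M:ℝ)*(1-α) ≤ 2*(k:ℝ) := by nlinarith
        have hms := mode_sq M m k hm1 hk1 hMmk hα hα1 hmα hkβ
        have hpbk : pb M α m = (M.choose m : ℝ) * α^m * (1-α)^k := by
          rw [hk]; rfl
        rw [hpbk]
        exact hms
      · apply hsmall
        have hmm : m = M := le_antisymm hmM hmge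
        have h1 : M ≤ Nat.floor (((M:ℝ)+1)*α) := by omega
        have hle : (M:ℝ) ≤ ((M:ℝ)+1)*α := by
          calc (M:ℝ) ≤ (Nat.floor (((M:ℝ)+1)*α) : ℝ) := by exact_mod_cast h1
            _ ≤ ((M:ℝ)+1)*α := Nat.floor_le (by positivity)
        have hM1a : (M:ℝ)*(1-α) < 1 := by nlinarith
        nlinarith
  have hs : 0 < Real.sqrt ((M:ℝ)*α*(1-α)) := Real.sqrt_pos.mpr hMαβ
  rw [le_div_iff₀ hs]
  have hsq := Real.sq_sqrt hMαβ.le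
  have h4 : (pb M α m * Real.sqrt ((M:ℝ)*α*(1-α)))^2 ≤ 4 := by
    calc (pb M α m * Real.sqrt ((M:ℝ)*α*(1-α)))^2
        = (pb M α m)^2 * (Real.sqrt ((M:ℝ)*α*(1-α)))^2 := by ring
      _ = (pb M α m)^2 * ((M:ℝ)*α*(1-α)) := by rw [hsq]
      _ ≤ 4 := key
  nlinarith [mul_nonneg hx0 hs.le, sq_nonneg (pb M α m * Real.sqrt ((M:ℝ)*α*(1-α)) - 2)]
end BPCS

namespace BPCS
open Real Nat
theorem per_d (M : ℕ) (hM : 1 ≤ M) {α : ℝ} (hα : 0 < α) (hα1 : α < 1) (s : ℕ)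
    {d : ℕ} (hd : 0 < d) :
    |(∑ l ∈ (range (M+1)).filter (fun l => d ∣ (l + s)), pb M α l) - 1/(d:ℝ)|
      ≤ 4 / Real.sqrt ((M:ℝ)*α*(1-α)) := by
  have hβ : (0:ℝ) < 1 - α := by linarith
  have hM0 : (0:ℝ) < (M:ℝ) := by exact_mod_cast hM
  have hd0 : (0:ℝ) < (d:ℝ) := by exact_mod_cast hd
  have hbig : M + 1 ≤ (M+1)*d := Nat.le_mul_of_pos_right _ hd
  set m := min M (Nat.floor (((M:ℝ)+1)*α)) with hm
  set F : ℕ → ℝ := fun r => ∑ k ∈ range (M+1), pb M α (r + k*d) with hF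
  set V := ∑ j ∈ range ((M+1)*d), |pb M α (j+1) - pb M α j| with hVdef
  have hV : V ≤ 2 * pb M α m := pb_var hα hα1 M ((M+1)*d) (by omega)
  set ρ := (d - s % d) % d with hρdef
  have hρ : ρ < d := Nat.mod_lt _ hd
  -- (a,b,c) : the filtered sum equals F ρ
  have hSF : (∑ l ∈ (range (M+1)).filter (fun l => d ∣ (l + s)), pb M α l) = F ρ := by
    have hext : (∑ l ∈ (range (M+1)).filter (fun l => d ∣ (l + s)), pb M α l)
        = ∑ l ∈ (range ((M+1)*d)).filter (fun l => d ∣ (l + s)), pb M α l := by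
      apply Finset.sum_subset
      · exact Finset.filter_subset_filter _ (Finset.range_subset_range.mpr hbig)
      · intro l hl hnl
        simp only [mem_filter, mem_range] at hl hnl
        exact pb_vanish M l (by omega)
    rw [hext]
    have hcong : (range ((M+1)*d)).filter (fun l => d ∣ (l + s))
        = (range ((M+1)*d)).filter (fun l => l % d = ρ) := by
      apply Finset.filter_congr
      intro l _
      exact mod_cond hd s l
    rw [hcong]
    exact fiber_reindex (pb M α) hd hρ (M+1)
  -- (d) : total
  have htot : ∑ r ∈ range d, F r = 1 := by
    have h1 : ∀ r ∈ range d, F r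
        = ∑ l ∈ (range ((M+1)*d)).filter (fun l => l % d = r), pb M α l := by
      intro r hr
      exact (fiber_reindex (pb M α) hd (mem_range.mp hr) (M+1)).symm
    rw [Finset.sum_congr rfl h1,
      Finset.sum_fiberwise_of_maps_to (fun l hl => mem_range.mpr (Nat.mod_lt _ hd))]
    rw [← pb_sum M α]
    symm
    apply Finset.sum_subset (Finset.range_subset_range.mpr hbig)
    intro l hl hnl
    simp only [mem_range] at hl hnl
    exact pb_vanish M l (by omega)
  -- (e) pairwise
  have hpair : ∀ a b : ℕ, a < d → b < d → |F a - F b| ≤ V := by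
    have haux : ∀ a b : ℕ, a ≤ b → b < d → |F a - F b| ≤ V := by
      intro a b hab hbd
      have h1 : F a - F b = ∑ k ∈ range (M+1), (pb M α (a + k*d) - pb M α (b + k*d)) := by
        rw [Finset.sum_sub_distrib]
      rw [h1]
      calc |∑ k ∈ range (M+1), (pb M α (a + k*d) - pb M α (b + k*d))|
          ≤ ∑ k ∈ range (M+1), |pb M α (a + k*d) - pb M α (b + k*d)| :=
            Finset.abs_sum_le_sum_abs _ _
        _ ≤ ∑ k ∈ range (M+1), ∑ j ∈ Ico (k*d) ((k+1)*d), |pb M α (j+1) - pb M α j| := by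
            apply Finset.sum_le_sum
            intro k _
            calc |pb M α (a + k*d) - pb M α (b + k*d)|
                = |pb M α (b + k*d) - pb M α (a + k*d)| := abs_sub_comm _ _
              _ ≤ ∑ j ∈ Ico (a + k*d) (b + k*d), |pb M α (j+1) - pb M α j| :=
                  telescope_abs (pb M α) (by omega)
              _ ≤ ∑ j ∈ Ico (k*d) ((k+1)*d), |pb M α (j+1) - pb M α j| := by
                  apply Finset.sum_le_sum_of_subset_of_nonneg
                  · apply Finset.Ico_subset_Ico (by omega)
                    have : b + k*d < d + k*d := by omega
                    have h2 : d + k*d = (k+1)*d := by ring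
                    omega
                  · intro j _ _
                    exact abs_nonneg _
        _ = V := blocks _ d (M+1)
    intro a b had hbd
    rcases le_total a b with h | h
    · exact haux a b h hbd
    · rw [abs_sub_comm]
      exact haux b a h had
  -- (f) conclude
  have hsum_diff : ∑ r ∈ range d, (F ρ - F r) = (d:ℝ) * F ρ - 1 := by
    rw [Finset.sum_sub_distrib, htot, Finset.sum_const, card_range, nsmul_eq_mul]
  have h1 : F ρ - 1/(d:ℝ) = (1/(d:ℝ)) * ∑ r ∈ range d, (F ρ - F r) := by
    rw [hsum_diff]
    field_simp
  have hmode : pb M α m ≤ 2 / Real.sqrt ((M:ℝ)*α*(1-α)) := mode_bound M hM hα hα1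
  calc |(∑ l ∈ (range (M+1)).filter (fun l => d ∣ (l + s)), pb M α l) - 1/(d:ℝ)|
      = |(1/(d:ℝ)) * ∑ r ∈ range d, (F ρ - F r)| := by rw [hSF, h1]
    _ = (1/(d:ℝ)) * |∑ r ∈ range d, (F ρ - F r)| := by
        rw [abs_mul, abs_of_nonneg (by positivity : (0:ℝ) ≤ 1/(d:ℝ))]
    _ ≤ (1/(d:ℝ)) * ∑ r ∈ range d, |F ρ - F r| := by
        apply mul_le_mul_of_nonneg_left (Finset.abs_sum_le_sum_abs _ _) (by positivity)
    _ ≤ (1/(d:ℝ)) * ∑ r ∈ range d, V := by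
        apply mul_le_mul_of_nonneg_left _ (by positivity)
        exact Finset.sum_le_sum (fun r hr => hpair ρ r hρ (mem_range.mp hr))
    _ = V := by
        rw [Finset.sum_const, card_range, nsmul_eq_mul]
        field_simp
    _ ≤ 2 * pb M α m := hV
    _ ≤ 2 * (2 / Real.sqrt ((M:ℝ)*α*(1-α))) := by linarith
    _ = 4 / Real.sqrt ((M:ℝ)*α*(1-α)) := by ring
end BPCS


/-- **Binomial probabilities on coprimality sets.**  There is an absolute constant
`C > 0` such that for every `α ∈ (0,1)`, all integers `s, t ≥ 0` and every `M ≥ 1`,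
the sum of `C(M,l)α^l(1−α)^{M−l}` over `0 ≤ l ≤ M` with `gcd(l+s, M+t) = 1` differs
from `∑_{d ∣ M+t} μ(d)/d` by at most `C·τ(M+t)/(√(α(1−α))·√M)`. -/
theorem binomial_probabilities_coprime_sum :
    ∃ C : ℝ, 0 < C ∧
      ∀ (α : ℝ), 0 < α → α < 1 →
      ∀ (s t M : ℕ), 1 ≤ M →
        |(∑ l ∈ (Finset.range (M + 1)).filter
              (fun l => Nat.gcd (l + s) (M + t) = 1),
            (M.choose l : ℝ) * α ^ l * (1 - α) ^ (M - l)) -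
          ∑ d ∈ (M + t).divisors, (ArithmeticFunction.moebius d : ℝ) / (d : ℝ)|
          ≤ C * ((M + t).divisors.card : ℝ) / (Real.sqrt (α * (1 - α)) * Real.sqrt M) := by
  refine ⟨4, by norm_num, ?_⟩
  intro α hα hα1 s t M hM
  set n := M + t with hn
  have hn0 : n ≠ 0 := by omega
  have hβ : (0:ℝ) < 1 - α := by linarith
  have hM0 : (0:ℝ) < (M:ℝ) := by exact_mod_cast hM
  -- Moebius divisor sum identity
  have hmoe : ∀ k : ℕ, (∑ d ∈ k.divisors, ((ArithmeticFunction.moebius d : ℤ):ℝ))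
      = if k = 1 then 1 else 0 := by
    intro k
    have h2 : (∑ d ∈ k.divisors, (ArithmeticFunction.moebius d)) = if k = 1 then (1:ℤ) else 0 := by
      have h : ((ArithmeticFunction.moebius * ArithmeticFunction.zeta : ArithmeticFunction ℤ)) k
          = ∑ d ∈ k.divisors, ArithmeticFunction.moebius d :=
        ArithmeticFunction.coe_mul_zeta_apply
      rw [ArithmeticFunction.moebius_mul_coe_zeta, ArithmeticFunction.one_apply] at h
      exact h.symm
    calc (∑ d ∈ k.divisors, ((ArithmeticFunction.moebius d : ℤ):ℝ))
        = (((∑ d ∈ k.divisors, ArithmeticFunction.moebius d : ℤ)):ℝ) := by push_cast; ring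
      _ = if k = 1 then 1 else 0 := by rw [h2]; simp
  -- indicator identity
  have hind : ∀ l : ℕ, (if Nat.gcd (l+s) n = 1 then (1:ℝ) else 0)
      = ∑ d ∈ n.divisors, (if d ∣ (l+s) then ((ArithmeticFunction.moebius d : ℤ):ℝ) else 0) := by
    intro l
    have hg : Nat.gcd (l+s) n ≠ 0 := by
      intro h
      exact hn0 (Nat.eq_zero_of_gcd_eq_zero_right h)
    have hdiv : n.divisors.filter (fun d => d ∣ (l+s)) = (Nat.gcd (l+s) n).divisors := by
      ext d
      simp only [mem_filter, Nat.mem_divisors, Nat.dvd_gcd_iff]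
      constructor
      · rintro ⟨⟨h1, _⟩, h2⟩
        exact ⟨⟨h2, h1⟩, hg⟩
      · rintro ⟨⟨h1, h2⟩, _⟩
        exact ⟨⟨h2, hn0⟩, h1⟩
    rw [← Finset.sum_filter, hdiv, hmoe]
  -- rewrite the main sum
  have hmain : (∑ l ∈ (Finset.range (M + 1)).filter (fun l => Nat.gcd (l + s) n = 1),
        (M.choose l : ℝ) * α ^ l * (1 - α) ^ (M - l))
      = ∑ d ∈ n.divisors, ((ArithmeticFunction.moebius d : ℤ):ℝ) *
          (∑ l ∈ (range (M+1)).filter (fun l => d ∣ (l + s)), BPCS.pb M α l) := by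
    rw [Finset.sum_filter]
    have step1 : ∀ l : ℕ, (if Nat.gcd (l + s) n = 1
          then (M.choose l : ℝ) * α ^ l * (1 - α) ^ (M - l) else 0)
        = ∑ d ∈ n.divisors, (if d ∣ (l+s)
            then ((ArithmeticFunction.moebius d : ℤ):ℝ) * BPCS.pb M α l else 0) := by
      intro l
      have h1 : (if Nat.gcd (l + s) n = 1
            then (M.choose l : ℝ) * α ^ l * (1 - α) ^ (M - l) else 0)
          = (if Nat.gcd (l+s) n = 1 then (1:ℝ) else 0) * BPCS.pb M α l := by
        unfold BPCS.pb
        split <;> simp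
      rw [h1, hind l, Finset.sum_mul]
      apply Finset.sum_congr rfl
      intro d _
      rw [ite_mul, zero_mul]
    rw [Finset.sum_congr rfl (fun l _ => step1 l), Finset.sum_comm]
    apply Finset.sum_congr rfl
    intro d _
    rw [Finset.mul_sum, Finset.sum_filter]
  rw [hmain]
  -- subtract the main term
  have hsub : ∑ d ∈ n.divisors, ((ArithmeticFunction.moebius d : ℤ):ℝ) *
        (∑ l ∈ (range (M+1)).filter (fun l => d ∣ (l + s)), BPCS.pb M α l)
      - ∑ d ∈ n.divisors, ((ArithmeticFunction.moebius d : ℤ):ℝ) / (d:ℝ)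
      = ∑ d ∈ n.divisors, ((ArithmeticFunction.moebius d : ℤ):ℝ) *
        ((∑ l ∈ (range (M+1)).filter (fun l => d ∣ (l + s)), BPCS.pb M α l) - 1/(d:ℝ)) := by
    rw [← Finset.sum_sub_distrib]
    apply Finset.sum_congr rfl
    intro d _
    ring
  rw [hsub]
  have hperd : ∀ d ∈ n.divisors,
      |((ArithmeticFunction.moebius d : ℤ):ℝ) *
        ((∑ l ∈ (range (M+1)).filter (fun l => d ∣ (l + s)), BPCS.pb M α l) - 1/(d:ℝ))|
      ≤ 4 / Real.sqrt ((M:ℝ)*α*(1-α)) := by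
    intro d hd
    have hd0 : 0 < d := Nat.pos_of_mem_divisors hd
    rw [abs_mul]
    have hμ : |((ArithmeticFunction.moebius d : ℤ):ℝ)| ≤ 1 := by
      have := ArithmeticFunction.abs_moebius_le_one (n := d)
      exact_mod_cast this
    have hper := BPCS.per_d M hM hα hα1 s hd0
    calc |((ArithmeticFunction.moebius d : ℤ):ℝ)| *
          |(∑ l ∈ (range (M+1)).filter (fun l => d ∣ (l + s)), BPCS.pb M α l) - 1/(d:ℝ)|
        ≤ 1 * (4 / Real.sqrt ((M:ℝ)*α*(1-α))) := by
          apply mul_le_mul hμ hper (abs_nonneg _) zero_le_one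
      _ = 4 / Real.sqrt ((M:ℝ)*α*(1-α)) := one_mul _
  calc |∑ d ∈ n.divisors, ((ArithmeticFunction.moebius d : ℤ):ℝ) *
        ((∑ l ∈ (range (M+1)).filter (fun l => d ∣ (l + s)), BPCS.pb M α l) - 1/(d:ℝ))|
      ≤ ∑ d ∈ n.divisors, |((ArithmeticFunction.moebius d : ℤ):ℝ) *
        ((∑ l ∈ (range (M+1)).filter (fun l => d ∣ (l + s)), BPCS.pb M α l) - 1/(d:ℝ))| :=
        Finset.abs_sum_le_sum_abs _ _
    _ ≤ ∑ _d ∈ n.divisors, 4 / Real.sqrt ((M:ℝ)*α*(1-α)) :=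
        Finset.sum_le_sum hperd
    _ = (n.divisors.card : ℝ) * (4 / Real.sqrt ((M:ℝ)*α*(1-α))) := by
        rw [Finset.sum_const, nsmul_eq_mul]
    _ = 4 * (n.divisors.card : ℝ) / (Real.sqrt (α * (1 - α)) * Real.sqrt M) := by
        rw [show (M:ℝ)*α*(1-α) = (M:ℝ)*(α*(1-α)) by ring,
          Real.sqrt_mul (Nat.cast_nonneg M)]
        field_simp
end

section
/- For fixed integers a₀,b₀ ≥ 1 there is a constant C > 0 (depending only on a₀,b₀) such that for every α ∈ (0,1) and every integer n ≥ 1: |Σ_{0 ≤ l ≤ n, gcd(a₀+l, a₀+b₀+n) = 1} C(n,l)·α^l·(1−α)^{n−l} − Σ_{d | n+a₀+b₀} μ(d)/d| ≤ C/(√(α(1−α))·n^{1/4}). (The left sum equals E(I(Z_{α,n})), the probability that the α-random walk started at (a₀,b₀) is at a visible point at time n.) -/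
open Finset

section AuxLemmas
open Real


lemma pow4_le_41 : ∀ e : ℕ, (e+1)^4 ≤ 41 * 2^e := by
  intro e
  induction e with
  | zero => norm_num
  | succ e ih =>
    rcases le_or_gt e 4 with h | h
    · interval_cases e <;> norm_num
    · have h25 : 25 ≤ e * e := Nat.mul_le_mul h h
      have h2 : (e+2)^4 ≤ 2 * (e+1)^4 := by nlinarith
      calc (e+1+1)^4 ≤ 2 * (e+1)^4 := h2
        _ ≤ 2 * (41 * 2^e) := by omega
        _ = 41 * 2^(e+1) := by ring

lemma pow4_le_16pow : ∀ e : ℕ, 1 ≤ e → (e+1)^4 ≤ 16^e := by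
  intro e
  induction e with
  | zero => omega
  | succ e ih =>
    intro _
    rcases Nat.eq_zero_or_pos e with h | h
    · subst h; norm_num
    · have h1 : (e+1+1)^4 ≤ (2*(e+1))^4 := Nat.pow_le_pow_left (by omega) 4
      have h2 : (2*(e+1))^4 = 16 * (e+1)^4 := by ring
      have := ih h
      calc (e+1+1)^4 ≤ 16 * (e+1)^4 := by omega
        _ ≤ 16 * 16^e := by omega
        _ = 16^(e+1) := by ring

lemma tau4_le (m : ℕ) (hm : m ≠ 0) : (#m.divisors) ^ 4 ≤ 41^6 * m := by
  have hmprod : ∏ p ∈ m.primeFactors, p ^ m.factorization p = m := by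
    rw [← Nat.prod_factorization_eq_prod_primeFactors (f := fun p k => p ^ k)]
    exact Nat.factorization_prod_pow_eq_self hm
  rw [Nat.card_divisors hm, ← Finset.prod_pow]
  have key : ∀ p ∈ m.primeFactors,
      (m.factorization p + 1)^4 ≤ (if p < 16 then 41 else 1) * p ^ m.factorization p := by
    intro p hp
    obtain ⟨hprime, hdvd, -⟩ := Nat.mem_primeFactors.mp hp
    have hp2 : 2 ≤ p := hprime.two_le
    have he : 1 ≤ m.factorization p := by
      rw [← Nat.Prime.dvd_iff_one_le_factorization hprime hm]; exact hdvd
    by_cases h16 : p < 16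
    · simp only [h16, if_true]
      calc (m.factorization p + 1)^4 ≤ 41 * 2 ^ m.factorization p := pow4_le_41 _
        _ ≤ 41 * p ^ m.factorization p :=
          Nat.mul_le_mul_left _ (Nat.pow_le_pow_left hp2 _)
    · simp only [h16, if_false, one_mul]
      calc (m.factorization p + 1)^4 ≤ 16 ^ m.factorization p := pow4_le_16pow _ he
        _ ≤ p ^ m.factorization p := Nat.pow_le_pow_left (by omega) _
  calc (∏ p ∈ m.primeFactors, (m.factorization p + 1)^4)
      ≤ ∏ p ∈ m.primeFactors, (if p < 16 then 41 else 1) * p ^ m.factorization p :=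
        Finset.prod_le_prod' key
    _ = (∏ p ∈ m.primeFactors, (if p < 16 then 41 else 1)) * m := by
        rw [Finset.prod_mul_distrib, hmprod]
    _ ≤ 41^6 * m := by
        apply Nat.mul_le_mul_right
        calc (∏ p ∈ m.primeFactors, (if p < 16 then 41 else 1 : ℕ))
            = 41 ^ #(m.primeFactors.filter (· < 16)) := by
              rw [Finset.prod_ite, Finset.prod_const, Finset.prod_const, one_pow, mul_one]
          _ ≤ 41 ^ 6 := by
              apply Nat.pow_le_pow_right (by norm_num)
              have hsub : m.primeFactors.filter (· < 16) ⊆ (range 16).filter Nat.Prime := by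
                intro p hp
                simp only [Finset.mem_filter, Nat.mem_primeFactors, Finset.mem_range] at *
                exact ⟨hp.2, hp.1.1⟩
              have := Finset.card_le_card hsub
              have h6 : #((range 16).filter Nat.Prime) = 6 := by decide
              omega


lemma abs_tele (c : ℕ → ℝ) : ∀ b a : ℕ, a ≤ b →
    |c a - c b| ≤ ∑ k ∈ Ico a b, |c k - c (k+1)| := by
  intro b
  induction b with
  | zero => intro a ha; simp [Nat.le_zero.mp ha]
  | succ b ih =>
    intro a ha
    rcases Nat.lt_or_ge a (b+1) with h | h
    · have hab : a ≤ b := by omega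
      have := ih a hab
      have h2 : |c a - c (b+1)| ≤ |c a - c b| + |c b - c (b+1)| := by
        have := abs_sub_le (c a) (c b) (c (b+1)); linarith [this]
      rw [Finset.sum_Ico_succ_top hab]
      linarith
    · have : a = b+1 := by omega
      simp [this]

lemma residue_sum_bound (c : ℕ → ℝ) (N d r : ℕ) (hd : 1 ≤ d) (hr : r < d)
    (hN : 1 ≤ N) (hc0 : ∀ k, N ≤ k → c k = 0) :
    |(∑ l ∈ (range N).filter (fun l => l % d = r), c l) - (∑ l ∈ range N, c l) / d|
      ≤ ∑ k ∈ range N, |c k - c (k+1)| := by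
  set W := ∑ k ∈ range N, |c k - c (k+1)| with hW
  set A : ℕ → ℝ := fun j => ∑ i ∈ range N, c (j + i*d) with hA
  have hWext : ∀ M, N ≤ M → ∑ k ∈ range M, |c k - c (k+1)| = W := by
    intro M hM
    rw [← Finset.sum_range_add_sum_Ico _ hM]
    have : ∑ k ∈ Ico N M, |c k - c (k+1)| = 0 := by
      apply Finset.sum_eq_zero
      intro k hk
      rw [Finset.mem_Ico] at hk
      rw [hc0 k hk.1, hc0 (k+1) (by omega)]
      simp
    rw [this, add_zero]
  have haux : ∀ s t : ℕ, s ≤ t → t ≤ d → |A s - A t| ≤ W := by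
    intro s t hst htd
    have h1 : A s - A t = ∑ i ∈ range N, (c (s + i*d) - c (t + i*d)) := by
      rw [hA]; rw [← Finset.sum_sub_distrib]
    rw [h1]
    calc |∑ i ∈ range N, (c (s + i*d) - c (t + i*d))|
        ≤ ∑ i ∈ range N, |c (s + i*d) - c (t + i*d)| := Finset.abs_sum_le_sum_abs _ _
      _ ≤ ∑ i ∈ range N, ∑ k ∈ Ico (s + i*d) (t + i*d), |c k - c (k+1)| := by
          apply Finset.sum_le_sum
          intro i _
          exact abs_tele c (t + i*d) (s + i*d) (by omega)
      _ = ∑ k ∈ (range N).biUnion (fun i => Ico (s + i*d) (t + i*d)), |c k - c (k+1)| := by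
          rw [Finset.sum_biUnion]
          intro i hi j hj hij
          apply Finset.disjoint_left.mpr
          intro k hk hk'
          rw [Finset.mem_Ico] at hk hk'
          rcases Nat.lt_or_ge i j with h | h
          · have h1 : t + i*d ≤ j*d := by
              have : (i+1)*d ≤ j*d := Nat.mul_le_mul_right d (by omega)
              have e : (i+1)*d = i*d + d := by ring
              omega
            omega
          · have hji : j < i := by omega
            have h1 : t + j*d ≤ i*d := by
              have : (j+1)*d ≤ i*d := Nat.mul_le_mul_right d (by omega)
              have e : (j+1)*d = j*d + d := by ring
              omega
            omega
      _ ≤ ∑ k ∈ range (N*d), |c k - c (k+1)| := by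
          apply Finset.sum_le_sum_of_subset_of_nonneg
          · intro k hk
            rw [Finset.mem_biUnion] at hk
            obtain ⟨i, hi, hk⟩ := hk
            rw [Finset.mem_range] at hi ⊢
            rw [Finset.mem_Ico] at hk
            have : (i+1)*d ≤ N*d := Nat.mul_le_mul_right d (by omega)
            have e : (i+1)*d = i*d + d := by ring
            omega
          · intro k _ _; exact abs_nonneg _
      _ = W := hWext _ (by nlinarith)
  have hAst : ∀ s t : ℕ, s ≤ d → t ≤ d → |A s - A t| ≤ W := by
    intro s t hs ht
    rcases le_total s t with h | h
    · exact haux s t h ht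
    · rw [abs_sub_comm]; exact haux t s h hs
  have hT : ∑ j ∈ range d, A j = ∑ l ∈ range N, c l := by
    rw [hA]
    rw [← Finset.sum_product']
    rw [Finset.sum_nbij' (i := fun p => p.1 + p.2 * d) (j := fun k => (k % d, k / d))
      (s := range d ×ˢ range N) (t := range (d * N))]
    · symm
      apply Finset.sum_subset
      · intro k hk; rw [Finset.mem_range] at *
        calc k < N := hk
          _ ≤ d * N := Nat.le_mul_of_pos_left N (by omega)
      · intro k _ hk; rw [Finset.mem_range] at hk; exact hc0 k (by omega)
    · intro p hp
      simp only [Finset.mem_product, Finset.mem_range] at hp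
      rw [Finset.mem_range]
      have : (p.2+1)*d ≤ N*d := Nat.mul_le_mul_right d (by omega)
      have e : (p.2+1)*d = p.2*d + d := by ring
      have e2 : N*d = d*N := mul_comm _ _
      omega
    · intro k hk
      rw [Finset.mem_range] at hk
      simp only [Finset.mem_product, Finset.mem_range]
      refine ⟨Nat.mod_lt _ (by omega), Nat.div_lt_of_lt_mul ?_⟩
      omega
    · intro p hp
      simp only [Finset.mem_product, Finset.mem_range] at hp
      have h1 : (p.1 + p.2 * d) % d = p.1 := by
        rw [Nat.add_mul_mod_self_right]; exact Nat.mod_eq_of_lt hp.1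
      have h2 : (p.1 + p.2 * d) / d = p.2 := by
        rw [Nat.add_mul_div_right _ _ (by omega : 0 < d), Nat.div_eq_of_lt hp.1]; omega
      simp only [h1, h2]
    · intro k hk
      simp only
      exact Nat.mod_add_div' k d
    · intro p hp; rfl
  have hTd : ∑ l ∈ (range N).filter (fun l => l % d = r), c l = A r := by
    have hext : ∑ l ∈ (range N).filter (fun l => l % d = r), c l
        = ∑ l ∈ (range (d*N)).filter (fun l => l % d = r), c l := by
      apply Finset.sum_subset
      · intro l hl
        simp only [Finset.mem_filter, Finset.mem_range] at *
        exact ⟨lt_of_lt_of_le hl.1 (Nat.le_mul_of_pos_left N (by omega)), hl.2⟩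
      · intro l hl hl2
        simp only [Finset.mem_filter, Finset.mem_range] at hl hl2
        by_cases h : N ≤ l
        · exact hc0 l h
        · exact absurd ⟨by omega, hl.2⟩ hl2
    rw [hext, hA]
    rw [Finset.sum_nbij' (i := fun l => l / d) (j := fun i => r + i * d)
      (t := range N)]
    · intro l hl
      simp only [Finset.mem_filter, Finset.mem_range] at hl
      rw [Finset.mem_range]
      exact Nat.div_lt_of_lt_mul (by omega)
    · intro i hi
      rw [Finset.mem_range] at hi
      simp only [Finset.mem_filter, Finset.mem_range]
      constructor
      · have : (i+1)*d ≤ N*d := Nat.mul_le_mul_right d (by omega)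
        have e : (i+1)*d = i*d + d := by ring
        have e2 : N*d = d*N := mul_comm _ _
        omega
      · rw [Nat.add_mul_mod_self_right]; exact Nat.mod_eq_of_lt hr
    · intro l hl
      simp only [Finset.mem_filter, Finset.mem_range] at hl
      have h := Nat.mod_add_div' l d
      rw [hl.2] at h
      exact h
    · intro i hi
      rw [Nat.add_mul_div_right _ _ (by omega : 0 < d), Nat.div_eq_of_lt hr]; omega
    · intro l hl
      simp only [Finset.mem_filter, Finset.mem_range] at hl
      have h := Nat.mod_add_div' l d
      rw [hl.2] at h
      rw [h]
  -- final assembly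
  have hd0 : (0:ℝ) < (d:ℝ) := by exact_mod_cast hd
  rw [hTd, ← hT]
  have heq : A r - (∑ j ∈ range d, A j) / d = (∑ j ∈ range d, (A r - A j)) / d := by
    rw [Finset.sum_sub_distrib, Finset.sum_const, Finset.card_range]
    field_simp
    ring
  rw [heq, abs_div, abs_of_pos hd0]
  rw [div_le_iff₀ hd0]
  calc |∑ j ∈ range d, (A r - A j)| ≤ ∑ j ∈ range d, |A r - A j| :=
        Finset.abs_sum_le_sum_abs _ _
    _ ≤ ∑ _j ∈ range d, W := by
        apply Finset.sum_le_sum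
        intro j hj
        rw [Finset.mem_range] at hj
        exact hAst r j hr.le hj.le
    _ = d * W := by rw [Finset.sum_const, Finset.card_range]; ring
    _ = W * d := mul_comm _ _


lemma stirling_low (j : ℕ) (hj : 1 ≤ j) :
    Real.sqrt π * (Real.sqrt (2*j) * (j / Real.exp 1)^j) ≤ ((j.factorial : ℕ) : ℝ) := by
  obtain ⟨i, rfl⟩ := Nat.exists_eq_add_of_le hj
  have h1 : Real.sqrt π ≤ Stirling.stirlingSeq (1 + i) := by
    have := Stirling.stirlingSeq'_antitone.le_of_tendsto
      ((Stirling.tendsto_stirlingSeq_sqrt_pi).comp (Filter.tendsto_add_atTop_nat 1)) i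
    simpa [Function.comp, Nat.succ_eq_add_one, Nat.add_comm] using this
  have hpos : 0 < Real.sqrt (2*(1+i : ℕ)) * ((1+i : ℕ) / Real.exp 1)^(1+i) := by
    apply mul_pos
    · apply Real.sqrt_pos.mpr; positivity
    · apply pow_pos; positivity
  have := Stirling.stirlingSeq (1+i)
  rw [Stirling.stirlingSeq] at h1
  calc Real.sqrt π * (Real.sqrt (2*(1+i:ℕ)) * ((1+i:ℕ) / Real.exp 1)^(1+i))
      ≤ (((1+i).factorial : ℝ) / (Real.sqrt (2*(1+i:ℕ)) * ((1+i:ℕ)/Real.exp 1)^(1+i))) *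
        (Real.sqrt (2*(1+i:ℕ)) * ((1+i:ℕ) / Real.exp 1)^(1+i)) := by
        apply mul_le_mul_of_nonneg_right _ hpos.le
        exact_mod_cast h1
    _ = ((1+i).factorial : ℝ) := by field_simp

lemma stirling_high (j : ℕ) (hj : 1 ≤ j) :
    ((j.factorial : ℕ) : ℝ) ≤ (Real.exp 1 / Real.sqrt 2) * (Real.sqrt (2*j) * (j / Real.exp 1)^j) := by
  obtain ⟨i, rfl⟩ := Nat.exists_eq_add_of_le hj
  have h1 : Stirling.stirlingSeq (1 + i) ≤ Stirling.stirlingSeq 1 := by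
    have := Stirling.stirlingSeq'_antitone (Nat.zero_le i)
    simpa [Function.comp, Nat.add_comm] using this
  rw [Stirling.stirlingSeq_one] at h1
  have hpos : 0 < Real.sqrt (2*(1+i : ℕ)) * ((1+i : ℕ) / Real.exp 1)^(1+i) := by
    apply mul_pos
    · apply Real.sqrt_pos.mpr; positivity
    · apply pow_pos; positivity
  rw [Stirling.stirlingSeq, div_le_iff₀ hpos] at h1
  exact h1

lemma entropy_ineq (n k : ℕ) (α : ℝ) (h0 : 0 < α) (h1 : α < 1) (hk1 : 1 ≤ k) (hkn : k < n) :
    (n:ℝ)^n * α^k * (1-α)^(n-k) ≤ (k:ℝ)^k * ((n-k : ℕ):ℝ)^(n-k) := by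
  set M : ℕ := n - k with hM
  have hMn : k + M = n := by omega
  have hM1 : 1 ≤ M := by omega
  have hn0 : (0:ℝ) < n := by exact_mod_cast Nat.lt_of_lt_of_le hkn (le_refl n) |> Nat.pos_of_ne_zero ∘ fun _ => by omega
  have hk0 : (0:ℝ) < k := by exact_mod_cast hk1
  have hM0 : (0:ℝ) < (M:ℝ) := by exact_mod_cast hM1
  have hq0 : 0 < 1 - α := by linarith
  -- weighted AM-GM
  have hw : (k:ℝ)/n + (M:ℝ)/n = 1 := by
    field_simp
    exact_mod_cast hMn
  have key := Real.geom_mean_le_arith_mean2_weighted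
    (w₁ := (k:ℝ)/n) (w₂ := (M:ℝ)/n) (p₁ := α*n/k) (p₂ := (1-α)*n/M)
    (by positivity) (by positivity) (by positivity) (by positivity) hw
  have harith : (k:ℝ)/n * (α*n/k) + (M:ℝ)/n * ((1-α)*n/M) = 1 := by
    field_simp
    ring
  rw [harith] at key
  -- raise to the n-th power
  have key2 : (α*(n:ℝ)/k)^k * ((1-α)*n/M)^M ≤ 1 := by
    have hnn : ((α*(n:ℝ)/k) ^ ((k:ℝ)/n) * ((1-α)*n/M) ^ ((M:ℝ)/n))^(n:ℕ) ≤ 1^(n:ℕ) := by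
      apply pow_le_pow_left₀ _ key
      positivity
    rw [one_pow] at hnn
    rw [mul_pow, ← Real.rpow_natCast ((α*(n:ℝ)/k) ^ ((k:ℝ)/n)) n,
      ← Real.rpow_natCast (((1-α)*(n:ℝ)/M) ^ ((M:ℝ)/n)) n,
      ← Real.rpow_mul (by positivity), ← Real.rpow_mul (by positivity),
      div_mul_cancel₀ _ hn0.ne', div_mul_cancel₀ _ hn0.ne',
      Real.rpow_natCast, Real.rpow_natCast] at hnn
    exact hnn
  -- expand
  have hexp : (α*(n:ℝ)/k)^k * ((1-α)*n/M)^M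
      = ((n:ℝ)^n * α^k * (1-α)^M) / ((k:ℝ)^k * (M:ℝ)^M) := by
    have hpow : (n:ℝ)^k * (n:ℝ)^M = (n:ℝ)^n := by rw [← pow_add, hMn]
    rw [div_pow, div_pow, mul_pow, mul_pow, div_mul_div_comm]
    congr 1
    rw [← hpow]
    ring
  rw [hexp] at key2
  rw [div_le_one (by positivity)] at key2
  calc (n:ℝ)^n * α^k * (1-α)^(n-k) = (n:ℝ)^n * α^k * (1-α)^M := by rw [hM]
    _ ≤ (k:ℝ)^k * (M:ℝ)^M := key2
    _ = (k:ℝ)^k * ((n-k:ℕ):ℝ)^(n-k) := by rw [hM]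


lemma binom_term_le (n k : ℕ) (α : ℝ) (h0 : 0 < α) (h1 : α < 1) (hk1 : 1 ≤ k) (hkn : k < n) :
    (n.choose k : ℝ) * (α^k * (1-α)^(n-k)) ≤
      Real.exp 1 / (2*π) * (Real.sqrt n / Real.sqrt ((k:ℝ) * ((n-k : ℕ):ℝ))) := by
  set e := Real.exp 1 with he
  set M : ℕ := n - k with hMdef
  have hMn : k + M = n := by omega
  have hM1 : 1 ≤ M := by omega
  have hn1 : 1 ≤ n := by omega
  have hk0 : (0:ℝ) < k := by exact_mod_cast hk1
  have hM0 : (0:ℝ) < (M:ℝ) := by exact_mod_cast hM1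
  have hn0 : (0:ℝ) < n := by exact_mod_cast hn1
  have he0 : (0:ℝ) < e := Real.exp_pos 1
  have hq0 : (0:ℝ) < 1 - α := by linarith
  have hpi0 : (0:ℝ) < π := Real.pi_pos
  have hkfac : Real.sqrt π * (Real.sqrt (2*k) * ((k:ℝ) / e)^k) ≤ ((k.factorial : ℕ) : ℝ) :=
    stirling_low k hk1
  have hMfac : Real.sqrt π * (Real.sqrt (2*M) * ((M:ℝ) / e)^M) ≤ ((M.factorial : ℕ) : ℝ) :=
    stirling_low M hM1
  have hnfac : ((n.factorial : ℕ) : ℝ) ≤ (e / Real.sqrt 2) * (Real.sqrt (2*n) * ((n:ℝ)/e)^n) :=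
    stirling_high n hn1
  have hkd : (0:ℝ) < Real.sqrt π * (Real.sqrt (2*k) * ((k:ℝ) / e)^k) := by positivity
  have hMd : (0:ℝ) < Real.sqrt π * (Real.sqrt (2*M) * ((M:ℝ) / e)^M) := by positivity
  have hchoose : (n.choose k : ℝ) ≤
      ((e / Real.sqrt 2) * (Real.sqrt (2*n) * ((n:ℝ)/e)^n)) /
      ((Real.sqrt π * (Real.sqrt (2*k) * ((k:ℝ) / e)^k)) *
       (Real.sqrt π * (Real.sqrt (2*M) * ((M:ℝ) / e)^M))) := by
    rw [Nat.cast_choose ℝ hkn.le]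
    have hd2 : (0:ℝ) < ((k.factorial:ℕ):ℝ) * (((n-k).factorial:ℕ):ℝ) := by positivity
    apply div_le_div₀ (by positivity) hnfac (by positivity)
    rw [← hMdef]
    exact mul_le_mul hkfac hMfac hMd.le (by positivity)
  have hmain : (n.choose k : ℝ) * (α^k * (1-α)^(n-k)) ≤
      (((e / Real.sqrt 2) * (Real.sqrt (2*n) * ((n:ℝ)/e)^n)) /
      ((Real.sqrt π * (Real.sqrt (2*k) * ((k:ℝ) / e)^k)) *
       (Real.sqrt π * (Real.sqrt (2*M) * ((M:ℝ) / e)^M)))) * (α^k * (1-α)^(n-k)) := by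
    apply mul_le_mul_of_nonneg_right hchoose (by positivity)
  have hent : (n:ℝ)^n * α^k * (1-α)^(n-k) ≤ (k:ℝ)^k * (M:ℝ)^M := by
    have := entropy_ineq n k α h0 h1 hk1 hkn
    rw [← hMdef] at this
    exact this
  have hfactor :
      (((e / Real.sqrt 2) * (Real.sqrt (2*n) * ((n:ℝ)/e)^n)) /
      ((Real.sqrt π * (Real.sqrt (2*k) * ((k:ℝ) / e)^k)) *
       (Real.sqrt π * (Real.sqrt (2*M) * ((M:ℝ) / e)^M)))) * (α^k * (1-α)^(n-k))
      = (e / (2*π) * (Real.sqrt n / Real.sqrt ((k:ℝ) * (M:ℝ)))) *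
        (((n:ℝ)^n * α^k * (1-α)^(n-k)) / ((k:ℝ)^k * (M:ℝ)^M)) := by
    have s2n : Real.sqrt (2*(n:ℝ)) = Real.sqrt 2 * Real.sqrt n := Real.sqrt_mul (by norm_num) _
    have s2k : Real.sqrt (2*(k:ℝ)) = Real.sqrt 2 * Real.sqrt k := Real.sqrt_mul (by norm_num) _
    have s2M : Real.sqrt (2*(M:ℝ)) = Real.sqrt 2 * Real.sqrt M := Real.sqrt_mul (by norm_num) _
    have skM : Real.sqrt ((k:ℝ) * (M:ℝ)) = Real.sqrt k * Real.sqrt M :=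
      Real.sqrt_mul hk0.le _
    have spipi : Real.sqrt π * Real.sqrt π = π := Real.mul_self_sqrt hpi0.le
    have s22 : Real.sqrt 2 * Real.sqrt 2 = 2 := Real.mul_self_sqrt (by norm_num)
    have hdivn : ((n:ℝ)/e)^n = (n:ℝ)^n / e^n := div_pow _ _ _
    have hdivk : ((k:ℝ)/e)^k = (k:ℝ)^k / e^k := div_pow _ _ _
    have hdivM : ((M:ℝ)/e)^M = (M:ℝ)^M / e^M := div_pow _ _ _
    have hee : e^k * e^M = e^n := by rw [← pow_add, hMn]
    have hnk : n - k = M := hMdef.symm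
    rw [hnk, s2n, s2k, s2M, skM, hdivn, hdivk, hdivM]
    have h1' : Real.sqrt 2 ≠ 0 := by positivity
    have h2' : Real.sqrt π ≠ 0 := by positivity
    have h3' : Real.sqrt (k:ℝ) ≠ 0 := by positivity
    have h4' : Real.sqrt (M:ℝ) ≠ 0 := by positivity
    have h5' : Real.sqrt (n:ℝ) ≠ 0 := by positivity
    have h6' : e^k ≠ 0 := by positivity
    have h7' : e^M ≠ 0 := by positivity
    have h8' : (k:ℝ)^k ≠ 0 := by positivity
    have h9' : (M:ℝ)^M ≠ 0 := by positivity
    field_simp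
    ring_nf
    rw [Real.sq_sqrt (by norm_num), Real.sq_sqrt hpi0.le, ← hee]
    ring
  rw [hfactor] at hmain
  calc (n.choose k : ℝ) * (α^k * (1-α)^(n-k))
      ≤ (e / (2*π) * (Real.sqrt n / Real.sqrt ((k:ℝ) * (M:ℝ)))) *
        (((n:ℝ)^n * α^k * (1-α)^(n-k)) / ((k:ℝ)^k * (M:ℝ)^M)) := hmain
    _ ≤ (e / (2*π) * (Real.sqrt n / Real.sqrt ((k:ℝ) * (M:ℝ)))) * 1 := by
        apply mul_le_mul_of_nonneg_left _ (by positivity)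
        rw [div_le_one (by positivity)]
        exact hent
    _ = e / (2*π) * (Real.sqrt n / Real.sqrt ((k:ℝ) * ((n-k:ℕ):ℝ))) := by
        rw [mul_one, ← hMdef]


section
variable (n : ℕ) (α : ℝ)

noncomputable def bb (n : ℕ) (α : ℝ) (k : ℕ) : ℝ :=
  (n.choose k : ℝ) * α ^ k * (1 - α) ^ (n - k)

lemma bb_nonneg (h0 : 0 < α) (h1 : α < 1) (k : ℕ) : 0 ≤ bb n α k := by
  unfold bb
  have : 0 ≤ 1 - α := by linarith
  positivity

lemma bb_zero_of_gt (k : ℕ) (hk : n < k) : bb n α k = 0 := by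
  unfold bb
  rw [Nat.choose_eq_zero_of_lt hk]
  simp

lemma bb_sum_one (h0 : 0 < α) (h1 : α < 1) :
    ∑ k ∈ range (n+1), bb n α k = 1 := by
  have h := add_pow α (1-α) n
  have : (α + (1-α)) = 1 := by ring
  rw [this, one_pow] at h
  rw [h]
  apply Finset.sum_congr rfl
  intro k _
  unfold bb
  ring

lemma bb_step (k : ℕ) (hk : k < n) :
    bb n α (k+1) * (((k:ℝ)+1) * (1-α)) = bb n α k * (α * ((n:ℝ) - k)) := by
  unfold bb
  have hc : ((n.choose (k+1) * (k+1) : ℕ) : ℝ) = ((n.choose k * (n - k) : ℕ) : ℝ) := by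
    exact_mod_cast congrArg (Nat.cast (R := ℝ)) (Nat.choose_succ_right_eq n k)
  push_cast at hc
  have hnk : ((n - k : ℕ) : ℝ) = (n:ℝ) - k := by
    rw [Nat.cast_sub hk.le]
  rw [hnk] at hc
  have hq : (1-α)^(n-(k+1)) * (1-α) = (1-α)^(n-k) := by
    rw [← pow_succ]
    congr 1
    omega
  calc (n.choose (k+1) : ℝ) * α^(k+1) * (1-α)^(n-(k+1)) * (((k:ℝ)+1) * (1-α))
      = ((n.choose (k+1):ℝ) * ((k:ℝ)+1)) * α^(k+1) * ((1-α)^(n-(k+1)) * (1-α)) := by ring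
    _ = ((n.choose k : ℝ) * ((n:ℝ) - k)) * α^(k+1) * (1-α)^(n-k) := by rw [hc, hq]
    _ = (n.choose k : ℝ) * α^k * (1-α)^(n-k) * (α * ((n:ℝ) - k)) := by
        rw [pow_succ]; ring
end

section
variable (n : ℕ) (α : ℝ)

lemma bb_mono_up (h0 : 0 < α) (h1 : α < 1) (k : ℕ) (hk : (k:ℝ)+1 ≤ α*((n:ℝ)+1)) :
    bb n α k ≤ bb n α (k+1) := by
  have hkn : k < n := by
    have hn1 : α*((n:ℝ)+1) < (n:ℝ)+1 := by nlinarith [Nat.cast_nonneg (α := ℝ) n]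
    have h5 : (k:ℝ) < (n:ℝ) := by linarith [lt_of_le_of_lt hk hn1]
    exact_mod_cast h5
  have hstep := bb_step n α k hkn
  have hq : 0 < 1 - α := by linarith
  have hY : (0:ℝ) < ((k:ℝ)+1) * (1-α) := by positivity
  have hXY : ((k:ℝ)+1) * (1-α) ≤ α * ((n:ℝ) - k) := by nlinarith
  have hb := bb_nonneg n α h0 h1 k
  have h2 : bb n α k * (((k:ℝ)+1) * (1-α)) ≤ bb n α k * (α * ((n:ℝ) - k)) :=
    mul_le_mul_of_nonneg_left hXY hb
  rw [← hstep] at h2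
  exact le_of_mul_le_mul_right h2 hY

lemma bb_mono_down (h0 : 0 < α) (h1 : α < 1) (k : ℕ) (hk : α*((n:ℝ)+1) ≤ (k:ℝ)+1 ∨ n ≤ k) :
    bb n α (k+1) ≤ bb n α k := by
  rcases Nat.lt_or_ge k n with hkn | hkn
  · rcases hk with hk | hk
    · have hstep := bb_step n α k hkn
      have hq : 0 < 1 - α := by linarith
      have hY : (0:ℝ) < ((k:ℝ)+1) * (1-α) := by positivity
      have hXY : α * ((n:ℝ) - k) ≤ ((k:ℝ)+1) * (1-α) := by nlinarith
      have hb := bb_nonneg n α h0 h1 k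
      have h2 : bb n α k * (α * ((n:ℝ) - k)) ≤ bb n α k * (((k:ℝ)+1) * (1-α)) :=
        mul_le_mul_of_nonneg_left hXY hb
      rw [← hstep] at h2
      exact le_of_mul_le_mul_right h2 hY
    · omega
  · rw [bb_zero_of_gt n α (k+1) (by omega)]
    exact bb_nonneg n α h0 h1 k

lemma bb_variation (hn : 1 ≤ n) (h0 : 0 < α) (h1 : α < 1) :
    ∑ k ∈ range (n+1), |bb n α k - bb n α (k+1)|
      ≤ 2 * bb n α (min n ⌊α*((n:ℝ)+1)⌋₊) := by
  set ks := min n ⌊α*((n:ℝ)+1)⌋₊ with hks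
  have hksn : ks ≤ n := min_le_left _ _
  have hup : ∀ k < ks, bb n α k ≤ bb n α (k+1) := by
    intro k hk
    apply bb_mono_up n α h0 h1
    have h2 : k+1 ≤ ⌊α*((n:ℝ)+1)⌋₊ := by omega
    have h3 : ((k:ℝ)+1) ≤ (⌊α*((n:ℝ)+1)⌋₊ : ℝ) := by exact_mod_cast h2
    exact h3.trans (Nat.floor_le (by positivity))
  have hdown : ∀ k, ks ≤ k → bb n α (k+1) ≤ bb n α k := by
    intro k hk
    apply bb_mono_down n α h0 h1
    rcases Nat.lt_or_ge n (⌊α*((n:ℝ)+1)⌋₊) with h | h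
    · right; omega
    · left
      have h2 : ⌊α*((n:ℝ)+1)⌋₊ ≤ k := by omega
      have h3 := Nat.lt_floor_add_one (α*((n:ℝ)+1))
      have h4 : ((⌊α*((n:ℝ)+1)⌋₊:ℝ)) ≤ k := by exact_mod_cast h2
      linarith
  have hsplit : ∑ k ∈ range (n+1), |bb n α k - bb n α (k+1)|
      = ∑ k ∈ range ks, |bb n α k - bb n α (k+1)|
        + ∑ k ∈ Ico ks (n+1), |bb n α k - bb n α (k+1)| := by
    rw [Finset.range_eq_Ico, ← Finset.sum_Ico_consecutive _ (Nat.zero_le ks) (by omega),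
      ← Finset.range_eq_Ico]
  rw [hsplit]
  have h1' : ∑ k ∈ range ks, |bb n α k - bb n α (k+1)|
      = ∑ k ∈ range ks, (bb n α (k+1) - bb n α k) := by
    apply Finset.sum_congr rfl
    intro k hk
    rw [Finset.mem_range] at hk
    rw [abs_sub_comm, abs_of_nonneg (by linarith [hup k hk])]
  have h2' : ∑ k ∈ Ico ks (n+1), |bb n α k - bb n α (k+1)|
      = ∑ k ∈ Ico ks (n+1), (bb n α k - bb n α (k+1)) := by
    apply Finset.sum_congr rfl
    intro k hk
    rw [Finset.mem_Ico] at hk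
    rw [abs_of_nonneg (by linarith [hdown k hk.1])]
  rw [h1', h2']
  have htel1 : ∑ k ∈ range ks, (bb n α (k+1) - bb n α k) = bb n α ks - bb n α 0 :=
    Finset.sum_range_sub (bb n α) ks
  have htel2 : ∑ k ∈ Ico ks (n+1), (bb n α k - bb n α (k+1))
      = bb n α ks - bb n α (n+1) := by
    have e1 : ∀ m : ℕ, ∑ k ∈ range m, (bb n α k - bb n α (k+1))
        = bb n α 0 - bb n α m := by
      intro m
      have := Finset.sum_range_sub (fun k => - bb n α k) m
      simp only [neg_sub_neg] at this
      calc ∑ k ∈ range m, (bb n α k - bb n α (k+1))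
          = ∑ k ∈ range m, (- bb n α (k+1) - (- bb n α k)) := by
            apply Finset.sum_congr rfl; intro k _; ring
        _ = - bb n α m - (- bb n α 0) := Finset.sum_range_sub (fun k => - bb n α k) m
        _ = bb n α 0 - bb n α m := by ring
    have e2 : ∑ k ∈ Ico ks (n+1), (bb n α k - bb n α (k+1))
        = ∑ k ∈ range (n+1), (bb n α k - bb n α (k+1))
          - ∑ k ∈ range ks, (bb n α k - bb n α (k+1)) := by
      rw [Finset.range_eq_Ico, ← Finset.sum_Ico_consecutive _ (Nat.zero_le ks)
        (by omega : ks ≤ n+1), ← Finset.range_eq_Ico]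
      ring
    rw [e2, e1, e1]
    ring
  rw [htel1, htel2, bb_zero_of_gt n α (n+1) (by omega)]
  have hb0 := bb_nonneg n α h0 h1 0
  linarith

end

lemma sqrt_four : Real.sqrt 4 = 2 := by
  rw [show (4:ℝ) = 2^2 by norm_num, Real.sqrt_sq (by norm_num)]

lemma bb_mode_le (n : ℕ) (hn : 1 ≤ n) (α : ℝ) (h0 : 0 < α) (h1 : α < 1) :
    bb n α (min n ⌊α*((n:ℝ)+1)⌋₊) ≤ 2 / Real.sqrt ((n:ℝ) * (α*(1-α))) := by
  have hq : 0 < 1 - α := by linarith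
  have hn0 : (0:ℝ) < n := by exact_mod_cast hn
  have hX0 : 0 < (n:ℝ)*(α*(1-α)) := by positivity
  have hs0 : 0 < Real.sqrt ((n:ℝ)*(α*(1-α))) := Real.sqrt_pos.mpr hX0
  set ks := min n ⌊α*((n:ℝ)+1)⌋₊ with hks
  have hksn : ks ≤ n := min_le_left _ _
  rcases le_or_gt ((n:ℝ)*(α*(1-α))) 4 with hA | hB
  · -- trivial case
    have hb1 : bb n α ks ≤ 1 := by
      rw [← bb_sum_one n α h0 h1]
      apply Finset.single_le_sum (f := fun k => bb n α k)
      · intro k _; exact bb_nonneg n α h0 h1 k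
      · rw [Finset.mem_range]; omega
    have hs2 : Real.sqrt ((n:ℝ)*(α*(1-α))) ≤ 2 := by
      have := Real.sqrt_le_sqrt hA
      rwa [sqrt_four] at this
    calc bb n α ks ≤ 1 := hb1
      _ ≤ 2 / Real.sqrt ((n:ℝ)*(α*(1-α))) := by
          rw [le_div_iff₀ hs0]; linarith
  · -- Stirling case
    have hαn : 4 < α * n := by nlinarith
    have hqn : 4 < (1-α) * n := by nlinarith
    have hfl : ⌊α*((n:ℝ)+1)⌋₊ ≤ n := by
      have h2 : α*((n:ℝ)+1) < (n:ℝ)+1 := by nlinarith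
      have h3 : ⌊α*((n:ℝ)+1)⌋₊ < n+1 := by
        rw [Nat.floor_lt (by positivity)]
        push_cast
        exact h2
      omega
    have hkseq : ks = ⌊α*((n:ℝ)+1)⌋₊ := by omega
    have hksl : (3/4)*(α*n) < (ks:ℝ) := by
      rw [hkseq]
      have h2 : α*((n:ℝ)+1) - 1 < (⌊α*((n:ℝ)+1)⌋₊:ℝ) := Nat.sub_one_lt_floor _
      nlinarith
    have hksu : (ks:ℝ) ≤ α*((n:ℝ)+1) := by
      rw [hkseq]; exact Nat.floor_le (by positivity)
    have hnks : (3/4)*((1-α)*n) < (n:ℝ) - (ks:ℝ) := by nlinarith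
    have hks1 : 1 ≤ ks := by
      have : (1:ℝ) ≤ (ks:ℝ) := by nlinarith
      exact_mod_cast this
    have hkslt : ks < n := by
      have : (ks:ℝ) < (n:ℝ) := by nlinarith
      exact_mod_cast this
    have hbnd := binom_term_le n ks α h0 h1 hks1 hkslt
    have hcast : ((n - ks : ℕ):ℝ) = (n:ℝ) - ks := Nat.cast_sub hkslt.le
    have hprod : (9/16)*(((n:ℝ)*(α*(1-α)))*n) ≤ (ks:ℝ)*((n - ks:ℕ):ℝ) := by
      rw [hcast]
      nlinarith [mul_le_mul hksl.le hnks.le (by positivity : (0:ℝ) ≤ (3/4)*((1-α)*n))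
        (by positivity : (0:ℝ) ≤ (ks:ℝ))]
    have hsq : Real.sqrt ((9/16)*(((n:ℝ)*(α*(1-α)))*n))
        = (3/4)*(Real.sqrt ((n:ℝ)*(α*(1-α))) * Real.sqrt n) := by
      rw [show (9/16)*(((n:ℝ)*(α*(1-α)))*n) = ((3/4))^2*(((n:ℝ)*(α*(1-α)))*n) by ring,
        Real.sqrt_mul (by positivity), Real.sqrt_sq (by norm_num),
        Real.sqrt_mul hX0.le]
    have h2 : (3/4)*(Real.sqrt ((n:ℝ)*(α*(1-α))) * Real.sqrt n)
        ≤ Real.sqrt ((ks:ℝ)*((n - ks:ℕ):ℝ)) := by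
      rw [← hsq]
      exact Real.sqrt_le_sqrt hprod
    have hsn0 : 0 < Real.sqrt (n:ℝ) := Real.sqrt_pos.mpr hn0
    have h3 : Real.sqrt (n:ℝ) / Real.sqrt ((ks:ℝ)*((n - ks:ℕ):ℝ))
        ≤ (4/3) / Real.sqrt ((n:ℝ)*(α*(1-α))) := by
      calc Real.sqrt (n:ℝ) / Real.sqrt ((ks:ℝ)*((n - ks:ℕ):ℝ))
          ≤ Real.sqrt (n:ℝ) / ((3/4)*(Real.sqrt ((n:ℝ)*(α*(1-α))) * Real.sqrt n)) := by
            apply div_le_div_of_nonneg_left hsn0.le (by positivity) h2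
        _ = (4/3) / Real.sqrt ((n:ℝ)*(α*(1-α))) := by
            field_simp
    have hepi : Real.exp 1 / (2*π) * (4/3) ≤ 2 := by
      have he3 : Real.exp 1 < 2.7182818286 := Real.exp_one_lt_d9
      have hpi3 : 3 < π := Real.pi_gt_three
      rw [div_mul_eq_mul_div, div_le_iff₀ (by positivity)]
      nlinarith
    have hpre0 : (0:ℝ) ≤ Real.exp 1 / (2*π) := by positivity
    calc bb n α ks = (n.choose ks : ℝ) * (α^ks * (1-α)^(n-ks)) := by unfold bb; ring
      _ ≤ Real.exp 1 / (2*π) * (Real.sqrt n / Real.sqrt ((ks:ℝ)*((n - ks:ℕ):ℝ))) := hbnd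
      _ ≤ Real.exp 1 / (2*π) * ((4/3) / Real.sqrt ((n:ℝ)*(α*(1-α)))) :=
          mul_le_mul_of_nonneg_left h3 hpre0
      _ = (Real.exp 1 / (2*π) * (4/3)) / Real.sqrt ((n:ℝ)*(α*(1-α))) := by ring
      _ ≤ 2 / Real.sqrt ((n:ℝ)*(α*(1-α))) := by
          gcongr


lemma dvd_iff_mod_eq (a l d : ℕ) (hd : 0 < d) :
    d ∣ (a + l) ↔ l % d = (d - a % d) % d := by
  have hs : a % d < d := Nat.mod_lt _ hd
  have ht : l % d < d := Nat.mod_lt _ hd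
  have hal : (a + l) % d = (a % d + l % d) % d := Nat.add_mod a l d
  have hr : (d - a % d) % d = if a % d = 0 then 0 else d - a % d := by
    rcases Nat.eq_zero_or_pos (a % d) with h | h
    · simp [h]
    · rw [if_neg (by omega)]; exact Nat.mod_eq_of_lt (by omega)
  constructor
  · intro hdvd
    have h0 : (a + l) % d = 0 := Nat.eq_zero_of_dvd_of_lt hdvd |> fun _ => Nat.mod_eq_zero_of_dvd hdvd
    rw [hal] at h0
    obtain ⟨k, hk⟩ := Nat.dvd_of_mod_eq_zero h0
    have hk1 : k ≤ 1 := by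
      by_contra hk2
      have : d * 2 ≤ d * k := Nat.mul_le_mul_left d (by omega)
      omega
    rw [hr]
    interval_cases k <;> split_ifs with hs0 <;> omega
  · intro hmod
    rw [hr] at hmod
    apply Nat.dvd_of_mod_eq_zero
    rw [hal]
    split_ifs at hmod with hs0
    · rw [hmod, hs0]; simp
    · rw [hmod]
      have h2 : a % d + (d - a % d) = d := by omega
      rw [h2, Nat.mod_self]

lemma sum_moebius_eq (k : ℕ) (hk : k ≠ 0) :
    ∑ d ∈ k.divisors, ((ArithmeticFunction.moebius d : ℤ) : ℝ)
      = if k = 1 then 1 else 0 := by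
  have h := congrArg (fun f => f k) ArithmeticFunction.moebius_mul_coe_zeta
  simp only [ArithmeticFunction.coe_mul_zeta_apply, ArithmeticFunction.one_apply] at h
  have h2 : ((∑ d ∈ k.divisors, (ArithmeticFunction.moebius d : ℤ) : ℤ) : ℝ)
      = ((if k = 1 then 1 else 0 : ℤ) : ℝ) := by exact_mod_cast congrArg Int.cast h
  push_cast at h2
  rw [h2]

lemma divisors_gcd_eq (u M : ℕ) (hM : M ≠ 0) :
    (Nat.gcd u M).divisors = M.divisors.filter (· ∣ u) := by
  ext d
  simp only [Nat.mem_divisors, Finset.mem_filter]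
  constructor
  · rintro ⟨hdvd, -⟩
    exact ⟨⟨hdvd.trans (Nat.gcd_dvd_right u M), hM⟩, hdvd.trans (Nat.gcd_dvd_left u M)⟩
  · rintro ⟨⟨hdM, -⟩, hdu⟩
    refine ⟨Nat.dvd_gcd hdu hdM, ?_⟩
    exact Nat.gcd_ne_zero_right hM

lemma moebius_split (M N a : ℕ) (hM : 1 ≤ M) (c : ℕ → ℝ) :
    ∑ l ∈ (range N).filter (fun l => Nat.gcd (a+l) M = 1), c l
      = ∑ d ∈ M.divisors, ((ArithmeticFunction.moebius d : ℤ) : ℝ) *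
          ∑ l ∈ (range N).filter (fun l => d ∣ (a+l)), c l := by
  have step1 : ∀ d, ((ArithmeticFunction.moebius d : ℤ) : ℝ) *
      ∑ l ∈ (range N).filter (fun l => d ∣ (a+l)), c l
      = ∑ l ∈ range N, (if d ∣ (a+l) then ((ArithmeticFunction.moebius d : ℤ) : ℝ) * c l else 0) := by
    intro d
    rw [Finset.mul_sum, Finset.sum_filter]
  rw [Finset.sum_congr rfl (fun d _ => step1 d), Finset.sum_comm]
  rw [Finset.sum_filter]
  apply Finset.sum_congr rfl
  intro l _
  have e1 : ∀ d, (if d ∣ (a+l) then ((ArithmeticFunction.moebius d : ℤ) : ℝ) * c l else 0)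
      = (if d ∣ (a+l) then ((ArithmeticFunction.moebius d : ℤ) : ℝ) else 0) * c l := by
    intro d; split_ifs <;> simp
  rw [Finset.sum_congr rfl (fun d _ => e1 d), ← Finset.sum_mul, ← Finset.sum_filter]
  rw [← divisors_gcd_eq (a+l) M (by omega)]
  rw [sum_moebius_eq _ (Nat.gcd_ne_zero_right (by omega))]
  split_ifs <;> simp

end AuxLemmas

/-- **Mean visibility of the `α`-random walk at time `n`.**  For fixed `a₀, b₀ ≥ 1`
there is a constant `C > 0` (independent of `α`) such that for every `α ∈ (0,1)` and
every `n ≥ 1`, the probability that the `α`-random walk started at `(a₀,b₀)` is at a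
visible point at time `n`, namely
`∑_{0 ≤ l ≤ n, gcd(a₀+l, a₀+b₀+n)=1} C(n,l)α^l(1−α)^{n−l}`, differs from
`∑_{d ∣ n+a₀+b₀} μ(d)/d` by at most `C/(√(α(1−α))·n^{1/4})`. -/
theorem alpha_walk_mean_visibility_estimate (a0 b0 : ℕ) (ha : 1 ≤ a0) (hb : 1 ≤ b0) :
    ∃ C : ℝ, 0 < C ∧
      ∀ (α : ℝ), 0 < α → α < 1 →
      ∀ (n : ℕ), 1 ≤ n →
        |(∑ l ∈ (Finset.range (n + 1)).filter
              (fun l => Nat.gcd (a0 + l) (a0 + b0 + n) = 1),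
            (n.choose l : ℝ) * α ^ l * (1 - α) ^ (n - l)) -
          ∑ d ∈ (n + a0 + b0).divisors, (ArithmeticFunction.moebius d : ℝ) / (d : ℝ)|
          ≤ C / (Real.sqrt (α * (1 - α)) * (n : ℝ) ^ ((1 : ℝ) / 4)) := by
  set A : ℝ := 1 + (a0:ℝ) + (b0:ℝ) with hA
  have hA1 : (1:ℝ) ≤ A := by
    have : (0:ℝ) ≤ (a0:ℝ) := Nat.cast_nonneg _
    have : (0:ℝ) ≤ (b0:ℝ) := Nat.cast_nonneg _
    simp only [hA]; linarith
  set B : ℝ := 41^2 * A with hB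
  refine ⟨4 * B, by positivity, ?_⟩
  intro α h0 h1 n hn
  have hq0 : 0 < 1 - α := by linarith
  have hn0 : (0:ℝ) < n := by exact_mod_cast hn
  set M : ℕ := a0 + b0 + n with hMdef
  have hM1 : 1 ≤ M := by omega
  have hMeq : n + a0 + b0 = M := by omega
  rw [hMeq]
  -- rewrite the visible-sum via Möbius
  have hsum1 : ∑ l ∈ (Finset.range (n + 1)).filter
        (fun l => Nat.gcd (a0 + l) M = 1),
        (n.choose l : ℝ) * α ^ l * (1 - α) ^ (n - l)
      = ∑ d ∈ M.divisors, ((ArithmeticFunction.moebius d : ℤ) : ℝ) *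
          ∑ l ∈ (range (n+1)).filter (fun l => d ∣ (a0+l)), bb n α l :=
    moebius_split M (n+1) a0 hM1 (bb n α)
  rw [hsum1]
  -- per-divisor bound
  have key : ∀ d ∈ M.divisors,
      |(∑ l ∈ (range (n+1)).filter (fun l => d ∣ (a0+l)), bb n α l) - 1/(d:ℝ)|
        ≤ 4 / Real.sqrt ((n:ℝ) * (α*(1-α))) := by
    intro d hd
    obtain ⟨hdvd, hM0⟩ := Nat.mem_divisors.mp hd
    have hd1 : 1 ≤ d := Nat.pos_of_dvd_of_pos hdvd (by omega)
    set r := (d - a0 % d) % d with hr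
    have hrd : r < d := Nat.mod_lt _ (by omega)
    have hfilter : (range (n+1)).filter (fun l => d ∣ (a0+l))
        = (range (n+1)).filter (fun l => l % d = r) := by
      apply Finset.filter_congr
      intro l _
      simp only [hr, eq_iff_iff]
      exact ⟨fun h => (dvd_iff_mod_eq a0 l d (by omega)).mp h,
        fun h => (dvd_iff_mod_eq a0 l d (by omega)).mpr h⟩
    have hc0 : ∀ k, n+1 ≤ k → bb n α k = 0 := by
      intro k hk
      unfold bb
      rw [Nat.choose_eq_zero_of_lt (by omega)]
      simp
    have hres := residue_sum_bound (bb n α) (n+1) d r hd1 hrd (by omega) hc0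
    rw [bb_sum_one n α h0 h1] at hres
    rw [hfilter]
    calc |(∑ l ∈ (range (n+1)).filter (fun l => l % d = r), bb n α l) - 1/(d:ℝ)|
        = |(∑ l ∈ (range (n+1)).filter (fun l => l % d = r), bb n α l) - 1/(d:ℝ)| := rfl
      _ ≤ ∑ k ∈ range (n+1), |bb n α k - bb n α (k+1)| := hres
      _ ≤ 2 * bb n α (min n ⌊α*((n:ℝ)+1)⌋₊) := bb_variation n α hn h0 h1
      _ ≤ 2 * (2 / Real.sqrt ((n:ℝ) * (α*(1-α)))) := by
          have := bb_mode_le n hn α h0 h1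
          linarith
      _ = 4 / Real.sqrt ((n:ℝ) * (α*(1-α))) := by ring
  -- moebius absolute value
  have hmu : ∀ d : ℕ, |((ArithmeticFunction.moebius d : ℤ) : ℝ)| ≤ 1 := by
    intro d
    have := ArithmeticFunction.abs_moebius_le_one (n := d)
    exact_mod_cast this
  -- tau bound
  have hM0 : M ≠ 0 := by omega
  have htau4 := tau4_le M hM0
  have hMle : M ≤ (1 + a0 + b0) * n := by
    have h1' : a0 ≤ a0 * n := Nat.le_mul_of_pos_right a0 (by omega)
    have h2' : b0 ≤ b0 * n := Nat.le_mul_of_pos_right b0 (by omega)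
    have h3' : (1 + a0 + b0) * n = n + a0*n + b0*n := by ring
    omega
  have htauR : ((#M.divisors : ℕ):ℝ) ≤ B * (n:ℝ)^((1:ℝ)/4) := by
    have h4 : (((#M.divisors : ℕ):ℝ))^4 ≤ (B * (n:ℝ)^((1:ℝ)/4))^4 := by
      have hn4 : ((n:ℝ)^((1:ℝ)/4))^(4:ℕ) = (n:ℝ) := by
        rw [← Real.rpow_natCast ((n:ℝ)^((1:ℝ)/4)) 4, ← Real.rpow_mul (by positivity)]
        norm_num
      have e1 : (B * (n:ℝ)^((1:ℝ)/4))^4 = B^4 * (n:ℝ) := by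
        rw [mul_pow, hn4]
      rw [e1]
      have hc1 : (((#M.divisors : ℕ):ℝ))^4 ≤ 41^6 * (M:ℝ) := by exact_mod_cast htau4
      have hc2 : (M:ℝ) ≤ A * n := by
        have : ((M:ℕ):ℝ) ≤ (((1 + a0 + b0) * n : ℕ):ℝ) := by exact_mod_cast hMle
        push_cast at this
        simp only [hA]
        linarith
      have hc3 : (41:ℝ)^6 * (M:ℝ) ≤ 41^6 * (A * n) := by nlinarith
      have hc4 : (41:ℝ)^6 * (A*n) ≤ B^4 * n := by
        have hAA : A ≤ A^4 := le_self_pow₀ hA1 (by norm_num)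
        have : (41:ℝ)^6 * A ≤ 41^8 * A^4 := by nlinarith
        have hBB : B^4 = 41^8 * A^4 := by rw [hB]; ring
        rw [hBB]
        nlinarith
      linarith
    exact le_of_pow_le_pow_left₀ (by norm_num) (by positivity) h4
  -- main chain
  have hstep : |(∑ d ∈ M.divisors, ((ArithmeticFunction.moebius d : ℤ) : ℝ) *
          ∑ l ∈ (range (n+1)).filter (fun l => d ∣ (a0+l)), bb n α l) -
        ∑ d ∈ M.divisors, ((ArithmeticFunction.moebius d : ℝ)) / (d:ℝ)|
      ≤ ((#M.divisors : ℕ):ℝ) * (4 / Real.sqrt ((n:ℝ) * (α*(1-α)))) := by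
    rw [← Finset.sum_sub_distrib]
    calc |∑ d ∈ M.divisors, (((ArithmeticFunction.moebius d : ℤ) : ℝ) *
            (∑ l ∈ (range (n+1)).filter (fun l => d ∣ (a0+l)), bb n α l) -
            ((ArithmeticFunction.moebius d : ℝ)) / (d:ℝ))|
        ≤ ∑ d ∈ M.divisors, |((ArithmeticFunction.moebius d : ℤ) : ℝ) *
            (∑ l ∈ (range (n+1)).filter (fun l => d ∣ (a0+l)), bb n α l) -
            ((ArithmeticFunction.moebius d : ℝ)) / (d:ℝ)| := Finset.abs_sum_le_sum_abs _ _
      _ ≤ ∑ _d ∈ M.divisors, (4 / Real.sqrt ((n:ℝ) * (α*(1-α)))) := by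
          apply Finset.sum_le_sum
          intro d hd
          have e1 : ((ArithmeticFunction.moebius d : ℤ) : ℝ) *
              (∑ l ∈ (range (n+1)).filter (fun l => d ∣ (a0+l)), bb n α l) -
              ((ArithmeticFunction.moebius d : ℝ)) / (d:ℝ)
              = ((ArithmeticFunction.moebius d : ℤ) : ℝ) *
                ((∑ l ∈ (range (n+1)).filter (fun l => d ∣ (a0+l)), bb n α l) - 1/(d:ℝ)) := by
            ring
          rw [e1, abs_mul]
          calc |((ArithmeticFunction.moebius d : ℤ) : ℝ)| *
              |(∑ l ∈ (range (n+1)).filter (fun l => d ∣ (a0+l)), bb n α l) - 1/(d:ℝ)|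
              ≤ 1 * (4 / Real.sqrt ((n:ℝ) * (α*(1-α)))) := by
                apply mul_le_mul (hmu d) (key d hd) (abs_nonneg _) zero_le_one
            _ = 4 / Real.sqrt ((n:ℝ) * (α*(1-α))) := one_mul _
      _ = ((#M.divisors : ℕ):ℝ) * (4 / Real.sqrt ((n:ℝ) * (α*(1-α)))) := by
          rw [Finset.sum_const, nsmul_eq_mul]
  calc |(∑ d ∈ M.divisors, ((ArithmeticFunction.moebius d : ℤ) : ℝ) *
          ∑ l ∈ (range (n+1)).filter (fun l => d ∣ (a0+l)), bb n α l) -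
        ∑ d ∈ M.divisors, ((ArithmeticFunction.moebius d : ℝ)) / (d:ℝ)|
      ≤ ((#M.divisors : ℕ):ℝ) * (4 / Real.sqrt ((n:ℝ) * (α*(1-α)))) := hstep
    _ ≤ (B * (n:ℝ)^((1:ℝ)/4)) * (4 / Real.sqrt ((n:ℝ) * (α*(1-α)))) := by
        apply mul_le_mul_of_nonneg_right htauR (by positivity)
    _ = 4 * B / (Real.sqrt (α * (1-α)) * (n:ℝ)^((1:ℝ)/4)) := by
        have hs : Real.sqrt ((n:ℝ) * (α*(1-α)))
            = Real.sqrt (n:ℝ) * Real.sqrt (α*(1-α)) := Real.sqrt_mul hn0.le _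
        have hsn : Real.sqrt (n:ℝ) = (n:ℝ)^((1:ℝ)/4) * (n:ℝ)^((1:ℝ)/4) := by
          rw [← Real.rpow_add hn0, Real.sqrt_eq_rpow]
          norm_num
        rw [hs, hsn]
        have hx0 : (0:ℝ) < (n:ℝ)^((1:ℝ)/4) := by positivity
        have hs0 : (0:ℝ) < Real.sqrt (α*(1-α)) := Real.sqrt_pos.mpr (by positivity)
        field_simp
end

section
/- There is an absolute constant C > 0 such that for every α ∈ (0,1), every integer k ≥ 1, all integers s,t ≥ 0 and every integer M ≥ 1: |Σ_{0 ≤ l ≤ M, gcd(l+s, M+t) = k} C(M,l)·α^l·(1−α)^{M−l} − g_k(M+t)·(1/k)·Σ_{d ≥ 1, kd | M+t} μ(d)/d| ≤ C·g_k(M+t)·τ((M+t)/k)/(√(α(1−α))·√M), where g_k(n) = 1 if k divides n and g_k(n) = 0 otherwise. -/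
open Finset Real Topology

noncomputable def binPMF (M : ℕ) (α : ℝ) (l : ℕ) : ℝ :=
  (M.choose l : ℝ) * α ^ l * (1 - α) ^ (M - l)

lemma binPMF_nonneg {M : ℕ} {α : ℝ} (h0 : 0 < α) (h1 : α < 1) (l : ℕ) :
    0 ≤ binPMF M α l := by
  unfold binPMF
  have : (0:ℝ) ≤ 1 - α := by linarith
  positivity

lemma binPMF_zero_of_gt {M : ℕ} {α : ℝ} {l : ℕ} (h : M < l) : binPMF M α l = 0 := by
  unfold binPMF
  rw [Nat.choose_eq_zero_of_lt h]
  simp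

lemma sum_binPMF {M : ℕ} (α : ℝ) : ∑ l ∈ range (M + 1), binPMF M α l = 1 := by
  have := add_pow α (1 - α) M
  simp only [add_sub_cancel, one_pow] at this
  rw [show (1:ℝ) = ∑ k ∈ range (M+1), α ^ k * (1-α) ^ (M - k) * (M.choose k : ℝ) from this]
  refine Finset.sum_congr rfl fun l _ => ?_
  unfold binPMF; ring

lemma binPMF_ratio {M : ℕ} {α : ℝ} {l : ℕ} (h : l < M) :
    binPMF M α (l+1) * ((l+1 : ℕ) * (1 - α)) = binPMF M α l * ((M - l : ℕ) * α) := by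
  unfold binPMF
  have h1 : M - (l+1) + 1 = M - l := by omega
  have h2 : ((M.choose (l+1) * (l+1) : ℕ) : ℝ) = ((M.choose l * (M - l) : ℕ) : ℝ) := by
    rw [Nat.choose_succ_right_eq]
  calc ((M.choose (l+1) : ℝ) * α ^ (l+1) * (1-α) ^ (M - (l+1))) * ((l+1:ℕ) * (1-α))
      = ((M.choose (l+1)) * (l+1:ℕ) : ℝ) * α ^ (l+1) * ((1-α) ^ (M-(l+1)) * (1-α)) := by
        push_cast; ring
    _ = ((M.choose l) * (M - l : ℕ) : ℝ) * α ^ (l+1) * (1-α) ^ (M - l) := by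
        rw [← pow_succ, h1]; push_cast at h2 ⊢; rw [h2]
    _ = (M.choose l : ℝ) * α ^ l * (1-α) ^ (M-l) * ((M - l : ℕ) * α) := by
        rw [pow_succ]; ring

lemma mode_le {M : ℕ} {α : ℝ} (h0 : 0 < α) (h1 : α < 1) : ⌊(M+1 : ℝ)*α⌋₊ ≤ M := by
  have : ((M:ℝ)+1)*α < (M+1 : ℕ) := by push_cast; nlinarith [Nat.cast_nonneg (α := ℝ) M]
  have := (Nat.floor_lt (by positivity)).mpr this
  omega

lemma binPMF_step_up {M : ℕ} {α : ℝ} (h0 : 0 < α) (h1 : α < 1) {l : ℕ}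
    (h : l + 1 ≤ ⌊(M+1 : ℝ)*α⌋₊) : binPMF M α l ≤ binPMF M α (l+1) := by
  have hlM : l < M := by have := mode_le (M := M) h0 h1; omega
  have hle : ((l:ℝ)+1) ≤ ((M:ℝ)+1)*α := by
    have h2 : ((l+1 : ℕ) : ℝ) ≤ (⌊(M+1 : ℝ)*α⌋₊ : ℝ) := by exact_mod_cast h
    have h3 : ((⌊(M+1 : ℝ)*α⌋₊ : ℕ) : ℝ) ≤ ((M:ℝ)+1)*α := Nat.floor_le (by positivity)
    push_cast at h2; linarith
  have hcast : ((M - l : ℕ) : ℝ) = (M:ℝ) - l := by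
    rw [Nat.cast_sub hlM.le]
  have key : ((l:ℝ)+1) * (1 - α) ≤ ((M - l : ℕ) : ℝ) * α := by
    rw [hcast]; nlinarith
  have hr := binPMF_ratio (α := α) hlM
  have hpos : (0:ℝ) < ((l:ℝ)+1) * (1 - α) := by
    have : (0:ℝ) < 1 - α := by linarith
    positivity
  have hf := binPMF_nonneg (M := M) h0 h1 l
  have hr' : binPMF M α (l+1) * (((l:ℝ)+1) * (1-α)) = binPMF M α l * (((M-l:ℕ):ℝ) * α) := by
    push_cast at hr ⊢; linarith
  have h5 : binPMF M α l * (((l:ℝ)+1)*(1-α)) ≤ binPMF M α (l+1) * (((l:ℝ)+1)*(1-α)) := by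
    rw [hr']; exact mul_le_mul_of_nonneg_left key hf
  exact le_of_mul_le_mul_right h5 hpos

lemma binPMF_step_down {M : ℕ} {α : ℝ} (h0 : 0 < α) (h1 : α < 1) {l : ℕ}
    (h : ⌊(M+1 : ℝ)*α⌋₊ ≤ l) : binPMF M α (l+1) ≤ binPMF M α l := by
  rcases Nat.lt_or_ge l M with hlM | hlM
  · have hle : ((M:ℝ)+1)*α ≤ (l:ℝ)+1 := by
      have h2 : ((M:ℝ)+1)*α < (⌊(M+1 : ℝ)*α⌋₊ : ℝ) + 1 := Nat.lt_floor_add_one _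
      have h3 : ((⌊(M+1 : ℝ)*α⌋₊ : ℕ) : ℝ) ≤ (l:ℝ) := by exact_mod_cast h
      linarith
    have hcast : ((M - l : ℕ) : ℝ) = (M:ℝ) - l := by rw [Nat.cast_sub hlM.le]
    have key : ((M - l : ℕ) : ℝ) * α ≤ ((l:ℝ)+1) * (1 - α) := by rw [hcast]; nlinarith
    have hr := binPMF_ratio (α := α) hlM
    have hpos : (0:ℝ) < ((l:ℝ)+1) * (1 - α) := by
      have : (0:ℝ) < 1 - α := by linarith
      positivity
    have hf := binPMF_nonneg (M := M) h0 h1 l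
    have : binPMF M α (l+1) * (((l:ℝ)+1) * (1-α)) ≤ binPMF M α l * (((l:ℝ)+1) * (1-α)) := by
      have hr' : binPMF M α (l+1) * (((l:ℝ)+1) * (1-α)) = binPMF M α l * (((M - l : ℕ):ℝ) * α) := by
        push_cast at hr ⊢; linarith [hr]
      rw [hr']
      exact mul_le_mul_of_nonneg_left key hf
    exact le_of_mul_le_mul_right this hpos
  · rw [binPMF_zero_of_gt (by omega)]
    exact binPMF_nonneg h0 h1 l

lemma helper_mono (f : ℕ → ℝ) (a : ℕ) :
    ∀ d, (∀ i, i+1 ≤ a+d → f i ≤ f (i+1)) → f a ≤ f (a+d) := by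
  intro d
  induction d with
  | zero => intro _; simp
  | succ n ih =>
      intro h
      have h1 : f a ≤ f (a+n) := ih (fun i hi => h i (by omega))
      have h2 : f (a+n) ≤ f (a+n+1) := h (a+n) (by omega)
      calc f a ≤ f (a+n) := h1
        _ ≤ f (a + (n+1)) := by rw [show a + (n+1) = a+n+1 from rfl]; exact h2

lemma helper_anti (f : ℕ → ℝ) (m : ℕ) (h : ∀ i, m ≤ i → f (i+1) ≤ f i) :
    ∀ b, m ≤ b → f b ≤ f m := by
  intro b hb
  induction b, hb using Nat.le_induction with
  | base => exact le_refl _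
  | succ n hn ih => exact le_trans (h n hn) ih

lemma binPMF_le_mode {M : ℕ} {α : ℝ} (h0 : 0 < α) (h1 : α < 1) (l : ℕ) :
    binPMF M α l ≤ binPMF M α ⌊(M+1 : ℝ)*α⌋₊ := by
  set m₀ := ⌊(M+1 : ℝ)*α⌋₊ with hm
  rcases le_or_gt l m₀ with hl | hl
  · obtain ⟨d, hd⟩ := Nat.exists_eq_add_of_le hl
    rw [hd]
    exact helper_mono _ l d (fun i hi => binPMF_step_up h0 h1 (by omega))
  · exact helper_anti _ m₀ (fun i hi => binPMF_step_down h0 h1 hi) l hl.le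

lemma stirling_eq (n : ℕ) (hn : 1 ≤ n) :
    (n.factorial : ℝ) = Stirling.stirlingSeq n * (Real.sqrt (2*n) * ((n:ℝ) / Real.exp 1) ^ n) := by
  have hn' : (0:ℝ) < n := by exact_mod_cast hn
  have hpos : (0:ℝ) < Real.sqrt (2*(n:ℝ)) * ((n:ℝ)/Real.exp 1)^n := by positivity
  rw [Stirling.stirlingSeq, div_mul_cancel₀]
  exact ne_of_gt hpos

lemma stirling_lower (n : ℕ) (hn : 1 ≤ n) :
    Real.sqrt π * (Real.sqrt (2*n) * ((n:ℝ) / Real.exp 1) ^ n) ≤ (n.factorial : ℝ) := by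
  have hn' : (0:ℝ) < n := by exact_mod_cast hn
  have hpos : (0:ℝ) ≤ Real.sqrt (2*(n:ℝ)) * ((n:ℝ)/Real.exp 1)^n := by positivity
  have hlim : Filter.Tendsto (Stirling.stirlingSeq ∘ Nat.succ) Filter.atTop (𝓝 (Real.sqrt π)) := by
    have := Stirling.tendsto_stirlingSeq_sqrt_pi
    exact this.comp (Filter.tendsto_add_atTop_nat 1)
  have hs : Real.sqrt π ≤ Stirling.stirlingSeq n := by
    have := Stirling.stirlingSeq'_antitone.le_of_tendsto hlim (n-1)
    simpa [Function.comp, Nat.succ_eq_add_one, Nat.sub_add_cancel hn] using this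
  rw [stirling_eq n hn]
  exact mul_le_mul_of_nonneg_right hs hpos

lemma stirling_upper (n : ℕ) (hn : 1 ≤ n) :
    (n.factorial : ℝ) ≤ (Real.exp 1 / Real.sqrt 2) * (Real.sqrt (2*n) * ((n:ℝ) / Real.exp 1) ^ n) := by
  have hn' : (0:ℝ) < n := by exact_mod_cast hn
  have hpos : (0:ℝ) ≤ Real.sqrt (2*(n:ℝ)) * ((n:ℝ)/Real.exp 1)^n := by positivity
  have hs : Stirling.stirlingSeq n ≤ Real.exp 1 / Real.sqrt 2 := by
    have h := Stirling.stirlingSeq'_antitone (Nat.zero_le (n-1))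
    simp only [Function.comp, Nat.succ_eq_add_one, Nat.sub_add_cancel hn, Nat.zero_add] at h
    calc Stirling.stirlingSeq n = Stirling.stirlingSeq ((n-1)+1) := by rw [Nat.sub_add_cancel hn]
      _ ≤ Stirling.stirlingSeq (0+1) := Stirling.stirlingSeq'_antitone (Nat.zero_le _)
      _ = Real.exp 1 / Real.sqrt 2 := by norm_num [Stirling.stirlingSeq_one]
  rw [stirling_eq n hn]
  exact mul_le_mul_of_nonneg_right hs hpos

set_option maxHeartbeats 1000000 in
lemma binPMF_mode_bound {M : ℕ} (hM : 1 ≤ M) {α : ℝ} (h0 : 0 < α) (h1 : α < 1) :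
    binPMF M α ⌊((M:ℝ)+1)*α⌋₊ ≤ 1 / Real.sqrt (M * (α * (1 - α))) := by
  set m₀ := ⌊((M:ℝ)+1)*α⌋₊ with hm
  have hβ : (0:ℝ) < 1 - α := by linarith
  have hM' : (0:ℝ) < M := by exact_mod_cast hM
  have hfloor_le : (m₀ : ℝ) ≤ ((M:ℝ)+1)*α := Nat.floor_le (by positivity)
  have hfloor_gt : ((M:ℝ)+1)*α < (m₀ : ℝ) + 1 := Nat.lt_floor_add_one _
  have hm₀M : m₀ ≤ M := by
    have : ((M:ℝ)+1)*α < (M+1 : ℕ) := by push_cast; nlinarith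
    have := (Nat.floor_lt (by positivity)).mpr this
    omega
  rcases Nat.eq_zero_or_pos m₀ with h0' | h1'
  · -- m₀ = 0
    have hα1 : (M:ℝ)*α < 1 := by
      have : ((M:ℝ)+1)*α < 1 := by
        rw [h0'] at hfloor_gt; simpa using hfloor_gt
      nlinarith
    have hle1 : Real.sqrt (M * (α * (1-α))) ≤ 1 := by
      apply Real.sqrt_le_one.mpr
      nlinarith [mul_pos (sub_pos.mpr hα1) hβ, h0, hβ]
    have hb : binPMF M α m₀ ≤ 1 := by
      rw [h0']
      unfold binPMF
      simp only [Nat.choose_zero_right, Nat.cast_one, pow_zero, one_mul, Nat.sub_zero]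
      exact pow_le_one₀ (by linarith) (by linarith)
    have hpos : (0:ℝ) < Real.sqrt (M * (α * (1-α))) := by positivity
    rw [le_div_iff₀ hpos]
    nlinarith
  rcases Nat.eq_or_lt_of_le hm₀M with hMM | hMM
  · -- m₀ = M
    have hMα : (M:ℝ) ≤ ((M:ℝ)+1)*α := by
      rw [hMM] at hfloor_le; exact_mod_cast hfloor_le
    have hβ1 : (M:ℝ)*(1-α) ≤ 1 := by nlinarith
    have hle1 : Real.sqrt (M * (α * (1-α))) ≤ 1 := by
      apply Real.sqrt_le_one.mpr
      nlinarith [mul_le_mul_of_nonneg_right hβ1 h0.le, h0, h1]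
    have hb : binPMF M α m₀ ≤ 1 := by
      rw [hMM]
      unfold binPMF
      simp only [Nat.choose_self, Nat.cast_one, Nat.sub_self, pow_zero, mul_one, one_mul]
      exact pow_le_one₀ h0.le h1.le
    have hpos : (0:ℝ) < Real.sqrt (M * (α * (1-α))) := by positivity
    rw [le_div_iff₀ hpos]
    nlinarith
  · -- 1 ≤ m₀ ≤ M - 1
    set a := m₀
    set b := M - m₀ with hbdef
    have hb1 : 1 ≤ b := by omega
    have ha1 : 1 ≤ a := h1'
    have hA : (0:ℝ) < (a:ℝ) := by exact_mod_cast ha1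
    have hB : (0:ℝ) < (b:ℝ) := by exact_mod_cast hb1
    have hABM : (a:ℝ) + (b:ℝ) = (M:ℝ) := by
      have : a + b = M := by omega
      exact_mod_cast this
    have hE : (0:ℝ) < Real.exp 1 := Real.exp_pos 1
    have hA1 : (1:ℝ) ≤ (a:ℝ) := by exact_mod_cast ha1
    have hB1 : (1:ℝ) ≤ (b:ℝ) := by exact_mod_cast hb1
    -- a ≥ Mα/2 and b ≥ Mβ/2
    have hA2 : (M:ℝ)*α/2 ≤ (a:ℝ) := by
      have hgt : (M:ℝ)*α - 1 < (a:ℝ) := by nlinarith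
      rcases le_or_gt ((M:ℝ)*α) 2 with h|h
      · linarith
      · linarith
    have hB2 : (M:ℝ)*(1-α)/2 ≤ (b:ℝ) := by
      have hgt : (M:ℝ)*(1-α) - 1 < (b:ℝ) := by nlinarith
      rcases le_or_gt ((M:ℝ)*(1-α)) 2 with h|h
      · linarith
      · linarith
    have hnat : a + b = M := by omega
    have hch : (M.choose a) * a.factorial * b.factorial = M.factorial := by
      have := Nat.choose_mul_factorial_mul_factorial (le_of_lt hMM)
      rwa [show M - a = b from by omega] at this
    unfold binPMF
    rw [show M - a = b from by omega]
    clear_value b a m₀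
    clear hm hbdef hfloor_le hfloor_gt
    -- Key 1 : AM-GM
    have hKey1 : (M:ℝ)^M * (α^a * (1-α)^b) ≤ (a:ℝ)^a * (b:ℝ)^b := by
      set p₁ := (M:ℝ)*α/(a:ℝ) with hp₁
      set p₂ := (M:ℝ)*(1-α)/(b:ℝ) with hp₂
      have hp₁0 : 0 ≤ p₁ := by positivity
      have hp₂0 : 0 ≤ p₂ := by positivity
      have hgm := Real.geom_mean_le_arith_mean2_weighted
        (by positivity : (0:ℝ) ≤ (a:ℝ)/(M:ℝ)) (by positivity : (0:ℝ) ≤ (b:ℝ)/(M:ℝ))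
        hp₁0 hp₂0 (by field_simp; linarith [hABM] : (a:ℝ)/(M:ℝ) + (b:ℝ)/(M:ℝ) = 1)
      have hsum : (a:ℝ)/(M:ℝ) * p₁ + (b:ℝ)/(M:ℝ) * p₂ = 1 := by
        rw [hp₁, hp₂]; field_simp; ring
      rw [hsum] at hgm
      have hx0 : 0 ≤ p₁ ^ ((a:ℝ)/(M:ℝ)) * p₂ ^ ((b:ℝ)/(M:ℝ)) := by positivity
      have hxM : (p₁ ^ ((a:ℝ)/(M:ℝ)) * p₂ ^ ((b:ℝ)/(M:ℝ))) ^ (M:ℝ) ≤ 1 :=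
        Real.rpow_le_one hx0 hgm (Nat.cast_nonneg M)
      have hrw : (p₁ ^ ((a:ℝ)/(M:ℝ)) * p₂ ^ ((b:ℝ)/(M:ℝ))) ^ (M:ℝ) = p₁ ^ a * p₂ ^ b := by
        rw [Real.mul_rpow (by positivity) (by positivity),
          ← Real.rpow_mul hp₁0, ← Real.rpow_mul hp₂0,
          div_mul_cancel₀ _ (ne_of_gt hM'), div_mul_cancel₀ _ (ne_of_gt hM'),
          Real.rpow_natCast, Real.rpow_natCast]
      rw [hrw] at hxM
      have hexp : p₁ ^ a * p₂ ^ b = ((M:ℝ)^M * (α^a * (1-α)^b)) / ((a:ℝ)^a * (b:ℝ)^b) := by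
        rw [hp₁, hp₂, div_pow, div_pow]
        rw [show (M:ℝ)^M = (M:ℝ)^a * (M:ℝ)^b by rw [← pow_add]; congr 1; omega]
        rw [mul_pow, mul_pow]
        field_simp
      rw [hexp] at hxM
      have hpos : (0:ℝ) < (a:ℝ)^a * (b:ℝ)^b := by positivity
      calc (M:ℝ)^M * (α^a * (1-α)^b)
          = ((M:ℝ)^M * (α^a * (1-α)^b)) / ((a:ℝ)^a * (b:ℝ)^b) * ((a:ℝ)^a * (b:ℝ)^b) := by
            field_simp
        _ ≤ 1 * ((a:ℝ)^a * (b:ℝ)^b) := mul_le_mul_of_nonneg_right hxM hpos.le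
        _ = (a:ℝ)^a * (b:ℝ)^b := one_mul _
    -- Key 2 : sqrt comparison
    have hKey2 : Real.sqrt M * Real.sqrt ((M:ℝ) * (α*(1-α))) ≤ 2 * Real.sqrt ((a:ℝ)*(b:ℝ)) := by
      have h4 : (M:ℝ) * ((M:ℝ) * (α*(1-α))) ≤ 4 * ((a:ℝ)*(b:ℝ)) := by
        have := mul_le_mul hA2 hB2 (by positivity) hA.le
        nlinarith [this]
      calc Real.sqrt M * Real.sqrt ((M:ℝ) * (α*(1-α)))
          = Real.sqrt ((M:ℝ) * ((M:ℝ) * (α*(1-α)))) := (Real.sqrt_mul (Nat.cast_nonneg M) _).symm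
        _ ≤ Real.sqrt (4 * ((a:ℝ)*(b:ℝ))) := Real.sqrt_le_sqrt h4
        _ = 2 * Real.sqrt ((a:ℝ)*(b:ℝ)) := by
            rw [Real.sqrt_mul (by norm_num : (0:ℝ) ≤ 4), show Real.sqrt 4 = 2 by
              rw [show (4:ℝ) = 2^2 by norm_num, Real.sqrt_sq (by norm_num : (0:ℝ) ≤ 2)]]
    -- Stirling bounds
    have hup := stirling_upper M hM
    have hloA := stirling_lower a ha1
    have hloB := stirling_lower b hb1
    -- the central inequality
    have hαa : (0:ℝ) ≤ α^a * (1-α)^b := by positivity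
    have hSMαβ : (0:ℝ) ≤ Real.sqrt ((M:ℝ)*(α*(1-α))) := Real.sqrt_nonneg _
    have key : (M.factorial:ℝ) * (α^a * (1-α)^b) * Real.sqrt ((M:ℝ)*(α*(1-α)))
        ≤ (a.factorial:ℝ) * (b.factorial:ℝ) := by
      have step1 : (M.factorial:ℝ) * (α^a * (1-α)^b) * Real.sqrt ((M:ℝ)*(α*(1-α)))
          ≤ ((Real.exp 1 / Real.sqrt 2) * (Real.sqrt (2*M) * ((M:ℝ)/Real.exp 1)^M))
              * (α^a * (1-α)^b) * Real.sqrt ((M:ℝ)*(α*(1-α))) := by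
        apply mul_le_mul_of_nonneg_right _ hSMαβ
        exact mul_le_mul_of_nonneg_right hup hαa
      have hs2M : Real.sqrt (2*(M:ℝ)) = Real.sqrt 2 * Real.sqrt (M:ℝ) :=
        Real.sqrt_mul (by norm_num) _
      have hsAB : Real.sqrt (2*(a:ℝ)) * Real.sqrt (2*(b:ℝ)) = 2 * Real.sqrt ((a:ℝ)*(b:ℝ)) := by
        rw [← Real.sqrt_mul (by positivity : (0:ℝ) ≤ 2*(a:ℝ))]
        rw [show 2*(a:ℝ)*(2*(b:ℝ)) = 4*((a:ℝ)*(b:ℝ)) by ring]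
        rw [Real.sqrt_mul (by norm_num : (0:ℝ) ≤ 4), show Real.sqrt 4 = 2 by
          rw [show (4:ℝ) = 2^2 by norm_num, Real.sqrt_sq (by norm_num : (0:ℝ) ≤ 2)]]
      have hsπ : Real.sqrt π * Real.sqrt π = π := Real.mul_self_sqrt Real.pi_pos.le
      have hs2 : Real.sqrt 2 ≠ 0 := by positivity
      have hEab : Real.exp 1 ^ a * Real.exp 1 ^ b = Real.exp 1 ^ M := by
        rw [← pow_add, hnat]
      have hEπ : Real.exp 1 ≤ π := by
        have h1 := Real.exp_one_lt_d9
        have h2 := Real.pi_gt_three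
        linarith
      have Lstep : ((Real.exp 1 / Real.sqrt 2) * (Real.sqrt (2*M) * ((M:ℝ)/Real.exp 1)^M))
              * (α^a * (1-α)^b) * Real.sqrt ((M:ℝ)*(α*(1-α)))
          = Real.exp 1 * ((M:ℝ)^M * (α^a * (1-α)^b))
              * (Real.sqrt (M:ℝ) * Real.sqrt ((M:ℝ)*(α*(1-α)))) / Real.exp 1 ^ M := by
        rw [hs2M, div_pow]
        field_simp
      have Rstep : (Real.sqrt π * (Real.sqrt (2*(a:ℝ)) * ((a:ℝ)/Real.exp 1)^a))
              * (Real.sqrt π * (Real.sqrt (2*(b:ℝ)) * ((b:ℝ)/Real.exp 1)^b))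
          = π * ((a:ℝ)^a * (b:ℝ)^b) * (2 * Real.sqrt ((a:ℝ)*(b:ℝ))) / Real.exp 1 ^ M := by
        rw [div_pow, div_pow]
        rw [show (Real.sqrt π * (Real.sqrt (2*(a:ℝ)) * ((a:ℝ)^a/Real.exp 1^a)))
              * (Real.sqrt π * (Real.sqrt (2*(b:ℝ)) * ((b:ℝ)^b/Real.exp 1^b)))
            = (Real.sqrt π * Real.sqrt π) * (Real.sqrt (2*(a:ℝ)) * Real.sqrt (2*(b:ℝ)))
              * ((a:ℝ)^a * (b:ℝ)^b) / (Real.exp 1^a * Real.exp 1^b) by ring]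
        rw [hsπ, hsAB, hEab]
        ring
      have middle : Real.exp 1 * ((M:ℝ)^M * (α^a * (1-α)^b))
              * (Real.sqrt (M:ℝ) * Real.sqrt ((M:ℝ)*(α*(1-α)))) / Real.exp 1 ^ M
          ≤ π * ((a:ℝ)^a * (b:ℝ)^b) * (2 * Real.sqrt ((a:ℝ)*(b:ℝ))) / Real.exp 1 ^ M := by
        apply div_le_div_of_nonneg_right _ (by positivity)
        have hX : (0:ℝ) ≤ (M:ℝ)^M * (α^a*(1-α)^b) := by positivity
        have hY : (0:ℝ) ≤ Real.sqrt (M:ℝ) * Real.sqrt ((M:ℝ)*(α*(1-α))) := by positivity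
        have h1 : Real.exp 1 * ((M:ℝ)^M * (α^a*(1-α)^b)) ≤ π * ((a:ℝ)^a*(b:ℝ)^b) :=
          mul_le_mul hEπ hKey1 hX Real.pi_pos.le
        exact mul_le_mul h1 hKey2 hY (by positivity)
      calc (M.factorial:ℝ) * (α^a * (1-α)^b) * Real.sqrt ((M:ℝ)*(α*(1-α)))
          ≤ ((Real.exp 1 / Real.sqrt 2) * (Real.sqrt (2*M) * ((M:ℝ)/Real.exp 1)^M))
              * (α^a * (1-α)^b) * Real.sqrt ((M:ℝ)*(α*(1-α))) := step1
        _ = Real.exp 1 * ((M:ℝ)^M * (α^a * (1-α)^b))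
              * (Real.sqrt (M:ℝ) * Real.sqrt ((M:ℝ)*(α*(1-α)))) / Real.exp 1 ^ M := Lstep
        _ ≤ π * ((a:ℝ)^a * (b:ℝ)^b) * (2 * Real.sqrt ((a:ℝ)*(b:ℝ))) / Real.exp 1 ^ M := middle
        _ = (Real.sqrt π * (Real.sqrt (2*(a:ℝ)) * ((a:ℝ)/Real.exp 1)^a))
              * (Real.sqrt π * (Real.sqrt (2*(b:ℝ)) * ((b:ℝ)/Real.exp 1)^b)) := Rstep.symm
        _ ≤ (a.factorial:ℝ) * (b.factorial:ℝ) :=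
            mul_le_mul hloA hloB (by positivity) (by positivity)
    -- assemble
    have hfacpos : (0:ℝ) < (a.factorial:ℝ) * (b.factorial:ℝ) := by positivity
    have hSpos : (0:ℝ) < Real.sqrt ((M:ℝ)*(α*(1-α))) := by positivity
    rw [le_div_iff₀ hSpos]
    have hchR : (M.choose a : ℝ) = (M.factorial:ℝ) / ((a.factorial:ℝ) * (b.factorial:ℝ)) := by
      rw [eq_div_iff (ne_of_gt hfacpos)]
      have hc : ((M.choose a * a.factorial * b.factorial : ℕ) : ℝ) = (M.factorial : ℝ) := by
        exact_mod_cast congrArg (fun n : ℕ => (n : ℝ)) hch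
      push_cast at hc
      linarith [hc]
    rw [hchR, div_mul_eq_mul_div, div_mul_eq_mul_div, div_mul_eq_mul_div, div_le_one hfacpos]
    linarith [key]

lemma binPMF_tv {M : ℕ} {α : ℝ} (h0 : 0 < α) (h1 : α < 1) (L : ℕ) :
    ∑ l ∈ range L, |binPMF M α (l+1) - binPMF M α l| ≤ 2 * binPMF M α ⌊((M:ℝ)+1)*α⌋₊ := by
  set f := binPMF M α with hf
  set m₀ := ⌊((M:ℝ)+1)*α⌋₊ with hm
  have hf0 : ∀ l, 0 ≤ f l := binPMF_nonneg h0 h1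
  have hmax : ∀ l, f l ≤ f m₀ := binPMF_le_mode h0 h1
  rcases le_or_gt L m₀ with hL | hL
  · have : ∀ l ∈ range L, |f (l+1) - f l| = f (l+1) - f l := by
      intro l hl
      rw [abs_of_nonneg (sub_nonneg.mpr (binPMF_step_up h0 h1 (by
        simp only [mem_range] at hl; omega)))]
    rw [Finset.sum_congr rfl this, Finset.sum_range_sub]
    have := hmax L
    have := hf0 0
    have := hf0 m₀
    linarith
  · have hsplit : range L = Finset.Ico 0 m₀ ∪ Finset.Ico m₀ L := by
      rw [Finset.range_eq_Ico, ← Finset.Ico_union_Ico_eq_Ico (Nat.zero_le m₀) hL.le]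
    rw [hsplit, Finset.sum_union (by
      apply Finset.Ico_disjoint_Ico_consecutive)]
    have e1 : ∑ l ∈ Finset.Ico 0 m₀, |f (l+1) - f l| = f m₀ - f 0 := by
      rw [← Finset.range_eq_Ico]
      rw [Finset.sum_congr rfl (fun l hl => abs_of_nonneg (sub_nonneg.mpr
        (binPMF_step_up h0 h1 (by simp only [mem_range] at hl; omega))))]
      exact Finset.sum_range_sub f m₀
    have e2 : ∑ l ∈ Finset.Ico m₀ L, |f (l+1) - f l| = f m₀ - f L := by
      rw [Finset.sum_Ico_eq_sum_range]
      rw [Finset.sum_congr rfl (fun i hi => abs_of_nonpos (sub_nonpos.mpr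
        (binPMF_step_down h0 h1 (by omega))))]
      have : ∀ i ∈ range (L - m₀), -(f (m₀ + i + 1) - f (m₀ + i))
          = (fun j => f (m₀ + j)) i - (fun j => f (m₀ + j)) (i+1) := by
        intro i _
        show -(f (m₀ + i + 1) - f (m₀ + i)) = f (m₀ + i) - f (m₀ + (i+1))
        rw [show m₀ + (i+1) = m₀ + i + 1 by omega]; ring
      rw [Finset.sum_congr rfl this, Finset.sum_range_sub']
      show f (m₀ + 0) - f (m₀ + (L - m₀)) = f m₀ - f L
      rw [Nat.add_zero, show m₀ + (L - m₀) = L by omega]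
    rw [e1, e2]
    have := hmax L
    have := hf0 0
    have := hf0 L
    linarith

lemma sum_blocks (g : ℕ → ℝ) (m Q : ℕ) :
    ∑ j ∈ range m, ∑ q ∈ range Q, g (q*m+j) = ∑ l ∈ range (Q*m), g l := by
  induction Q with
  | zero => simp
  | succ Q ih =>
      have : ∀ j ∈ range m, ∑ q ∈ range (Q+1), g (q*m+j)
          = (∑ q ∈ range Q, g (q*m+j)) + g (Q*m+j) := by
        intro j _; rw [Finset.sum_range_succ]
      rw [Finset.sum_congr rfl this, Finset.sum_add_distrib, ih,
        show (Q+1)*m = Q*m + m by ring, Finset.sum_range_add]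

lemma residue_est {M : ℕ} (hM : 1 ≤ M) {α : ℝ} (h0 : 0 < α) (h1 : α < 1)
    {m : ℕ} (hm : 1 ≤ m) {r : ℕ} (hr : r < m) :
    |(∑ q ∈ range (M+2), binPMF M α (q*m+r)) - 1/(m:ℝ)|
      ≤ 2 * binPMF M α ⌊((M:ℝ)+1)*α⌋₊ := by
  set f := binPMF M α with hf
  set B := binPMF M α ⌊((M:ℝ)+1)*α⌋₊ with hB
  set Q := M + 2 with hQ
  set p : ℕ → ℝ := fun j => ∑ q ∈ range Q, f (q*m+j) with hp
  set D : ℕ → ℝ := fun j => ∑ q ∈ range Q, |f (q*m+j+1) - f (q*m+j)| with hD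
  have hf0 : ∀ l, 0 ≤ f l := binPMF_nonneg h0 h1
  have hQm : M + 1 ≤ Q * m := by
    calc M + 1 ≤ Q * 1 := by omega
      _ ≤ Q * m := Nat.mul_le_mul_left Q hm
  have hsum : ∑ j ∈ range m, p j = 1 := by
    rw [hp]
    rw [sum_blocks f m Q]
    rw [← sum_binPMF (M := M) α]
    apply (Finset.sum_subset (by
      intro x hx; simp only [mem_range] at *; omega)
      (fun x _ hx => binPMF_zero_of_gt (by simp only [mem_range] at hx ⊢; omega))).symm
  have hDsum : ∑ j ∈ range m, D j ≤ 2 * B := by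
    rw [hD]
    have := sum_blocks (fun l => |f (l+1) - f l|) m Q
    rw [show (∑ j ∈ range m, ∑ q ∈ range Q, |f (q*m+j+1) - f (q*m+j)|)
        = ∑ j ∈ range m, ∑ q ∈ range Q, |f ((q*m+j)+1) - f (q*m+j)| from rfl, this]
    exact binPMF_tv h0 h1 (Q*m)
  have hstep : ∀ j, |p (j+1) - p j| ≤ D j := by
    intro j
    rw [hp, hD]
    simp only
    rw [show (∑ q ∈ range Q, f (q*m+(j+1))) = ∑ q ∈ range Q, f (q*m+j+1) by
      apply Finset.sum_congr rfl; intro q _; rw [show q*m+(j+1) = q*m+j+1 by omega]]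
    rw [← Finset.sum_sub_distrib]
    exact Finset.abs_sum_le_sum_abs _ _
  have hpath : ∀ i j, i ≤ j → |p j - p i| ≤ ∑ t ∈ Finset.Ico i j, D t := by
    intro i j hij
    induction j, hij using Nat.le_induction with
    | base => simp
    | succ n hn ih =>
        calc |p (n+1) - p i| ≤ |p (n+1) - p n| + |p n - p i| := by
              have := abs_add_le (p (n+1) - p n) (p n - p i)
              simpa using this
          _ ≤ D n + ∑ t ∈ Finset.Ico i n, D t := add_le_add (hstep n) ih
          _ = ∑ t ∈ Finset.Ico i (n+1), D t := by
              rw [Finset.sum_Ico_succ_top hn]; ring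
  have hD0 : ∀ t, 0 ≤ D t := by
    intro t; rw [hD]; exact Finset.sum_nonneg (fun q _ => abs_nonneg _)
  have hpairs : ∀ j < m, |p r - p j| ≤ 2 * B := by
    intro j hj
    have key : ∀ i i', i ≤ i' → i' < m → |p i' - p i| ≤ 2 * B := by
      intro i i' hii hi'
      calc |p i' - p i| ≤ ∑ t ∈ Finset.Ico i i', D t := hpath i i' hii
        _ ≤ ∑ t ∈ range m, D t := Finset.sum_le_sum_of_subset_of_nonneg
            (by intro x hx; simp only [Finset.mem_Ico, mem_range] at *; omega)
            (fun t _ _ => hD0 t)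
        _ ≤ 2 * B := hDsum
    rcases le_total j r with h | h
    · exact key j r h hr
    · rw [abs_sub_comm]; exact key r j h hj
  have hmR : (0:ℝ) < (m:ℝ) := by exact_mod_cast hm
  have hrfl : (1/(m:ℝ)) * ∑ j ∈ range m, (p r - p j) = p r - 1/(m:ℝ) := by
    rw [Finset.sum_sub_distrib, hsum, Finset.sum_const, Finset.card_range, nsmul_eq_mul]
    field_simp
  calc |p r - 1/(m:ℝ)| = |(1/(m:ℝ)) * ∑ j ∈ range m, (p r - p j)| := by rw [hrfl]
    _ = (1/(m:ℝ)) * |∑ j ∈ range m, (p r - p j)| := by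
        rw [abs_mul, abs_of_pos (by positivity)]
    _ ≤ (1/(m:ℝ)) * ∑ j ∈ range m, |p r - p j| := by
        apply mul_le_mul_of_nonneg_left (Finset.abs_sum_le_sum_abs _ _) (by positivity)
    _ ≤ (1/(m:ℝ)) * ∑ j ∈ range m, (2*B) := by
        apply mul_le_mul_of_nonneg_left _ (by positivity)
        exact Finset.sum_le_sum (fun j hj => hpairs j (by simpa using hj))
    _ = 2 * B := by
        rw [Finset.sum_const, Finset.card_range, nsmul_eq_mul]
        field_simp

lemma dvd_iff_mod {m s j : ℕ} (hm : 1 ≤ m) (hj : j < m) :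
    m ∣ (j + s) ↔ j = (m - s % m) % m := by
  have hsm : s % m < m := Nat.mod_lt s hm
  have hdvd : m ∣ j + s ↔ (j + s) % m = 0 := Nat.dvd_iff_mod_eq_zero
  have h1 : (j + s) % m = (j + s % m) % m := by
    rw [Nat.add_mod, Nat.mod_eq_of_lt hj]
  by_cases hs : s % m = 0
  · have hrval : (m - s % m) % m = 0 := by rw [hs, Nat.sub_zero, Nat.mod_self]
    rcases lt_or_ge (j + s % m) m with hlt | hge
    · have h2 : (j + s % m) % m = j + s % m := Nat.mod_eq_of_lt hlt
      rw [hdvd, h1, h2, hrval]; omega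
    · have h2 : (j + s % m) % m = j + s % m - m := by
        rw [Nat.mod_eq_sub_mod hge, Nat.mod_eq_of_lt (by omega)]
      rw [hdvd, h1, h2, hrval]; omega
  · have hrval : (m - s % m) % m = m - s % m := Nat.mod_eq_of_lt (by omega)
    rcases lt_or_ge (j + s % m) m with hlt | hge
    · have h2 : (j + s % m) % m = j + s % m := Nat.mod_eq_of_lt hlt
      rw [hdvd, h1, h2, hrval]; omega
    · have h2 : (j + s % m) % m = j + s % m - m := by
        rw [Nat.mod_eq_sub_mod hge, Nat.mod_eq_of_lt (by omega)]
      rw [hdvd, h1, h2, hrval]; omega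

lemma S_eq_p {M : ℕ} (α : ℝ) {m : ℕ} (s : ℕ) (hm : 1 ≤ m) :
    ∑ l ∈ range (M+1), (if m ∣ (l+s) then binPMF M α l else 0)
      = ∑ q ∈ range (M+2), binPMF M α (q*m + (m - s % m) % m) := by
  set f := binPMF M α with hf
  set r := (m - s % m) % m with hrdef
  have hr : r < m := Nat.mod_lt _ hm
  set g : ℕ → ℝ := fun l => if m ∣ (l+s) then f l else 0 with hg
  have hQm : M + 1 ≤ (M+2) * m := by
    calc M + 1 ≤ (M+2) * 1 := by omega
      _ ≤ (M+2) * m := Nat.mul_le_mul_left _ hm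
  have ext : ∑ l ∈ range (M+1), g l = ∑ l ∈ range ((M+2)*m), g l := by
    apply Finset.sum_subset (by intro x hx; simp only [mem_range] at *; omega)
    intro x _ hx
    simp only [mem_range] at hx
    have hfx : f x = 0 := binPMF_zero_of_gt (by omega)
    rw [hg]
    simp only
    rw [hfx]
    simp
  rw [ext, ← sum_blocks g m (M+2)]
  have inner : ∀ j ∈ range m, ∑ q ∈ range (M+2), g (q*m+j)
      = if j = r then ∑ q ∈ range (M+2), f (q*m+j) else 0 := by
    intro j hj
    simp only [mem_range] at hj
    have hdvd : ∀ q : ℕ, m ∣ (q*m+j+s) ↔ m ∣ (j + s) := by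
      intro q
      rw [show q*m+j+s = m*q + (j+s) by ring]
      exact Nat.dvd_add_right ⟨q, rfl⟩
    by_cases hjr : j = r
    · rw [if_pos hjr]
      apply Finset.sum_congr rfl
      intro q _
      rw [hg]
      simp only
      rw [if_pos ((hdvd q).mpr ((dvd_iff_mod hm hj).mpr hjr))]
    · rw [if_neg hjr]
      apply Finset.sum_eq_zero
      intro q _
      rw [hg]
      simp only
      rw [if_neg (fun h => hjr ((dvd_iff_mod hm hj).mp ((hdvd q).mp h)))]
  rw [Finset.sum_congr rfl inner, Finset.sum_ite_eq' (range m) r _]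
  rw [if_pos (by simp [hr])]

lemma S_est {M : ℕ} (hM : 1 ≤ M) {α : ℝ} (h0 : 0 < α) (h1 : α < 1)
    {m : ℕ} (hm : 1 ≤ m) (s : ℕ) :
    |(∑ l ∈ range (M+1), (if m ∣ (l+s) then binPMF M α l else 0)) - 1/(m:ℝ)|
      ≤ 2 * binPMF M α ⌊((M:ℝ)+1)*α⌋₊ := by
  rw [S_eq_p α s hm]
  exact residue_est hM h0 h1 hm (Nat.mod_lt _ hm)

lemma sum_moebius_real (n : ℕ) :
    ∑ d ∈ n.divisors, (ArithmeticFunction.moebius d : ℝ) = if n = 1 then 1 else 0 := by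
  have h : (ArithmeticFunction.moebius * ArithmeticFunction.zeta :
      ArithmeticFunction ℤ) n = (1 : ArithmeticFunction ℤ) n := by
    rw [ArithmeticFunction.moebius_mul_coe_zeta]
  rw [ArithmeticFunction.coe_mul_zeta_apply, ArithmeticFunction.one_apply] at h
  have : ∑ d ∈ n.divisors, ((ArithmeticFunction.moebius d : ℤ) : ℝ)
      = ((if n = 1 then (1:ℤ) else 0 : ℤ) : ℝ) := by exact_mod_cast congrArg (fun z : ℤ => (z:ℝ)) h
  simpa using this

lemma moebius_indicator {N k : ℕ} (hN : 0 < N) (hk : 0 < k) (hkN : k ∣ N) (u : ℕ) :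
    ∑ d ∈ (N/k).divisors, (if k*d ∣ u then (ArithmeticFunction.moebius d : ℝ) else 0)
      = if Nat.gcd u N = k then 1 else 0 := by
  obtain ⟨n, rfl⟩ := hkN
  have hn : 0 < n := by
    rcases Nat.eq_zero_or_pos n with h | h
    · subst h; simp at hN
    · exact h
  rw [Nat.mul_div_cancel_left n hk]
  by_cases hku : k ∣ u
  · obtain ⟨v, rfl⟩ := hku
    have hiff : ∀ d : ℕ, (k*d ∣ k*v ↔ d ∣ v) :=
      fun d => mul_dvd_mul_iff_left (by omega : k ≠ 0)
    have step1 : ∑ d ∈ n.divisors, (if k*d ∣ k*v then (ArithmeticFunction.moebius d : ℝ) else 0)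
        = ∑ d ∈ n.divisors.filter (fun d => d ∣ v), (ArithmeticFunction.moebius d : ℝ) := by
      rw [Finset.sum_filter]
      apply Finset.sum_congr rfl
      intro d _
      exact if_congr (hiff d) rfl rfl
    have hfe : n.divisors.filter (fun d => d ∣ v) = (Nat.gcd n v).divisors := by
      ext d
      simp only [Finset.mem_filter, Nat.mem_divisors, Nat.dvd_gcd_iff]
      constructor
      · rintro ⟨⟨h1, h2⟩, h3⟩
        exact ⟨⟨h1, h3⟩, Nat.gcd_ne_zero_left (by omega)⟩
      · rintro ⟨⟨h1, h3⟩, h2⟩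
        exact ⟨⟨h1, by omega⟩, h3⟩
    rw [step1, hfe, sum_moebius_real]
    have hcond : (Nat.gcd (k*v) (k*n) = k) ↔ (Nat.gcd n v = 1) := by
      rw [Nat.gcd_mul_left]
      constructor
      · intro h
        have h2 : Nat.gcd v n = 1 := Nat.eq_of_mul_eq_mul_left hk (h.trans (Nat.mul_one k).symm)
        rw [Nat.gcd_comm]
        exact h2
      · intro h
        rw [Nat.gcd_comm v n, h, Nat.mul_one]
    by_cases hg : Nat.gcd n v = 1
    · rw [if_pos hg, if_pos (hcond.mpr hg)]
    · rw [if_neg hg, if_neg (fun hc => hg (hcond.mp hc))]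
  · rw [Finset.sum_eq_zero, if_neg]
    · intro hgcd
      exact hku (hgcd ▸ Nat.gcd_dvd_left u (k*n))
    · intro d _
      rw [if_neg (fun h => hku (dvd_trans (dvd_mul_right k d) h))]

/-- **Binomial probabilities on `gcd = k` sets.**  There is an absolute constant
`C > 0` such that for every `α ∈ (0,1)`, every `k ≥ 1`, all `s, t ≥ 0` and every
`M ≥ 1`, the sum of `C(M,l)α^l(1−α)^{M−l}` over `0 ≤ l ≤ M` with `gcd(l+s, M+t) = k`
differs from `g_k(M+t)·(1/k)·∑_{kd ∣ M+t} μ(d)/d` by at most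
`C·g_k(M+t)·τ((M+t)/k)/(√(α(1−α))·√M)`, where `g_k(n)` is the indicator that `k ∣ n`. -/
theorem binomial_probabilities_gcd_eq_k_sum :
    ∃ C : ℝ, 0 < C ∧
      ∀ (α : ℝ), 0 < α → α < 1 →
      ∀ (k : ℕ), 1 ≤ k →
      ∀ (s t M : ℕ), 1 ≤ M →
        |(∑ l ∈ (Finset.range (M + 1)).filter
              (fun l => Nat.gcd (l + s) (M + t) = k),
            (M.choose l : ℝ) * α ^ l * (1 - α) ^ (M - l)) -
          (if k ∣ M + t then (1 : ℝ) else 0) * (1 / (k : ℝ)) *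
            ∑ d ∈ (M + t).divisors.filter (fun d => k * d ∣ M + t),
              (ArithmeticFunction.moebius d : ℝ) / (d : ℝ)|
          ≤ C * (if k ∣ M + t then (1 : ℝ) else 0) * (((M + t) / k).divisors.card : ℝ) /
              (Real.sqrt (α * (1 - α)) * Real.sqrt M) := by
  refine ⟨2, by norm_num, ?_⟩
  intro α h0 h1 k hk s t M hM
  by_cases hkN : k ∣ M + t
  swap
  · have hempty : (Finset.range (M+1)).filter (fun l => Nat.gcd (l+s) (M+t) = k) = ∅ := by
      apply Finset.filter_eq_empty_iff.mpr
      intro l _ hgcd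
      exact hkN (hgcd ▸ Nat.gcd_dvd_right (l+s) (M+t))
    rw [hempty, if_neg hkN]
    simp
  · have hk0 : 0 < k := hk
    have hN0 : 0 < M + t := by omega
    have hn0 : 0 < (M+t)/k := Nat.div_pos (Nat.le_of_dvd hN0 hkN) hk0
    set n := (M+t)/k with hn
    have hfilter : (M+t).divisors.filter (fun d => k*d ∣ M+t) = n.divisors := by
      ext d
      simp only [Finset.mem_filter, Nat.mem_divisors]
      constructor
      · rintro ⟨⟨hd, hne⟩, hkd⟩
        exact ⟨(Nat.dvd_div_iff_mul_dvd hkN).mpr hkd, by omega⟩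
      · rintro ⟨hd, hne⟩
        have hkd : k*d ∣ M+t := (Nat.dvd_div_iff_mul_dvd hkN).mp hd
        exact ⟨⟨dvd_trans (dvd_mul_left d k) hkd, by omega⟩, hkd⟩
    rw [hfilter, if_pos hkN, one_mul]
    rw [Finset.sum_filter]
    have hpt : ∀ l, (if Nat.gcd (l+s) (M+t) = k then (M.choose l : ℝ) * α ^ l * (1-α) ^ (M-l) else 0)
        = ∑ d ∈ n.divisors,
            (if k*d ∣ (l+s) then (ArithmeticFunction.moebius d : ℝ) * binPMF M α l else 0) := by
      intro l
      have hmi := moebius_indicator hN0 hk0 hkN (l+s)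
      calc (if Nat.gcd (l+s) (M+t) = k then (M.choose l : ℝ) * α ^ l * (1-α) ^ (M-l) else 0)
          = (if Nat.gcd (l+s) (M+t) = k then (1:ℝ) else 0) * binPMF M α l := by
            unfold binPMF; split <;> simp
        _ = (∑ d ∈ n.divisors,
              (if k*d ∣ (l+s) then (ArithmeticFunction.moebius d : ℝ) else 0)) * binPMF M α l := by
            rw [hmi]
        _ = ∑ d ∈ n.divisors,
              (if k*d ∣ (l+s) then (ArithmeticFunction.moebius d : ℝ) * binPMF M α l else 0) := by
            rw [Finset.sum_mul]
            apply Finset.sum_congr rfl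
            intro d _
            rw [ite_mul, zero_mul]
    rw [Finset.sum_congr rfl (fun l _ => hpt l), Finset.sum_comm]
    have hinner : ∀ d, (∑ l ∈ range (M+1),
          (if k*d ∣ (l+s) then (ArithmeticFunction.moebius d : ℝ) * binPMF M α l else 0))
        = (ArithmeticFunction.moebius d : ℝ)
            * ∑ l ∈ range (M+1), (if k*d ∣ (l+s) then binPMF M α l else 0) := by
      intro d
      rw [Finset.mul_sum]
      apply Finset.sum_congr rfl
      intro l _
      rw [mul_ite, mul_zero]
    rw [Finset.sum_congr rfl (fun d _ => hinner d)]
    have hmain : (1/(k:ℝ)) * ∑ d ∈ n.divisors, (ArithmeticFunction.moebius d : ℝ)/(d:ℝ)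
        = ∑ d ∈ n.divisors, (ArithmeticFunction.moebius d : ℝ) * (1/(((k*d : ℕ)):ℝ)) := by
      rw [Finset.mul_sum]
      apply Finset.sum_congr rfl
      intro d hd
      have hd0 : (0:ℕ) < d := Nat.pos_of_mem_divisors hd
      have : ((k*d : ℕ):ℝ) = (k:ℝ)*(d:ℝ) := by push_cast; ring
      rw [this]
      have hkR : (k:ℝ) ≠ 0 := by positivity
      have hdR : (d:ℝ) ≠ 0 := by
        have : (0:ℝ) < d := by exact_mod_cast hd0
        positivity
      field_simp
    rw [hmain, ← Finset.sum_sub_distrib]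
    -- bound each term
    have hEb : 2 * binPMF M α ⌊((M:ℝ)+1)*α⌋₊ ≤ 2 / (Real.sqrt (α*(1-α)) * Real.sqrt M) := by
      have h := binPMF_mode_bound hM h0 h1
      have hsq : Real.sqrt ((M:ℝ)*(α*(1-α))) = Real.sqrt (α*(1-α)) * Real.sqrt M := by
        rw [Real.sqrt_mul (Nat.cast_nonneg M), mul_comm]
      rw [hsq] at h
      have h2 : 2/(Real.sqrt (α*(1-α)) * Real.sqrt M) = 2*(1/(Real.sqrt (α*(1-α)) * Real.sqrt M)) := by
        ring
      rw [h2]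
      linarith
    have hterm : ∀ d ∈ n.divisors,
        |(ArithmeticFunction.moebius d : ℝ)
            * ((∑ l ∈ range (M+1), (if k*d ∣ (l+s) then binPMF M α l else 0))
                - 1/(((k*d : ℕ)):ℝ))|
          ≤ 2 / (Real.sqrt (α*(1-α)) * Real.sqrt M) := by
      intro d hd
      have hd0 : (0:ℕ) < d := Nat.pos_of_mem_divisors hd
      have hkd1 : 1 ≤ k*d := Nat.mul_pos hk0 hd0
      have hmu : |(ArithmeticFunction.moebius d : ℝ)| ≤ 1 := by
        have := ArithmeticFunction.abs_moebius_le_one (n := d)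
        exact_mod_cast (by exact_mod_cast this : ((|ArithmeticFunction.moebius d| : ℤ) : ℝ) ≤ 1)
      have hS := S_est hM h0 h1 hkd1 s
      rw [abs_mul]
      calc |(ArithmeticFunction.moebius d : ℝ)|
            * |(∑ l ∈ range (M+1), (if k*d ∣ (l+s) then binPMF M α l else 0))
                - 1/(((k*d : ℕ)):ℝ)|
          ≤ 1 * (2 * binPMF M α ⌊((M:ℝ)+1)*α⌋₊) := by
            apply mul_le_mul hmu hS (abs_nonneg _) (by norm_num)
        _ = 2 * binPMF M α ⌊((M:ℝ)+1)*α⌋₊ := one_mul _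
        _ ≤ 2 / (Real.sqrt (α*(1-α)) * Real.sqrt M) := hEb
    calc |∑ d ∈ n.divisors, ((ArithmeticFunction.moebius d : ℝ)
              * (∑ l ∈ range (M+1), (if k*d ∣ (l+s) then binPMF M α l else 0))
            - (ArithmeticFunction.moebius d : ℝ) * (1/(((k*d : ℕ)):ℝ)))|
        = |∑ d ∈ n.divisors, (ArithmeticFunction.moebius d : ℝ)
              * ((∑ l ∈ range (M+1), (if k*d ∣ (l+s) then binPMF M α l else 0))
                - 1/(((k*d : ℕ)):ℝ))| := by
          congr 1
          apply Finset.sum_congr rfl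
          intro d _
          ring
      _ ≤ ∑ d ∈ n.divisors, |(ArithmeticFunction.moebius d : ℝ)
              * ((∑ l ∈ range (M+1), (if k*d ∣ (l+s) then binPMF M α l else 0))
                - 1/(((k*d : ℕ)):ℝ))| := Finset.abs_sum_le_sum_abs _ _
      _ ≤ ∑ d ∈ n.divisors, (2 / (Real.sqrt (α*(1-α)) * Real.sqrt M)) :=
          Finset.sum_le_sum hterm
      _ = (n.divisors.card : ℝ) * (2 / (Real.sqrt (α*(1-α)) * Real.sqrt M)) := by
          rw [Finset.sum_const, nsmul_eq_mul]
      _ ≤ 2 * 1 * (n.divisors.card : ℝ) / (Real.sqrt (α*(1-α)) * Real.sqrt M) := by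
          rw [mul_one]
          rw [mul_comm ((n.divisors.card : ℝ)) _, mul_div_assoc, div_mul_eq_mul_div]
          apply le_of_eq
          ring
end

section
/- For every integer c ≥ 1: lim_{N→∞} (1/N²)·#{(n,m) : 0 ≤ n,m ≤ N and gcd(1+nc, 1+mc) = 1} = Δ(c), where Δ(c) = Σ_{d ≥ 1, gcd(d,c)=1} μ(d)/d². -/
open Filter Finset ArithmeticFunction
open scoped ArithmeticFunction.Moebius

/-- number of `n ≤ N` with `d ∣ 1 + n*c` -/
private def Agrid (c d N : ℕ) : ℕ :=
  ((Finset.range (N+1)).filter (fun n => d ∣ 1 + n * c)).card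

private lemma residue_exists (c d : ℕ) (hd : 1 ≤ d) (h : Nat.gcd d c = 1) :
    ∃ r < d, ∀ n : ℕ, d ∣ 1 + n * c ↔ n % d = r := by
  haveI : NeZero d := ⟨by omega⟩
  have hcop : Nat.Coprime c d := Nat.coprime_comm.mp h
  set u : (ZMod d)ˣ := ZMod.unitOfCoprime c hcop with hu
  have hcu : (u : ZMod d) = (c : ℕ) := ZMod.coe_unitOfCoprime c hcop
  set x : ZMod d := (-1 : ZMod d) * ↑u⁻¹ with hx
  refine ⟨x.val, ZMod.val_lt x, fun n => ?_⟩
  rw [← ZMod.natCast_eq_zero_iff]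
  push_cast
  constructor
  · intro hz
    have h1 : (n : ZMod d) * u = -1 := by rw [hcu]; linear_combination hz
    have h2 : (n : ZMod d) = x := by
      rw [hx, ← h1]; simp [mul_assoc]
    have : (n : ZMod d) = ((x.val : ℕ) : ZMod d) := by rw [ZMod.natCast_zmod_val]; exact h2
    rw [ZMod.natCast_eq_natCast_iff'] at this
    rwa [Nat.mod_eq_of_lt (ZMod.val_lt x)] at this
  · intro hr
    have : (n : ZMod d) = ((x.val : ℕ) : ZMod d) := by
      rw [ZMod.natCast_eq_natCast_iff', Nat.mod_eq_of_lt (ZMod.val_lt x)]; exact hr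
    rw [ZMod.natCast_zmod_val] at this
    rw [this, hx, ← hcu]
    have : ((-1 : ZMod d) * ↑u⁻¹) * ↑u = -1 := by simp [mul_assoc]
    linear_combination this

private lemma count_le (d r N : ℕ) :
    ((Finset.range (N+1)).filter (fun n => n % d = r)).card ≤ N / d + 1 := by
  have : ((Finset.range (N+1)).filter (fun n => n % d = r)).card
      ≤ (Finset.range (N/d + 1)).card := by
    apply Finset.card_le_card_of_injOn (fun n => n / d)
    · intro n hn
      simp only [Finset.mem_coe, mem_filter, mem_range] at hn ⊢
      exact Nat.lt_succ_of_le (Nat.div_le_div_right (Nat.lt_succ_iff.mp hn.1))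
    · intro a ha b hb hab
      simp only [coe_filter, Set.mem_setOf_eq, mem_range] at ha hb
      have hab' : a / d = b / d := hab
      have h1 := Nat.div_add_mod a d
      have h2 := Nat.div_add_mod b d
      have h3 : d * (a / d) = d * (b / d) := by rw [hab']
      omega
  simpa using this

private lemma count_ge (d r N : ℕ) (hr : r < d) :
    N / d ≤ ((Finset.range (N+1)).filter (fun n => n % d = r)).card := by
  have : (Finset.range (N/d)).card
      ≤ ((Finset.range (N+1)).filter (fun n => n % d = r)).card := by
    apply Finset.card_le_card_of_injOn (fun j => r + j * d)
    · intro j hj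
      simp only [Finset.mem_coe, mem_range] at hj
      simp only [Finset.mem_coe, mem_filter, mem_range]
      constructor
      · have h1 : j + 1 ≤ N / d := hj
        have h2 : (j + 1) * d ≤ (N / d) * d := Nat.mul_le_mul_right d h1
        have h3 : (N / d) * d ≤ N := Nat.div_mul_le_self N d
        nlinarith
      · simp [Nat.add_mul_mod_self_right, Nat.mod_eq_of_lt hr]
    · intro a _ b _ hab
      have hd : 0 < d := by omega
      simp only at hab
      exact Nat.eq_of_mul_eq_mul_right hd (by omega)
  simpa using this

private lemma gcd_one_of_dvd (c d n : ℕ) (hdvd : d ∣ 1 + n * c) : Nat.gcd d c = 1 := by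
  have h2 : Nat.gcd d c ∣ 1 + n * c := dvd_trans (Nat.gcd_dvd_left d c) hdvd
  have h3 : Nat.gcd d c ∣ n * c := Dvd.dvd.mul_left (Nat.gcd_dvd_right d c) n
  have h1 : Nat.gcd d c ∣ 1 := (Nat.dvd_add_right h3).mp (by rwa [Nat.add_comm] at h2)
  exact Nat.eq_one_of_dvd_one h1

private lemma Agrid_eq_zero (c d N : ℕ) (h : ¬ (1 ≤ d ∧ Nat.gcd d c = 1)) :
    Agrid c d N = 0 := by
  rw [Agrid, Finset.card_eq_zero, Finset.filter_eq_empty_iff]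
  intro n _ hdvd
  apply h
  rcases Nat.eq_zero_or_pos d with rfl | hd
  · rw [Nat.zero_dvd] at hdvd; omega
  · exact ⟨hd, gcd_one_of_dvd c d n hdvd⟩

private lemma Agrid_zero_of_large (c d N : ℕ) (h : N * c + 2 ≤ d) : Agrid c d N = 0 := by
  rw [Agrid, Finset.card_eq_zero, Finset.filter_eq_empty_iff]
  intro n hn hdvd
  rw [Finset.mem_range] at hn
  have h1 : d ≤ 1 + n * c := Nat.le_of_dvd (by omega) hdvd
  have h2 : n * c ≤ N * c := Nat.mul_le_mul_right c (by omega)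
  omega

private lemma card_identity (c N : ℕ) :
    (((Finset.range (N+1) ×ˢ Finset.range (N+1)).filter
        (fun p => Nat.gcd (1 + p.1 * c) (1 + p.2 * c) = 1)).card : ℤ)
    = ∑ d ∈ Finset.range (N*c + 2), (μ d : ℤ) * (Agrid c d N : ℤ)^2 := by
  set S := Finset.range (N+1) ×ˢ Finset.range (N+1) with hS
  have step1 : ((S.filter (fun p => Nat.gcd (1 + p.1 * c) (1 + p.2 * c) = 1)).card : ℤ)
      = ∑ p ∈ S, ∑ d ∈ Finset.range (N*c + 2),
          if d ∣ 1 + p.1 * c ∧ d ∣ 1 + p.2 * c then (μ d : ℤ) else 0 := by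
    rw [Finset.card_filter, Nat.cast_sum]
    refine Finset.sum_congr rfl (fun p hp => ?_)
    have hdiveq : (Finset.range (N*c + 2)).filter
        (fun d => d ∣ 1 + p.1 * c ∧ d ∣ 1 + p.2 * c)
        = (Nat.gcd (1 + p.1 * c) (1 + p.2 * c)).divisors := by
      ext d
      simp only [Finset.mem_filter, Finset.mem_range, Nat.mem_divisors, Nat.dvd_gcd_iff]
      constructor
      · rintro ⟨-, h2⟩
        refine ⟨h2, fun h0 => ?_⟩
        rw [Nat.gcd_eq_zero_iff] at h0
        omega
      · rintro ⟨⟨h1, h2⟩, -⟩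
        refine ⟨?_, h1, h2⟩
        have hp1 : p.1 < N + 1 := (Finset.mem_range.mp (Finset.mem_product.mp hp).1)
        have hle : d ≤ 1 + p.1 * c := Nat.le_of_dvd (by omega) h1
        have : p.1 * c ≤ N * c := Nat.mul_le_mul_right c (by omega)
        omega
    rw [← Finset.sum_filter, hdiveq]
    have := congrArg (fun f : ArithmeticFunction ℤ => f (Nat.gcd (1 + p.1 * c) (1 + p.2 * c)))
      moebius_mul_coe_zeta
    simp only [coe_mul_zeta_apply, one_apply] at this
    rw [this]
    split <;> simp
  rw [step1, Finset.sum_comm]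
  refine Finset.sum_congr rfl (fun d _ => ?_)
  rw [← Finset.sum_filter, Finset.sum_const, hS]
  have : (Finset.range (N+1) ×ˢ Finset.range (N+1)).filter
      (fun p => d ∣ 1 + p.1 * c ∧ d ∣ 1 + p.2 * c)
      = ((Finset.range (N+1)).filter (fun n => d ∣ 1 + n * c)) ×ˢ
        ((Finset.range (N+1)).filter (fun n => d ∣ 1 + n * c)) := by
    ext q
    simp only [Finset.mem_filter, Finset.mem_product]
    tauto
  rw [this, Finset.card_product]
  rw [Agrid]
  push_cast
  ring

private lemma Agrid_bounds (c d N : ℕ) (hd : 1 ≤ d) (h : Nat.gcd d c = 1) :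
    N / d ≤ Agrid c d N ∧ Agrid c d N ≤ N / d + 1 := by
  obtain ⟨r, hr, hiff⟩ := residue_exists c d hd h
  have heq : (Finset.range (N+1)).filter (fun n => d ∣ 1 + n * c)
      = (Finset.range (N+1)).filter (fun n => n % d = r) :=
    Finset.filter_congr (fun n _ => by simpa using hiff n)
  rw [Agrid, heq]
  exact ⟨count_ge d r N hr, count_le d r N⟩

private lemma cast_div_lb (d N : ℕ) (hd : 1 ≤ d) :
    (N : ℝ) / d - 1 ≤ ((N / d : ℕ) : ℝ) := by
  have h1 := Nat.div_add_mod N d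
  have h2 : N % d < d := Nat.mod_lt _ (by omega)
  have h1' : (d : ℝ) * ((N / d : ℕ) : ℝ) + ((N % d : ℕ) : ℝ) = (N : ℝ) := by
    exact_mod_cast congrArg (fun x : ℕ => (x : ℝ)) h1
  have h2' : ((N % d : ℕ) : ℝ) < (d : ℝ) := by exact_mod_cast h2
  have hd' : (0 : ℝ) < d := by exact_mod_cast hd
  rw [div_sub_one (by positivity), div_le_iff₀ hd']
  nlinarith

private lemma ratio_close (c d N : ℕ) (hd : 1 ≤ d) (h : Nat.gcd d c = 1) (hN : 1 ≤ N) :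
    |((Agrid c d N : ℝ) / N) - 1 / d| ≤ 2 / N := by
  obtain ⟨hlo, hhi⟩ := Agrid_bounds c d N hd h
  have hN' : (0 : ℝ) < N := by exact_mod_cast hN
  have hd' : (0 : ℝ) < d := by exact_mod_cast hd
  have hub : (Agrid c d N : ℝ) ≤ (N : ℝ) / d + 1 := by
    calc (Agrid c d N : ℝ) ≤ ((N / d : ℕ) : ℝ) + 1 := by exact_mod_cast hhi
      _ ≤ (N : ℝ) / d + 1 := by
          have := Nat.cast_div_le (α := ℝ) (m := N) (n := d)
          linarith
  have hlb : (N : ℝ) / d - 1 ≤ (Agrid c d N : ℝ) := by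
    have h1 : ((N / d : ℕ) : ℝ) ≤ (Agrid c d N : ℝ) := by exact_mod_cast hlo
    have h2 := cast_div_lb d N hd
    linarith
  have habs : |(Agrid c d N : ℝ) - (N : ℝ) / d| ≤ 1 :=
    abs_le.mpr ⟨by linarith, by linarith⟩
  have hrw : (Agrid c d N : ℝ) / N - 1 / d = ((Agrid c d N : ℝ) - (N : ℝ) / d) / N := by
    field_simp
  rw [hrw, abs_div, abs_of_pos hN']
  gcongr
  linarith

private lemma Agrid_ratio_le (c d N : ℕ) (hc : 1 ≤ c) (hN : 1 ≤ N)
    (hA : Agrid c d N ≠ 0) :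
    (Agrid c d N : ℝ) / N ≤ ((c : ℝ) + 2) / d := by
  -- from nonvanishing: d ≥ 1, gcd d c = 1, d ≤ N * (c+1)
  have hcond : 1 ≤ d ∧ Nat.gcd d c = 1 := by
    by_contra hcon
    exact hA (Agrid_eq_zero c d N hcon)
  have hdle : d ≤ N * c + 1 := by
    by_contra hcon
    exact hA (Agrid_zero_of_large c d N (by omega))
  obtain ⟨hd, hgcd⟩ := hcond
  have hN' : (0 : ℝ) < N := by exact_mod_cast hN
  have hd' : (0 : ℝ) < d := by exact_mod_cast hd
  obtain ⟨-, hhi⟩ := Agrid_bounds c d N hd hgcd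
  have hub : (Agrid c d N : ℝ) ≤ (N : ℝ) / d + 1 := by
    calc (Agrid c d N : ℝ) ≤ ((N / d : ℕ) : ℝ) + 1 := by exact_mod_cast hhi
      _ ≤ (N : ℝ) / d + 1 := by
          have := Nat.cast_div_le (α := ℝ) (m := N) (n := d)
          linarith
  have hdN : (d : ℝ) ≤ (N : ℝ) * ((c : ℝ) + 1) := by
    have h1 : (d : ℝ) ≤ (N : ℝ) * c + 1 := by exact_mod_cast hdle
    have hN1 : (1 : ℝ) ≤ (N : ℝ) := by exact_mod_cast hN
    have h2 : (N : ℝ) * ((c : ℝ) + 1) = (N : ℝ) * c + N := by ring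
    linarith
  rw [div_le_div_iff₀ hN' hd']
  have h1 : (Agrid c d N : ℝ) * d ≤ ((N : ℝ) / d + 1) * d := by nlinarith
  have h2 : ((N : ℝ) / d + 1) * d = (N : ℝ) + d := by field_simp
  nlinarith

/-- **An extension of Dirichlet's density theorem.**  For every integer `c ≥ 1`,
the density of pairs `(n,m)` with `0 ≤ n,m ≤ N` such that `gcd(1+nc, 1+mc) = 1`
converges, as `N → ∞`, to `Δ(c) = ∑_{d ≥ 1, gcd(d,c)=1} μ(d)/d²`. -/
theorem density_visible_points_on_grid (c : ℕ) (hc : 1 ≤ c) :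
    Tendsto (fun N : ℕ =>
        (((Finset.range (N + 1) ×ˢ Finset.range (N + 1)).filter
            (fun p => Nat.gcd (1 + p.1 * c) (1 + p.2 * c) = 1)).card : ℝ) / (N : ℝ) ^ 2)
      atTop
      (nhds (∑' d : ℕ, if 1 ≤ d ∧ Nat.gcd d c = 1 then
        (ArithmeticFunction.moebius d : ℝ) / (d : ℝ) ^ 2 else 0)) := by
  have key : Tendsto (fun N : ℕ => ∑' d : ℕ, (μ d : ℝ) * ((Agrid c d N : ℝ) / N)^2)
      atTop
      (nhds (∑' d : ℕ, if 1 ≤ d ∧ Nat.gcd d c = 1 then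
        (μ d : ℝ) / (d : ℝ) ^ 2 else 0)) := by
    apply tendsto_tsum_of_dominated_convergence
      (bound := fun d : ℕ => ((c : ℝ) + 2)^2 * (1 / (d : ℝ)^2))
    · exact (Real.summable_one_div_nat_pow.mpr one_lt_two).mul_left _
    · intro d
      by_cases hd : 1 ≤ d ∧ Nat.gcd d c = 1
      · have hd' : (0 : ℝ) < d := by exact_mod_cast hd.1
        have hratio : Tendsto (fun N : ℕ => (Agrid c d N : ℝ) / N) atTop (nhds (1 / (d : ℝ))) := by
          rw [← tendsto_sub_nhds_zero_iff]
          apply squeeze_zero_norm' (a := fun N : ℕ => 2 / (N : ℝ))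
          · filter_upwards [eventually_ge_atTop 1] with N hN
            simpa [Real.norm_eq_abs] using ratio_close c d N hd.1 hd.2 hN
          · exact tendsto_const_div_atTop_nhds_zero_nat 2
        have hT := (hratio.pow 2).const_mul ((μ d : ℤ) : ℝ)
        rw [if_pos hd]
        convert hT using 1
        field_simp
      · have hzero : ∀ N, (μ d : ℝ) * ((Agrid c d N : ℝ) / N)^2 = 0 := fun N => by
          rw [Agrid_eq_zero c d N hd]; simp
        rw [if_neg hd]
        simp only [hzero]
        exact tendsto_const_nhds
    · filter_upwards [eventually_ge_atTop 1] with N hN d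
      rcases eq_or_ne (Agrid c d N) 0 with hA | hA
      · rw [hA]
        norm_num
        positivity
      · have hle := Agrid_ratio_le c d N hc hN hA
        have hd : 1 ≤ d := by
          by_contra hcon
          exact hA (Agrid_eq_zero c d N (fun hh => hcon hh.1))
        have hd' : (0 : ℝ) < d := by exact_mod_cast hd
        have hnn : (0 : ℝ) ≤ (Agrid c d N : ℝ) / N := by positivity
        have hmu : |((μ d : ℤ) : ℝ)| ≤ 1 := by
          exact_mod_cast abs_moebius_le_one (n := d)
        rw [norm_mul, norm_pow]
        have h1 : ‖(Agrid c d N : ℝ) / N‖ ≤ ((c : ℝ) + 2) / d := by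
          rwa [Real.norm_eq_abs, abs_of_nonneg hnn]
        calc ‖((μ d : ℤ) : ℝ)‖ * ‖(Agrid c d N : ℝ) / N‖^2
            ≤ 1 * (((c : ℝ) + 2) / d)^2 := by
              apply mul_le_mul
              · exact hmu
              · exact pow_le_pow_left₀ (norm_nonneg _) h1 2
              · positivity
              · norm_num
          _ = ((c : ℝ) + 2)^2 * (1 / (d : ℝ)^2) := by
              field_simp
  apply key.congr'
  filter_upwards [eventually_ge_atTop 1] with N hN
  have hsum : ∑' d : ℕ, (μ d : ℝ) * ((Agrid c d N : ℝ) / N)^2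
      = ∑ d ∈ Finset.range (N * c + 2), (μ d : ℝ) * ((Agrid c d N : ℝ) / N)^2 := by
    apply tsum_eq_sum
    intro d hd
    rw [Finset.mem_range, not_lt] at hd
    rw [Agrid_zero_of_large c d N hd]
    simp
  have hN' : (0 : ℝ) < N := by exact_mod_cast hN
  have hcard : ((((Finset.range (N + 1) ×ˢ Finset.range (N + 1)).filter
        (fun p => Nat.gcd (1 + p.1 * c) (1 + p.2 * c) = 1)).card : ℤ) : ℝ)
      = ∑ d ∈ Finset.range (N*c + 2), ((μ d : ℤ) : ℝ) * ((Agrid c d N : ℤ) : ℝ)^2 := by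
    exact_mod_cast congrArg (fun x : ℤ => (x : ℝ)) (card_identity c N)
  rw [hsum, eq_div_iff (by positivity : (N : ℝ)^2 ≠ 0)]
  rw [Finset.sum_mul]
  push_cast at hcard ⊢
  rw [hcard]
  refine Finset.sum_congr rfl (fun d _ => ?_)
  field_simp
end
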